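/- arXiv:0705.3280 — 9 statements merged into one kernel-verified Lean document; each statement's English description precedes it below -/
import Mathlib

section
/- Let F : ℝ → ℂ be a measurable function such that F(λ) ≠ 0 for almost every λ, and suppose there exists ε > 0 such that the set {λ ∈ ℝ : |F(λ)| ≤ ε} has finite Lebesgue measure. Then for every t > 0 there exists a constant C_t > 0 such that for all f ∈ L²(ℝ) supported in [0, t], one has ∫_ℝ |F(λ)|² |f̂(λ)|² dλ ≥ C_t ‖f‖²_{L²}. -/
open MeasureTheory
open scoped ENNReal NNReal

open Set Filter
open scoped Real

namespace Stmt1Aux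

lemma ofReal_norm_eq_coe_nnnorm {E : Type*} [SeminormedAddCommGroup E] (a : E) :
    ENNReal.ofReal ‖a‖ = (‖a‖₊ : ℝ≥0∞) :=
  (congrArg ENNReal.ofReal (coe_nnnorm a).symm).trans ENNReal.ofReal_coe_nnreal

noncomputable def g (f : ℝ → ℂ) (l : ℝ) : ℂ :=
  ∫ x : ℝ, f x * Complex.exp (-(Complex.I * l * x))

lemma norm_exp_aux (c x : ℝ) : ‖Complex.exp (-(Complex.I * (c:ℂ) * (x:ℂ)))‖ = 1 := by
  rw [Complex.norm_exp]
  simp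

lemma norm_integrand (f : ℝ → ℂ) (l x : ℝ) :
    ‖f x * Complex.exp (-(Complex.I * (l:ℂ) * (x:ℂ)))‖ = ‖f x‖ := by
  rw [norm_mul, norm_exp_aux, mul_one]

lemma g_cont {f : ℝ → ℂ} (hf : Integrable f volume) : Continuous (g f) := by
  apply continuous_of_dominated (bound := fun x => ‖f x‖)
  · intro l
    exact hf.aestronglyMeasurable.mul
      ((Complex.continuous_exp.comp (by fun_prop)).aestronglyMeasurable)
  · intro l; exact Eventually.of_forall fun x => le_of_eq (norm_integrand f l x)
  · exact hf.norm
  · refine Eventually.of_forall fun x => ?_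
    fun_prop

/-- Hölder-type bound. -/
lemma lintegral_nnnorm_le {f : ℝ → ℂ} (hsm : StronglyMeasurable f) (s : Set ℝ) :
    ∫⁻ x in s, (‖f x‖₊ : ℝ≥0∞) ≤
      (∫⁻ x in s, (‖f x‖₊ : ℝ≥0∞) ^ 2) ^ (1/2 : ℝ) * (volume s) ^ (1/2 : ℝ) := by
  have hconj : Real.HolderConjugate 2 2 := Real.HolderConjugate.two_two
  have h := ENNReal.lintegral_mul_le_Lp_mul_Lq (volume.restrict s) hconj
    (f := fun x => (‖f x‖₊ : ℝ≥0∞)) (g := fun _ => 1)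
    (hsm.measurable.nnnorm.coe_nnreal_ennreal.aemeasurable) aemeasurable_const
  simp only [Pi.mul_apply, mul_one, ENNReal.one_rpow, lintegral_one,
    Measure.restrict_apply_univ] at h
  refine h.trans (le_of_eq ?_)
  congr 2
  apply lintegral_congr fun x => ?_
  rw [← ENNReal.rpow_natCast]
  norm_num

lemma lintegral_sq_eq {f : ℝ → ℂ} (hf : MemLp f 2 volume) :
    ∫⁻ x, (‖f x‖₊ : ℝ≥0∞) ^ 2 = ENNReal.ofReal (∫ x, ‖f x‖ ^ 2) := by
  have hi : Integrable (fun x => ‖f x‖ ^ 2) volume := by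
    have := hf.integrable_norm_rpow two_ne_zero ENNReal.ofNat_ne_top
    simpa [ENNReal.toReal_ofNat, Real.rpow_natCast] using this
  rw [MeasureTheory.ofReal_integral_eq_lintegral_ofReal hi
    (Eventually.of_forall fun x => by positivity)]
  apply lintegral_congr fun x => ?_
  rw [← ofReal_norm_eq_coe_nnnorm, ← ENNReal.ofReal_pow (norm_nonneg _)]

lemma parseval {f : ℝ → ℂ} (T : ℝ) (hT : 0 < T) (hsm : StronglyMeasurable f)
    (hf2 : MemLp f 2 volume)
    (hsupp : ∀ᵐ x ∂volume, x ∉ Ioc (0:ℝ) T → f x = 0) (θ : ℝ) :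
    ∑' n : ℤ, ((‖g f (θ + n * (2 * Real.pi / T))‖₊ : ℝ≥0∞)) ^ 2
      = ENNReal.ofReal (T * ∫ x : ℝ, ‖f x‖ ^ 2) := by
  haveI : Fact (0 < T) := ⟨hT⟩
  have hTne : (T:ℂ) ≠ 0 := by exact_mod_cast hT.ne'
  set fθ : ℝ → ℂ := fun x => f x * Complex.exp (-(Complex.I * θ * x)) with hfθ
  have hθsm : StronglyMeasurable fθ :=
    hsm.mul ((Complex.continuous_exp.comp (by fun_prop)).stronglyMeasurable)
  have hθ2 : MemLp fθ 2 volume :=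
    hf2.of_le hθsm.aestronglyMeasurable
      (Eventually.of_forall fun x => (norm_integrand f θ x).le)
  set φ : AddCircle T → ℂ := AddCircle.liftIoc T 0 fθ with hφ
  have hφsm : StronglyMeasurable φ :=
    hθsm.comp_measurable
      (measurable_subtype_coe.comp (AddCircle.measurableEquivIoc T 0).measurable)
  have hcoe : ∀ x ∈ Ioc (0:ℝ) (0 + T), φ x = fθ x := fun x hx =>
    AddCircle.liftIoc_coe_apply hx
  have hmapeq : (volume : Measure (AddCircle T)) =
      Measure.map ((↑) : ℝ → AddCircle T) (volume.restrict (Ioc 0 (0 + T))) :=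
    ((AddCircle.measurePreserving_mk T 0).map_eq).symm
  have hφvol : MemLp φ 2 (volume : Measure (AddCircle T)) := by
    rw [hmapeq, memLp_map_measure_iff hφsm.aestronglyMeasurable
      AddCircle.measurable_mk'.aemeasurable]
    refine (memLp_congr_ae ?_).2 (hθ2.restrict _)
    exact (ae_restrict_mem measurableSet_Ioc).mono fun x hx => hcoe x hx
  have hφmem : MemLp φ 2 (AddCircle.haarAddCircle) := by
    have h1 : MemLp φ 2 ((ENNReal.ofReal T)⁻¹ • (volume : Measure (AddCircle T))) :=
      hφvol.smul_measure (by simpa using hT)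
    rwa [AddCircle.volume_eq_smul_haarAddCircle, smul_smul,
      ENNReal.inv_mul_cancel (by simp [hT]) ENNReal.ofReal_ne_top, one_smul] at h1
  set Φ : Lp ℂ 2 (AddCircle.haarAddCircle (T := T)) := hφmem.toLp φ with hΦ
  have hΦae : (Φ : AddCircle T → ℂ) =ᵐ[AddCircle.haarAddCircle] φ := hφmem.coeFn_toLp
  -- value of the Fourier coefficients
  have hcoeff : ∀ n : ℤ, fourierCoeff (Φ : AddCircle T → ℂ) n
      = (1 / (T:ℂ)) * g f (θ + n * (2 * Real.pi / T)) := by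
    intro n
    have e1 : fourierCoeff (Φ : AddCircle T → ℂ) n = fourierCoeff φ n := by
      unfold fourierCoeff
      refine integral_congr_ae ?_
      filter_upwards [hΦae] with z hz
      rw [hz]
    have hpt : ∀ x ∈ Ioc (0:ℝ) (0+T), (fourier (-n) : C(AddCircle T, ℂ)) (x : AddCircle T) • φ (x : AddCircle T)
        = f x * Complex.exp (-(Complex.I * ((θ + n * (2 * Real.pi / T) : ℝ) : ℂ) * x)) := by
      intro x hx
      rw [smul_eq_mul, hcoe x hx, fourier_coe_apply, hfθ]
      rw [show Complex.exp (2 * (Real.pi:ℂ) * Complex.I * (-n : ℤ) * x / T) *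
          (f x * Complex.exp (-(Complex.I * θ * x)))
        = f x * (Complex.exp (2 * (Real.pi:ℂ) * Complex.I * (-n : ℤ) * x / T) *
            Complex.exp (-(Complex.I * θ * x))) from by ring]
      rw [← Complex.exp_add]
      congr 2
      push_cast
      field_simp
      ring
    have e2 : (∫ x in (0:ℝ)..0 + T,
          (fourier (-n) : C(AddCircle T, ℂ)) (x : AddCircle T) • φ (x : AddCircle T))
        = g f (θ + n * (2 * Real.pi / T)) := by
      rw [intervalIntegral.integral_of_le (by linarith)]
      rw [setIntegral_congr_fun measurableSet_Ioc hpt]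
      refine setIntegral_eq_integral_of_ae_compl_eq_zero ?_
      filter_upwards [hsupp] with x hx hmem
      rw [hx (by simpa using hmem), zero_mul]
    rw [e1, fourierCoeff_eq_intervalIntegral φ n 0, e2, Complex.real_smul]
    push_cast
    ring
  -- value of the right-hand side of Parseval
  have eR : (∫ z : AddCircle T, ‖(Φ : AddCircle T → ℂ) z‖^2 ∂AddCircle.haarAddCircle)
      = (1/T) * ∫ x : ℝ, ‖f x‖^2 := by
    have h1 : (∫ z : AddCircle T, ‖(Φ : AddCircle T → ℂ) z‖^2 ∂AddCircle.haarAddCircle)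
        = ∫ z : AddCircle T, ‖φ z‖^2 ∂AddCircle.haarAddCircle := by
      refine integral_congr_ae ?_
      filter_upwards [hΦae] with z hz
      rw [hz]
    have h2 : (∫ z : AddCircle T, ‖φ z‖^2) = T * ∫ z : AddCircle T, ‖φ z‖^2 ∂AddCircle.haarAddCircle := by
      rw [AddCircle.volume_eq_smul_haarAddCircle, integral_smul_measure,
        ENNReal.toReal_ofReal hT.le, smul_eq_mul]
    have h3 : (∫ z : AddCircle T, ‖φ z‖^2) = ∫ x : ℝ, ‖f x‖^2 := by
      rw [← AddCircle.intervalIntegral_preimage T 0 (fun z => ‖φ z‖^2)]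
      rw [intervalIntegral.integral_of_le (by linarith)]
      rw [setIntegral_congr_fun measurableSet_Ioc (fun x hx => by
        rw [hcoe x hx, norm_integrand])]
      refine setIntegral_eq_integral_of_ae_compl_eq_zero ?_
      filter_upwards [hsupp] with x hx hmem
      rw [hx (by simpa using hmem)]
      simp
    rw [h1, ← h3, h2]
    field_simp
  -- Parseval
  have hpars := tsum_sq_fourierCoeff Φ
  rw [eR] at hpars
  -- summability
  have hsum0 : Summable fun i : ℤ => ‖fourierCoeff (Φ : AddCircle T → ℂ) i‖^2 := by
    have hm := lp.memℓp (fourierBasis.repr Φ)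
    rw [memℓp_gen_iff (by norm_num)] at hm
    refine (hm.congr ?_)
    intro i
    rw [fourierBasis_repr]
    norm_num
  have hsum1 : Summable fun i : ℤ => ‖g f (θ + i * (2 * Real.pi / T))‖^2 := by
    have := hsum0.mul_left (T^2)
    refine this.congr fun i => ?_
    have hnormT : ‖(1/(T:ℂ))‖ = 1/T := by
      simp [map_div₀, Complex.norm_real, abs_of_pos hT]
    rw [hcoeff i, norm_mul, mul_pow, hnormT]
    field_simp
  have htsum : ∑' n : ℤ, ‖g f (θ + n * (2 * Real.pi / T))‖^2 = T * ∫ x : ℝ, ‖f x‖^2 := by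
    have h1 : ∑' n : ℤ, ‖g f (θ + n * (2 * Real.pi / T))‖^2
        = ∑' n : ℤ, T^2 * ‖fourierCoeff (Φ : AddCircle T → ℂ) n‖^2 := by
      refine tsum_congr fun i => ?_
      have hnormT : ‖(1/(T:ℂ))‖ = 1/T := by
        simp [map_div₀, Complex.norm_real, abs_of_pos hT]
      rw [hcoeff i, norm_mul, mul_pow, hnormT]
      field_simp
    rw [h1, tsum_mul_left, hpars]
    field_simp
  rw [← htsum, ENNReal.ofReal_tsum_of_nonneg (fun n => by positivity) hsum1]
  refine tsum_congr fun n => ?_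
  rw [ENNReal.ofReal_pow (norm_nonneg _), ofReal_norm_eq_coe_nnnorm]

lemma integrable_of_supp {f : ℝ → ℂ} (T : ℝ) (hT : 0 < T) (hsm : StronglyMeasurable f)
    (hf2 : MemLp f 2 volume)
    (hsupp : ∀ᵐ x ∂volume, x ∉ Ioc (0:ℝ) T → f x = 0) : Integrable f volume := by
  refine ⟨hsm.aestronglyMeasurable, ?_⟩
  show (∫⁻ x, (‖f x‖₊ : ℝ≥0∞)) < ⊤
  have h0 : ∫⁻ x, (‖f x‖₊ : ℝ≥0∞) = ∫⁻ x in Ioc (0:ℝ) T, (‖f x‖₊ : ℝ≥0∞) := by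
    rw [← lintegral_add_compl (fun x => (‖f x‖₊ : ℝ≥0∞)) (measurableSet_Ioc (a := (0:ℝ)) (b := T))]
    have : ∫⁻ x in (Ioc (0:ℝ) T)ᶜ, (‖f x‖₊ : ℝ≥0∞) = 0 := by
      rw [lintegral_eq_zero_iff' (hsm.measurable.nnnorm.coe_nnreal_ennreal.aemeasurable.restrict)]
      rw [Filter.EventuallyEq, ae_restrict_iff' measurableSet_Ioc.compl]
      filter_upwards [hsupp] with x hx hmem
      simp [hx hmem]
    rw [this, add_zero]
  rw [h0]
  refine lt_of_le_of_lt (lintegral_nnnorm_le hsm _) ?_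
  refine ENNReal.mul_lt_top ?_ ?_
  · refine ENNReal.rpow_lt_top_of_nonneg (by norm_num) ?_
    refine ne_of_lt (lt_of_le_of_lt (setLIntegral_le_lintegral _ _) ?_)
    rw [lintegral_sq_eq hf2]
    exact ENNReal.ofReal_lt_top
  · exact ENNReal.rpow_lt_top_of_nonneg (by norm_num) (by simp [Real.volume_Ioc])

lemma plancherel {f : ℝ → ℂ} (T : ℝ) (hT : 0 < T) (hsm : StronglyMeasurable f)
    (hf2 : MemLp f 2 volume)
    (hsupp : ∀ᵐ x ∂volume, x ∉ Ioc (0:ℝ) T → f x = 0) :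
    ∫⁻ l : ℝ, ((‖g f l‖₊ : ℝ≥0∞)) ^ 2
      = ENNReal.ofReal (2 * Real.pi * ∫ x : ℝ, ‖f x‖ ^ 2) := by
  have hint : Integrable f volume := integrable_of_supp T hT hsm hf2 hsupp
  set G : ℝ → ℝ≥0∞ := fun l => ((‖g f l‖₊ : ℝ≥0∞)) ^ 2 with hG
  have hGmeas : Measurable G :=
    ((g_cont hint).measurable.nnnorm.coe_nnreal_ennreal).pow_const 2
  set h : ℝ := 2 * Real.pi / T with hh_def
  have hh : 0 < h := by positivity
  have htrans : ∀ n : ℤ, ∫⁻ l in Ioc ((0:ℝ) + n • h) (0 + (n+1) • h), G l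
      = ∫⁻ θ in Ioc (0:ℝ) h, G (θ + n • h) := by
    intro n
    have hset : (0:ℝ) + (n+1) • h = (0 + n • h) + h := by
      rw [add_zsmul, one_zsmul]; ring
    rw [hset]
    set c : ℝ := 0 + n • h with hc
    have hmap : volume.restrict (Ioc c (c + h)) =
        Measure.map (fun θ : ℝ => θ + c) (volume.restrict (Ioc 0 h)) := by
      conv_lhs => rw [← (measurePreserving_add_right volume c).map_eq]
      rw [Measure.restrict_map (measurable_add_const c) measurableSet_Ioc]
      have hpre : (fun θ : ℝ => θ + c) ⁻¹' (Ioc c (c + h)) = Ioc 0 h := by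
        ext x
        simp only [Set.mem_preimage, Set.mem_Ioc]
        constructor
        · rintro ⟨h1, h2⟩; constructor <;> linarith
        · rintro ⟨h1, h2⟩; constructor <;> linarith
      rw [hpre]
    rw [hmap, lintegral_map hGmeas (measurable_add_const c)]
    simp only [hc, zero_add]
  calc ∫⁻ l, G l = ∫⁻ l in ⋃ n : ℤ, Ioc ((0:ℝ) + n • h) (0 + (n+1) • h), G l := by
        rw [iUnion_Ioc_add_zsmul hh 0, Measure.restrict_univ]
    _ = ∑' n : ℤ, ∫⁻ l in Ioc ((0:ℝ) + n • h) (0 + (n+1) • h), G l :=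
        lintegral_iUnion (fun n => measurableSet_Ioc) (pairwise_disjoint_Ioc_add_zsmul 0 h) _
    _ = ∑' n : ℤ, ∫⁻ θ in Ioc (0:ℝ) h, G (θ + n • h) := tsum_congr htrans
    _ = ∫⁻ θ in Ioc (0:ℝ) h, ∑' n : ℤ, G (θ + n • h) :=
        (lintegral_tsum fun n => (hGmeas.comp (measurable_add_const _)).aemeasurable).symm
    _ = ∫⁻ θ in Ioc (0:ℝ) h, ENNReal.ofReal (T * ∫ x : ℝ, ‖f x‖ ^ 2) := by
        refine lintegral_congr fun θ => ?_
        rw [← parseval T hT hsm hf2 hsupp θ]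
        refine tsum_congr fun n => ?_
        rw [hG]
        congr 3
        rw [zsmul_eq_mul, hh_def]
    _ = ENNReal.ofReal (T * ∫ x : ℝ, ‖f x‖ ^ 2) * ENNReal.ofReal h := by
        rw [setLIntegral_const, Real.volume_Ioc, sub_zero]
    _ = ENNReal.ofReal (2 * Real.pi * ∫ x : ℝ, ‖f x‖ ^ 2) := by
        rw [← ENNReal.ofReal_mul (by positivity)]
        congr 1
        rw [hh_def]
        field_simp

end Stmt1Aux



open Stmt1Aux in
/-- If `F : ℝ → ℂ` is measurable, nonzero a.e., and `{λ : |F(λ)| ≤ ε}` has finite measure for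
some `ε > 0`, then for every `t > 0` there is `C > 0` such that for every `f ∈ L²(ℝ)`
supported in `[0, t]` one has `∫ |F(λ)|² |f̂(λ)|² dλ ≥ C ‖f‖²` (the inequality being trivial
when the left-hand side is infinite). -/
theorem stmt_1 (F : ℝ → ℂ) (hFmeas : Measurable F)
    (hFne : ∀ᵐ l ∂volume, F l ≠ 0)
    (hfin : ∃ ε > (0 : ℝ), volume {l : ℝ | ‖F l‖ ≤ ε} < ⊤) :
    ∀ t > (0 : ℝ), ∃ C > (0 : ℝ), ∀ f : ℝ → ℂ, MemLp f 2 volume →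
      (∀ᵐ x ∂volume, x ∉ Set.Icc 0 t → f x = 0) →
      ENNReal.ofReal (C * ∫ x : ℝ, ‖f x‖ ^ 2) ≤
        ∫⁻ l : ℝ, (‖F l‖₊ : ℝ≥0∞) ^ 2 *
          (‖∫ x : ℝ, f x * Complex.exp (-(Complex.I * (l : ℂ) * (x : ℂ)))‖₊ : ℝ≥0∞) ^ 2 := by
  obtain ⟨ε, hε, hSfin⟩ := hfin
  intro t ht
  -- shrink ε so that the sublevel set has measure < π / t
  set s : ℕ → Set ℝ := fun n => {l : ℝ | ‖F l‖ ≤ ε / (n + 1)} with hs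
  have hmeas_s : ∀ n, MeasurableSet (s n) := fun n =>
    measurableSet_le hFmeas.norm measurable_const
  have hanti : Antitone s := by
    intro n m hnm l hl
    simp only [hs, Set.mem_setOf_eq] at hl ⊢
    refine le_trans hl ?_
    have hc : ((n:ℝ) + 1) ≤ (m:ℝ) + 1 := by
      have : (n:ℝ) ≤ m := by exact_mod_cast hnm
      linarith
    exact div_le_div_of_nonneg_left hε.le (by positivity) hc
  have hzero : volume {l : ℝ | F l = 0} = 0 := by
    have := ae_iff.1 hFne
    simpa using this
  have hinter : volume (⋂ n, s n) = 0 := by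
    refine measure_mono_null ?_ hzero
    intro l hl
    simp only [Set.mem_iInter, hs, Set.mem_setOf_eq] at hl
    have htend : Tendsto (fun n : ℕ => ε / (n + 1)) atTop (nhds 0) := by
      have := tendsto_one_div_add_atTop_nhds_zero_nat.const_mul ε
      simpa [div_eq_mul_inv, mul_comm] using this
    have : ‖F l‖ ≤ 0 := ge_of_tendsto' htend fun n => hl n
    exact norm_le_zero_iff.1 this
  have htend := MeasureTheory.tendsto_measure_iInter_atTop
    (fun n => (hmeas_s n).nullMeasurableSet) hanti
    ⟨0, by
      refine ne_of_lt (lt_of_le_of_lt (measure_mono ?_) hSfin)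
      intro l hl
      simp only [hs, Set.mem_setOf_eq] at hl ⊢
      calc ‖F l‖ ≤ ε / ((0:ℕ) + 1) := hl
        _ = ε := by norm_num⟩
  rw [hinter] at htend
  have hπt : (0 : ℝ≥0∞) < ENNReal.ofReal (Real.pi / t) :=
    ENNReal.ofReal_pos.2 (by positivity)
  obtain ⟨n, hn⟩ := (htend.eventually_lt_const hπt).exists
  set δ : ℝ := ε / (n + 1) with hδdef
  have hδ : 0 < δ := by positivity
  set S : Set ℝ := s n with hSdef
  have hSmeas : MeasurableSet S := hmeas_s n
  have hSvol : volume S ≤ ENNReal.ofReal (Real.pi / t) := hn.le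
  refine ⟨δ ^ 2 * Real.pi, by positivity, ?_⟩
  intro f hf hfsupp
  -- pass to a strongly measurable representative
  set f' : ℝ → ℂ := hf.1.mk f with hf'def
  have hae : f =ᵐ[volume] f' := hf.1.ae_eq_mk
  have hsm : StronglyMeasurable f' := hf.1.stronglyMeasurable_mk
  have hf2' : MemLp f' 2 volume := (memLp_congr_ae hae).1 hf
  have hNeq : (∫ x : ℝ, ‖f x‖ ^ 2) = ∫ x : ℝ, ‖f' x‖ ^ 2 :=
    integral_congr_ae (hae.mono fun x hx => by simp only [hx])
  have hgeq : ∀ l : ℝ,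
      (∫ x : ℝ, f x * Complex.exp (-(Complex.I * (l : ℂ) * (x : ℂ)))) = g f' l := fun l =>
    integral_congr_ae (hae.mono fun x hx => by simp only [hx])
  set T : ℝ := t + 1 with hTdef
  have hT : 0 < T := by positivity
  have hfsupp' : ∀ᵐ x ∂volume, x ∉ Set.Icc 0 t → f' x = 0 := by
    filter_upwards [hfsupp, hae] with x h1 h2 h3
    rw [← h2]; exact h1 h3
  have hsupp' : ∀ᵐ x ∂volume, x ∉ Ioc (0:ℝ) T → f' x = 0 := by
    have h0 : ∀ᵐ x : ℝ ∂volume, x ≠ 0 := by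
      refine ae_iff.mpr ?_
      simpa using measure_singleton (0:ℝ)
    filter_upwards [hfsupp', h0] with x h1 h2 h3
    refine h1 fun hmem => ?_
    obtain ⟨h4, h5⟩ := hmem
    exact h3 ⟨h4.lt_of_ne (Ne.symm h2), by linarith⟩
  set N : ℝ := ∫ x : ℝ, ‖f' x‖ ^ 2 with hNdef
  have hN0 : 0 ≤ N := integral_nonneg fun x => by positivity
  have hplanch := plancherel T hT hsm hf2' hsupp'
  set G : ℝ → ℝ≥0∞ := fun l => ((‖g f' l‖₊ : ℝ≥0∞)) ^ 2 with hG
  -- pointwise bound on G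
  have hgbd : ∀ l : ℝ, G l ≤ ENNReal.ofReal (t * N) := by
    intro l
    have h1 : (‖g f' l‖₊ : ℝ≥0∞) ≤ ∫⁻ x in Set.Icc (0:ℝ) t, (‖f' x‖₊ : ℝ≥0∞) := by
      refine le_trans (enorm_integral_le_lintegral_enorm _) (le_of_eq ?_)
      have e1 : (∫⁻ x : ℝ, (‖f' x * Complex.exp (-(Complex.I * l * x))‖₊ : ℝ≥0∞))
          = ∫⁻ x : ℝ, (‖f' x‖₊ : ℝ≥0∞) := by
        refine lintegral_congr fun x => ?_
        congr 1
        ext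
        exact norm_integrand f' l x
      change (∫⁻ x : ℝ, (‖f' x * Complex.exp (-(Complex.I * l * x))‖₊ : ℝ≥0∞)) = _
      rw [e1, ← lintegral_add_compl (fun x => (‖f' x‖₊ : ℝ≥0∞))
        (measurableSet_Icc (a := (0:ℝ)) (b := t))]
      have e2 : ∫⁻ x in (Set.Icc (0:ℝ) t)ᶜ, (‖f' x‖₊ : ℝ≥0∞) = 0 := by
        rw [lintegral_eq_zero_iff' (hsm.measurable.nnnorm.coe_nnreal_ennreal.aemeasurable.restrict)]
        rw [Filter.EventuallyEq, ae_restrict_iff' measurableSet_Icc.compl]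
        filter_upwards [hfsupp'] with x hx hmem
        simp [hx hmem]
      rw [e2, add_zero]
    have h2 := lintegral_nnnorm_le hsm (Set.Icc (0:ℝ) t)
    have h3 : (∫⁻ x in Set.Icc (0:ℝ) t, (‖f' x‖₊ : ℝ≥0∞) ^ 2) ≤ ENNReal.ofReal N := by
      refine le_trans (setLIntegral_le_lintegral _ _) (le_of_eq ?_)
      exact lintegral_sq_eq hf2'
    have h4 : volume (Set.Icc (0:ℝ) t) = ENNReal.ofReal t := by
      rw [Real.volume_Icc, sub_zero]
    have h5 : (‖g f' l‖₊ : ℝ≥0∞) ≤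
        (ENNReal.ofReal N) ^ (1/2 : ℝ) * (ENNReal.ofReal t) ^ (1/2 : ℝ) := by
      refine le_trans h1 (le_trans h2 ?_)
      rw [h4]
      gcongr
    calc G l ≤ ((ENNReal.ofReal N) ^ (1/2 : ℝ) * (ENNReal.ofReal t) ^ (1/2 : ℝ)) ^ 2 := pow_le_pow_left' h5 2
      _ = ENNReal.ofReal (t * N) := by
          rw [mul_pow, ← ENNReal.rpow_natCast (_ ^ (1/2:ℝ)) 2, ← ENNReal.rpow_natCast (ENNReal.ofReal t ^ (1/2:ℝ)) 2,
            ← ENNReal.rpow_mul, ← ENNReal.rpow_mul]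
          norm_num
          rw [← ENNReal.ofReal_mul hN0]
          congr 1
          ring
  -- rewrite the goal in terms of f' and G
  have hgoal_rw : (∫⁻ l : ℝ, (‖F l‖₊ : ℝ≥0∞) ^ 2 *
          (‖∫ x : ℝ, f x * Complex.exp (-(Complex.I * (l : ℂ) * (x : ℂ)))‖₊ : ℝ≥0∞) ^ 2)
      = ∫⁻ l : ℝ, (‖F l‖₊ : ℝ≥0∞) ^ 2 * G l := by
    refine lintegral_congr fun l => ?_
    rw [hG, hgeq l]
  rw [hgoal_rw, hNeq]
  -- main estimate
  have hδF : ∀ l ∈ Sᶜ, (ENNReal.ofReal δ) ^ 2 ≤ (‖F l‖₊ : ℝ≥0∞) ^ 2 := by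
    intro l hl
    have h0 : ¬ (‖F l‖ ≤ δ) := by simpa [hSdef, hs, hδdef] using hl
    have h1 : δ ≤ ‖F l‖ := (not_le.1 h0).le
    refine pow_le_pow_left' ?_ 2
    rw [← ofReal_norm_eq_coe_nnnorm]
    exact ENNReal.ofReal_le_ofReal h1
  have hSbound : ∫⁻ l in S, G l ≤ ENNReal.ofReal (Real.pi * N) :=
    calc ∫⁻ l in S, G l ≤ ∫⁻ _ in S, ENNReal.ofReal (t * N) :=
          setLIntegral_mono' hSmeas fun l _ => hgbd l
      _ = ENNReal.ofReal (t * N) * volume S := setLIntegral_const _ _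
      _ ≤ ENNReal.ofReal (t * N) * ENNReal.ofReal (Real.pi / t) := mul_le_mul_right hSvol _
      _ = ENNReal.ofReal (Real.pi * N) := by
          rw [← ENNReal.ofReal_mul (by positivity)]
          congr 1
          field_simp
  have hScompl : ENNReal.ofReal (Real.pi * N) ≤ ∫⁻ l in Sᶜ, G l := by
    have hsplit := lintegral_add_compl G hSmeas (μ := volume)
    have hchain : ENNReal.ofReal (Real.pi * N) + ENNReal.ofReal (Real.pi * N)
        ≤ ENNReal.ofReal (Real.pi * N) + ∫⁻ l in Sᶜ, G l := by
      have h2π : ENNReal.ofReal (Real.pi * N) + ENNReal.ofReal (Real.pi * N)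
          = ENNReal.ofReal (2 * Real.pi * N) := by
        rw [← ENNReal.ofReal_add (by positivity) (by positivity)]
        congr 1
        ring
      rw [h2π]
      calc ENNReal.ofReal (2 * Real.pi * N) = ∫⁻ l, G l := by
            rw [hNdef]
            exact hplanch.symm
        _ = (∫⁻ l in S, G l) + ∫⁻ l in Sᶜ, G l := hsplit.symm
        _ ≤ ENNReal.ofReal (Real.pi * N) + ∫⁻ l in Sᶜ, G l := add_le_add_left hSbound _
    exact (ENNReal.add_le_add_iff_left ENNReal.ofReal_ne_top).1 hchain
  calc ENNReal.ofReal (δ ^ 2 * Real.pi * N)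
      = (ENNReal.ofReal δ) ^ 2 * ENNReal.ofReal (Real.pi * N) := by
        rw [show δ ^ 2 * Real.pi * N = δ ^ 2 * (Real.pi * N) from by ring,
          ENNReal.ofReal_mul (by positivity), ENNReal.ofReal_pow hδ.le]
    _ ≤ (ENNReal.ofReal δ) ^ 2 * ∫⁻ l in Sᶜ, G l := mul_le_mul_right hScompl _
    _ = ∫⁻ l in Sᶜ, (ENNReal.ofReal δ) ^ 2 * G l :=
        (lintegral_const_mul' _ _ (ENNReal.pow_ne_top ENNReal.ofReal_ne_top)).symm
    _ ≤ ∫⁻ l in Sᶜ, (‖F l‖₊ : ℝ≥0∞) ^ 2 * G l :=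
        setLIntegral_mono' hSmeas.compl fun l hl => mul_le_mul_left (hδF l hl) _
    _ ≤ ∫⁻ l, (‖F l‖₊ : ℝ≥0∞) ^ 2 * G l := setLIntegral_le_lintegral _ _
end

section
/- Let f, g, h ∈ L¹(0,1) with ∫₀¹ x|f(x)|² dx < ∞, ∫₀¹ x|g(x)|² dx < ∞, ∫₀¹ x|h(x)|² dx < ∞, and suppose f ∉ L²(0,1), h ∉ L²(0,1), and limsup_{t→0⁺} ‖h‖_{L²(t,1)} / ‖f‖_{L²(t,1)} = C < ∞. Regard f, g, h as functions on ℝ vanishing outside (0,1) and set g̃(x) = g(−x). Then lim_{t→0⁺} ‖h ∗ g̃‖_{L²(t,1)} / ‖f‖_{L²(t,1)} = 0, where (h ∗ g̃)(x) = ∫₀¹ g(r) h(x + r) dr. -/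
open MeasureTheory Filter
open scoped ENNReal NNReal Topology

section helpers

private lemma sqrtAddLe {a b : ℝ} (ha : 0 ≤ a) (hb : 0 ≤ b) :
    Real.sqrt (a + b) ≤ Real.sqrt a + Real.sqrt b := by
  have h1 : a + b ≤ (Real.sqrt a + Real.sqrt b) ^ 2 := by
    have h2 := Real.sq_sqrt ha
    have h3 := Real.sq_sqrt hb
    nlinarith [Real.sqrt_nonneg a, Real.sqrt_nonneg b]
  calc Real.sqrt (a + b) ≤ Real.sqrt ((Real.sqrt a + Real.sqrt b) ^ 2) := Real.sqrt_le_sqrt h1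
  _ = Real.sqrt a + Real.sqrt b := Real.sqrt_sq (by positivity)

private lemma lintZeroOff {u : ℝ → ℝ≥0∞} {S B : Set ℝ} (hS : MeasurableSet S)
    (hB : MeasurableSet B) (hz : ∀ x ∈ S, x ∉ B → u x = 0) :
    ∫⁻ x in S, u x ≤ ∫⁻ x in B, u x := by
  rw [← lintegral_indicator hS, ← lintegral_indicator hB]
  refine lintegral_mono fun x => ?_
  by_cases hxS : x ∈ S
  · by_cases hxB : x ∈ B
    · simp [hxS, hxB]
    · simp [hxS, hxB, hz x hxS hxB]
  · simp [hxS]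

private lemma lintTranslate (u : ℝ → ℝ≥0∞) (r a b : ℝ) :
    ∫⁻ x in Set.Ioo a b, u (x + r) = ∫⁻ y in Set.Ioo (a + r) (b + r), u y := by
  have hpre : (fun x : ℝ => x + r) ⁻¹' Set.Ioo (a + r) (b + r) = Set.Ioo a b := by
    ext x
    simp only [Set.mem_preimage, Set.mem_Ioo]
    constructor <;> rintro ⟨h1, h2⟩ <;> constructor <;> linarith
  rw [← hpre]
  exact (measurePreserving_add_right volume r).setLIntegral_comp_preimage_emb
    (measurableEmbedding_addRight r) u _

private lemma wtBound (u : ℝ → ℝ≥0∞) {s : ℝ} (hs : 0 < s) :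
    ∫⁻ y in Set.Ioo s 1, u y
      ≤ (ENNReal.ofReal s)⁻¹ * ∫⁻ y in Set.Ioo 0 1, ENNReal.ofReal y * u y := by
  have hne : ENNReal.ofReal s ≠ 0 := by simp [hs]
  have h1 : ∫⁻ y in Set.Ioo s 1, u y
      ≤ ∫⁻ y in Set.Ioo s 1, (ENNReal.ofReal s)⁻¹ * (ENNReal.ofReal y * u y) := by
    refine setLIntegral_mono' measurableSet_Ioo fun y hy => ?_
    have h2 : (1 : ℝ≥0∞) ≤ (ENNReal.ofReal s)⁻¹ * ENNReal.ofReal y := by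
      rw [← ENNReal.inv_mul_cancel hne ENNReal.ofReal_ne_top]
      exact mul_le_mul_right (ENNReal.ofReal_le_ofReal hy.1.le) _
    calc u y = 1 * u y := (one_mul _).symm
    _ ≤ ((ENNReal.ofReal s)⁻¹ * ENNReal.ofReal y) * u y := mul_le_mul_left h2 _
    _ = (ENNReal.ofReal s)⁻¹ * (ENNReal.ofReal y * u y) := mul_assoc _ _ _
  refine h1.trans ?_
  rw [lintegral_const_mul' _ _ (ENNReal.inv_ne_top.2 hne)]
  exact mul_le_mul_right
    (lintegral_mono' (Measure.restrict_mono (Set.Ioo_subset_Ioo_left hs.le) le_rfl) le_rfl) _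

private lemma integralNormSq (u : ℝ → ℂ) (S : Set ℝ)
    (hu : AEStronglyMeasurable u (volume.restrict S)) :
    ∫ x in S, ‖u x‖ ^ 2 = (∫⁻ x in S, ((‖u x‖₊ : ℝ≥0∞)) ^ 2).toReal := by
  rw [integral_eq_lintegral_of_nonneg_ae (ae_of_all _ fun x => by positivity)
    ((hu.norm.aemeasurable.pow_const 2).aestronglyMeasurable)]
  congr 1
  refine lintegral_congr fun x => ?_
  rw [ENNReal.ofReal_pow (norm_nonneg _), ofReal_norm, enorm_eq_nnnorm]

private lemma halfpow (x : ℝ≥0∞) : (x ^ (1/2 : ℝ)) ^ 2 = x := by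
  rw [← ENNReal.rpow_two, ← ENNReal.rpow_mul]
  norm_num

end helpers

/-- Lemma 6.3: let `f, g, h ∈ L¹(0,1)` (extended by zero to `ℝ`) with
`∫₀¹ x|f|² , ∫₀¹ x|g|², ∫₀¹ x|h|² < ∞`, `f, h ∉ L²(0,1)`, and suppose
`limsup_{t→0⁺} ‖h‖_{L²(t,1)}/‖f‖_{L²(t,1)} = C < ∞`. Then
`lim_{t→0⁺} ‖h ∗ g̃‖_{L²(t,1)}/‖f‖_{L²(t,1)} = 0`, where
`(h ∗ g̃)(x) = ∫₀¹ g(r) h(x+r) dr`. -/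
theorem stmt_4 (f g h : ℝ → ℂ)
    (hf0 : ∀ x, x ∉ Set.Ioo (0 : ℝ) 1 → f x = 0)
    (hg0 : ∀ x, x ∉ Set.Ioo (0 : ℝ) 1 → g x = 0)
    (hh0 : ∀ x, x ∉ Set.Ioo (0 : ℝ) 1 → h x = 0)
    (hfi : Integrable f volume) (hgi : Integrable g volume) (hhi : Integrable h volume)
    (hfw : (∫⁻ x in Set.Ioo (0 : ℝ) 1, ENNReal.ofReal x * (‖f x‖₊ : ℝ≥0∞) ^ 2) < ⊤)
    (hgw : (∫⁻ x in Set.Ioo (0 : ℝ) 1, ENNReal.ofReal x * (‖g x‖₊ : ℝ≥0∞) ^ 2) < ⊤)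
    (hhw : (∫⁻ x in Set.Ioo (0 : ℝ) 1, ENNReal.ofReal x * (‖h x‖₊ : ℝ≥0∞) ^ 2) < ⊤)
    (hfL2 : (∫⁻ x in Set.Ioo (0 : ℝ) 1, (‖f x‖₊ : ℝ≥0∞) ^ 2) = ⊤)
    (hhL2 : (∫⁻ x in Set.Ioo (0 : ℝ) 1, (‖h x‖₊ : ℝ≥0∞) ^ 2) = ⊤)
    (C : ℝ)
    (hlimsup : Filter.limsup
      (fun t => Real.sqrt (∫ x in Set.Ioo t 1, ‖h x‖ ^ 2) /
        Real.sqrt (∫ x in Set.Ioo t 1, ‖f x‖ ^ 2)) (𝓝[>] (0 : ℝ)) = C)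
    (hbdd : Filter.IsBoundedUnder (· ≤ ·) (𝓝[>] (0 : ℝ))
      (fun t => Real.sqrt (∫ x in Set.Ioo t 1, ‖h x‖ ^ 2) /
        Real.sqrt (∫ x in Set.Ioo t 1, ‖f x‖ ^ 2))) :
    Filter.Tendsto
      (fun t => Real.sqrt (∫ x in Set.Ioo t 1,
          ‖∫ r in Set.Ioo (0 : ℝ) 1, g r * h (x + r)‖ ^ 2) /
        Real.sqrt (∫ x in Set.Ioo t 1, ‖f x‖ ^ 2))
      (𝓝[>] (0 : ℝ)) (𝓝 0) := by
  classical
  -- measurable representatives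
  have hfa : AEMeasurable f volume := hfi.aemeasurable
  have hga : AEMeasurable g volume := hgi.aemeasurable
  have hha : AEMeasurable h volume := hhi.aemeasurable
  set f' : ℝ → ℂ := hfa.mk f with hf'def
  set g' : ℝ → ℂ := hga.mk g with hg'def
  set h' : ℝ → ℂ := hha.mk h with hh'def
  have hf'm : Measurable f' := hfa.measurable_mk
  have hg'm : Measurable g' := hga.measurable_mk
  have hh'm : Measurable h' := hha.measurable_mk
  have hff' : f =ᵐ[volume] f' := hfa.ae_eq_mk
  have hgg' : g =ᵐ[volume] g' := hga.ae_eq_mk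
  have hhh' : h =ᵐ[volume] h' := hha.ae_eq_mk
  -- the convolution
  set k : ℝ → ℂ := fun x => ∫ r in Set.Ioo (0:ℝ) 1, g' r * h' (x + r) with hkdef
  have hkm : StronglyMeasurable k := by
    have hm : StronglyMeasurable (fun p : ℝ × ℝ => g' p.2 * h' (p.1 + p.2)) :=
      ((hg'm.comp measurable_snd).mul
        (hh'm.comp (measurable_fst.add measurable_snd))).stronglyMeasurable
    exact hm.integral_prod_right'
  have hkk : ∀ x, (∫ r in Set.Ioo (0:ℝ) 1, g r * h (x + r)) = k x := by
    intro x
    refine integral_congr_ae (ae_restrict_of_ae ?_)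
    have h1 : (fun r => h (x + r)) =ᵐ[volume] fun r => h' (x + r) :=
      (measurePreserving_add_left volume x).quasiMeasurePreserving.ae_eq_comp hhh'
    exact hgg'.mul h1
  -- ENNReal quantities
  set M : ℝ≥0∞ := ∫⁻ y in Set.Ioo (0:ℝ) 1, ENNReal.ofReal y * (‖h' y‖₊ : ℝ≥0∞) ^ 2 with hMdef
  have hM : M ≠ ⊤ := by
    have : M = ∫⁻ y in Set.Ioo (0:ℝ) 1, ENNReal.ofReal y * (‖h y‖₊ : ℝ≥0∞) ^ 2 :=
      lintegral_congr_ae (ae_restrict_of_ae (hhh'.mono fun y hy => by simp only [hy]))|>.symm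
    rw [this]; exact hhw.ne
  set Mf : ℝ≥0∞ := ∫⁻ y in Set.Ioo (0:ℝ) 1, ENNReal.ofReal y * (‖f' y‖₊ : ℝ≥0∞) ^ 2 with hMfdef
  have hMf : Mf ≠ ⊤ := by
    have : Mf = ∫⁻ y in Set.Ioo (0:ℝ) 1, ENNReal.ofReal y * (‖f y‖₊ : ℝ≥0∞) ^ 2 :=
      lintegral_congr_ae (ae_restrict_of_ae (hff'.mono fun y hy => by simp only [hy]))|>.symm
    rw [this]; exact hfw.ne
  set G : ℝ≥0∞ := ∫⁻ r in Set.Ioo (0:ℝ) 1, (‖g' r‖₊ : ℝ≥0∞) with hGdef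
  have hGfull : (∫⁻ r, (‖g' r‖₊ : ℝ≥0∞)) ≠ ⊤ := by
    have : (∫⁻ r, (‖g' r‖₊ : ℝ≥0∞)) = ∫⁻ r, (‖g r‖₊ : ℝ≥0∞) :=
      lintegral_congr_ae (hgg'.mono fun y hy => by rw [hy])|>.symm
    rw [this]; exact hgi.2.ne
  have hG : G ≠ ⊤ := (lt_of_le_of_lt (setLIntegral_le_lintegral _ _) hGfull.lt_top).ne
  set Hsq : ℝ → ℝ≥0∞ := fun s => ∫⁻ y in Set.Ioo s 1, (‖h' y‖₊ : ℝ≥0∞) ^ 2 with hHsqdef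
  set Fsq : ℝ → ℝ≥0∞ := fun t => ∫⁻ x in Set.Ioo t 1, (‖f' x‖₊ : ℝ≥0∞) ^ 2 with hFsqdef
  set A : ℝ → ℝ≥0∞ := fun t => ∫⁻ x in Set.Ioo t 1, (‖k x‖₊ : ℝ≥0∞) ^ 2 with hAdef
  have hHsq_fin : ∀ s : ℝ, 0 < s → Hsq s ≠ ⊤ := by
    intro s hs
    refine (lt_of_le_of_lt (wtBound _ hs) ?_).ne
    exact ENNReal.mul_lt_top (ENNReal.inv_lt_top.2 (by simp [hs])) hM.lt_top
  have hFsq_fin : ∀ s : ℝ, 0 < s → Fsq s ≠ ⊤ := by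
    intro s hs
    refine (lt_of_le_of_lt (wtBound _ hs) ?_).ne
    exact ENNReal.mul_lt_top (ENNReal.inv_lt_top.2 (by simp [hs])) hMf.lt_top
  have hHsq_anti : Antitone Hsq := by
    intro s t hst
    exact lintegral_mono' (Measure.restrict_mono (Set.Ioo_subset_Ioo_left hst) le_rfl) le_rfl
  -- real-integral identifications
  have hFr : ∀ t : ℝ, (∫ x in Set.Ioo t 1, ‖f x‖ ^ 2) = (Fsq t).toReal := by
    intro t
    rw [integralNormSq f _ (hfi.aestronglyMeasurable.restrict)]
    congr 1
    exact lintegral_congr_ae (ae_restrict_of_ae (hff'.mono fun x hx => by simp only [hx]))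
  have hHr : ∀ t : ℝ, (∫ x in Set.Ioo t 1, ‖h x‖ ^ 2) = (Hsq t).toReal := by
    intro t
    rw [integralNormSq h _ (hhi.aestronglyMeasurable.restrict)]
    congr 1
    exact lintegral_congr_ae (ae_restrict_of_ae (hhh'.mono fun x hx => by simp only [hx]))
  have hNr : ∀ t : ℝ, (∫ x in Set.Ioo t 1, ‖k x‖ ^ 2) = (A t).toReal := fun t =>
    integralNormSq k _ (hkm.aestronglyMeasurable.restrict)
  -- pointwise Cauchy–Schwarz bound
  have hW : ∀ x : ℝ, ((‖k x‖₊ : ℝ≥0∞)) ^ 2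
      ≤ G * ∫⁻ r in Set.Ioo (0:ℝ) 1, (‖g' r‖₊ : ℝ≥0∞) * (‖h' (x+r)‖₊ : ℝ≥0∞) ^ 2 := by
    intro x
    set W : ℝ≥0∞ := ∫⁻ r in Set.Ioo (0:ℝ) 1, (‖g' r‖₊ : ℝ≥0∞) * (‖h' (x+r)‖₊ : ℝ≥0∞) ^ 2
      with hWdef
    have h1 : (‖k x‖₊ : ℝ≥0∞)
        ≤ ∫⁻ r in Set.Ioo (0:ℝ) 1, (‖g' r‖₊ : ℝ≥0∞) * (‖h' (x + r)‖₊ : ℝ≥0∞) := by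
      refine (enorm_integral_le_lintegral_enorm _).trans
        (le_of_eq (lintegral_congr fun r => ?_))
      simp [nnnorm_mul]
      rfl
    have hconj : Real.HolderConjugate 2 2 := Real.holderConjugate_iff.mpr ⟨one_lt_two, by norm_num⟩
    have hCS := ENNReal.lintegral_mul_le_Lp_mul_Lq (volume.restrict (Set.Ioo (0:ℝ) 1)) hconj
      (f := fun r => (‖g' r‖₊ : ℝ≥0∞) ^ (1/2 : ℝ))
      (g := fun r => (‖g' r‖₊ : ℝ≥0∞) ^ (1/2 : ℝ) * (‖h' (x + r)‖₊ : ℝ≥0∞))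
      ((hg'm.enorm.pow_const _).aemeasurable)
      (((hg'm.enorm.pow_const _).mul
        ((hh'm.comp (measurable_const.add measurable_id)).enorm)).aemeasurable)
    have e1 : (∫⁻ r in Set.Ioo (0:ℝ) 1,
        (fun r => (‖g' r‖₊ : ℝ≥0∞) ^ (1/2 : ℝ)) r ^ (2:ℝ)) = G := by
      refine lintegral_congr fun r => ?_
      rw [ENNReal.rpow_two, halfpow]
    have e2 : (∫⁻ r in Set.Ioo (0:ℝ) 1,
        (fun r => (‖g' r‖₊ : ℝ≥0∞) ^ (1/2 : ℝ) * (‖h' (x + r)‖₊ : ℝ≥0∞)) r ^ (2:ℝ)) = W := by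
      refine lintegral_congr fun r => ?_
      rw [ENNReal.rpow_two, mul_pow, halfpow]
    have e3 : (∫⁻ r in Set.Ioo (0:ℝ) 1,
        ((fun r => (‖g' r‖₊ : ℝ≥0∞) ^ (1/2 : ℝ)) *
          (fun r => (‖g' r‖₊ : ℝ≥0∞) ^ (1/2 : ℝ) * (‖h' (x + r)‖₊ : ℝ≥0∞))) r)
        = ∫⁻ r in Set.Ioo (0:ℝ) 1, (‖g' r‖₊ : ℝ≥0∞) * (‖h' (x + r)‖₊ : ℝ≥0∞) := by
      refine lintegral_congr fun r => ?_
      show (‖g' r‖₊ : ℝ≥0∞) ^ (1/2 : ℝ) * ((‖g' r‖₊ : ℝ≥0∞) ^ (1/2 : ℝ) * _) = _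
      rw [← mul_assoc, ← sq, halfpow]
    rw [e3, e1, e2] at hCS
    have h2 : (‖k x‖₊ : ℝ≥0∞) ≤ G ^ (1/(2:ℝ)) * W ^ (1/(2:ℝ)) := h1.trans hCS
    calc (‖k x‖₊ : ℝ≥0∞) ^ 2 = ‖k x‖₊ * ‖k x‖₊ := sq _
    _ ≤ (G ^ (1/(2:ℝ)) * W ^ (1/(2:ℝ))) * (G ^ (1/(2:ℝ)) * W ^ (1/(2:ℝ))) := mul_le_mul' h2 h2
    _ = G * W := by rw [mul_mul_mul_comm, ← sq, ← sq, halfpow, halfpow]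
  -- main ENNReal bound
  have hmain : ∀ δ : ℝ, δ ∈ Set.Ioo (0:ℝ) 1 → ∀ t : ℝ, t ∈ Set.Ioo (0:ℝ) 1 →
      A t ≤ (G * ∫⁻ r in Set.Ioo (0:ℝ) δ, (‖g' r‖₊ : ℝ≥0∞)) * Hsq t
        + G * G * (ENNReal.ofReal δ)⁻¹ * M := by
    intro δ hδ t ht
    set Gδ : ℝ≥0∞ := ∫⁻ r in Set.Ioo (0:ℝ) δ, (‖g' r‖₊ : ℝ≥0∞) with hGδdef
    set c2 : ℝ≥0∞ := (ENNReal.ofReal δ)⁻¹ * M with hc2def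
    have step1 : A t ≤ G * ∫⁻ x in Set.Ioo t 1, ∫⁻ r in Set.Ioo (0:ℝ) 1,
        (‖g' r‖₊ : ℝ≥0∞) * (‖h' (x+r)‖₊ : ℝ≥0∞) ^ 2 := by
      refine (lintegral_mono fun x => hW x).trans (le_of_eq ?_)
      exact lintegral_const_mul' _ _ hG
    have hswap : (∫⁻ x in Set.Ioo t 1, ∫⁻ r in Set.Ioo (0:ℝ) 1,
        (‖g' r‖₊ : ℝ≥0∞) * (‖h' (x+r)‖₊ : ℝ≥0∞) ^ 2)
        = ∫⁻ r in Set.Ioo (0:ℝ) 1, ∫⁻ x in Set.Ioo t 1,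
          (‖g' r‖₊ : ℝ≥0∞) * (‖h' (x+r)‖₊ : ℝ≥0∞) ^ 2 := by
      refine lintegral_lintegral_swap ?_
      exact (((hg'm.comp measurable_snd).enorm).mul
        (((hh'm.comp (measurable_fst.add measurable_snd))).enorm.pow_const 2)).aemeasurable
    have hpull : ∀ r : ℝ, (∫⁻ x in Set.Ioo t 1, (‖g' r‖₊ : ℝ≥0∞) * (‖h' (x+r)‖₊ : ℝ≥0∞) ^ 2)
        = (‖g' r‖₊ : ℝ≥0∞) * ∫⁻ x in Set.Ioo t 1, (‖h' (x+r)‖₊ : ℝ≥0∞) ^ 2 := fun r =>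
      lintegral_const_mul' _ _ ENNReal.coe_ne_top
    have hper : ∀ r ∈ Set.Ioo (0:ℝ) 1,
        (‖g' r‖₊ : ℝ≥0∞) * (∫⁻ x in Set.Ioo t 1, (‖h' (x+r)‖₊ : ℝ≥0∞) ^ 2)
        ≤ (Set.Ioo (0:ℝ) δ).indicator (fun r => (‖g' r‖₊ : ℝ≥0∞)) r * Hsq t
          + (‖g' r‖₊ : ℝ≥0∞) * c2 := by
      intro r hr
      have htr : (∫⁻ x in Set.Ioo t 1, (‖h' (x+r)‖₊ : ℝ≥0∞) ^ 2) ≤ Hsq (t+r) := by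
        rw [lintTranslate (fun y => (‖h' y‖₊ : ℝ≥0∞) ^ 2) r t 1]
        have e1 : (∫⁻ y in Set.Ioo (t+r) (1+r), (‖h' y‖₊ : ℝ≥0∞) ^ 2)
            = ∫⁻ y in Set.Ioo (t+r) (1+r), (‖h y‖₊ : ℝ≥0∞) ^ 2 :=
          (lintegral_congr_ae (ae_restrict_of_ae (hhh'.mono fun y hy => by simp only [hy]))).symm
        have e2 : (∫⁻ y in Set.Ioo (t+r) 1, (‖h y‖₊ : ℝ≥0∞) ^ 2) = Hsq (t+r) :=
          lintegral_congr_ae (ae_restrict_of_ae (hhh'.mono fun y hy => by simp only [hy]))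
        rw [e1, ← e2]
        refine lintZeroOff measurableSet_Ioo measurableSet_Ioo fun y hy hyn => ?_
        have h1y : (1:ℝ) ≤ y := by
          by_contra hc
          push_neg at hc
          exact hyn ⟨hy.1, hc⟩
        have hz : h y = 0 := hh0 y (fun hyI => absurd hyI.2 (not_lt.2 h1y))
        simp [hz]
      by_cases hrδ : r < δ
      · have hind : (Set.Ioo (0:ℝ) δ).indicator (fun r => (‖g' r‖₊ : ℝ≥0∞)) r
            = (‖g' r‖₊ : ℝ≥0∞) := Set.indicator_of_mem (Set.mem_Ioo.mpr ⟨hr.1, hrδ⟩) _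
        refine le_trans ?_ le_self_add
        rw [hind]
        exact mul_le_mul_right (htr.trans (hHsq_anti (le_add_of_nonneg_right hr.1.le))) _
      · push_neg at hrδ
        have hδr : Hsq (t+r) ≤ c2 := by
          have hb := wtBound (fun y => (‖h' y‖₊ : ℝ≥0∞) ^ 2) (s := t+r)
            (by linarith [ht.1, hr.1])
          refine hb.trans ?_
          exact mul_le_mul_left (ENNReal.inv_le_inv'
            (ENNReal.ofReal_le_ofReal (by linarith [ht.1]))) _
        refine le_trans ?_ le_add_self
        exact mul_le_mul_right (htr.trans hδr) _
    have hindint : (∫⁻ r in Set.Ioo (0:ℝ) 1,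
        (Set.Ioo (0:ℝ) δ).indicator (fun r => (‖g' r‖₊ : ℝ≥0∞)) r) = Gδ := by
      rw [lintegral_indicator measurableSet_Ioo, Measure.restrict_restrict measurableSet_Ioo,
        Set.inter_eq_left.2 (Set.Ioo_subset_Ioo le_rfl hδ.2.le)]
    have step2 : (∫⁻ r in Set.Ioo (0:ℝ) 1, ∫⁻ x in Set.Ioo t 1,
        (‖g' r‖₊ : ℝ≥0∞) * (‖h' (x+r)‖₊ : ℝ≥0∞) ^ 2)
        ≤ Gδ * Hsq t + G * c2 := by
      have s2a : (∫⁻ r in Set.Ioo (0:ℝ) 1, ∫⁻ x in Set.Ioo t 1,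
          (‖g' r‖₊ : ℝ≥0∞) * (‖h' (x+r)‖₊ : ℝ≥0∞) ^ 2)
          ≤ ∫⁻ r in Set.Ioo (0:ℝ) 1,
            ((Set.Ioo (0:ℝ) δ).indicator (fun r => (‖g' r‖₊ : ℝ≥0∞)) r * Hsq t
              + (‖g' r‖₊ : ℝ≥0∞) * c2) := by
        refine setLIntegral_mono' measurableSet_Ioo fun r hr => ?_
        rw [hpull r]
        exact hper r hr
      have s2b : (∫⁻ r in Set.Ioo (0:ℝ) 1,
            ((Set.Ioo (0:ℝ) δ).indicator (fun r => (‖g' r‖₊ : ℝ≥0∞)) r * Hsq t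
              + (‖g' r‖₊ : ℝ≥0∞) * c2))
          = Gδ * Hsq t + G * c2 := by
        rw [lintegral_add_left ((hg'm.nnnorm.coe_nnreal_ennreal.indicator measurableSet_Ioo).mul_const _),
          lintegral_mul_const _ (hg'm.nnnorm.coe_nnreal_ennreal.indicator measurableSet_Ioo), hindint,
          lintegral_mul_const _ hg'm.nnnorm.coe_nnreal_ennreal]
      exact s2a.trans (le_of_eq s2b)
    calc A t ≤ G * ∫⁻ x in Set.Ioo t 1, ∫⁻ r in Set.Ioo (0:ℝ) 1,
        (‖g' r‖₊ : ℝ≥0∞) * (‖h' (x+r)‖₊ : ℝ≥0∞) ^ 2 := step1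
    _ = G * ∫⁻ r in Set.Ioo (0:ℝ) 1, ∫⁻ x in Set.Ioo t 1,
        (‖g' r‖₊ : ℝ≥0∞) * (‖h' (x+r)‖₊ : ℝ≥0∞) ^ 2 := by rw [hswap]
    _ ≤ G * (Gδ * Hsq t + G * c2) := mul_le_mul_right step2 _
    _ = (G * Gδ) * Hsq t + G * G * (ENNReal.ofReal δ)⁻¹ * M := by rw [hc2def]; ring
  -- divergence of the denominator
  have hFdiv : Tendsto (fun t => Real.sqrt ((Fsq t).toReal)) (𝓝[>] (0:ℝ)) atTop := by
    have hFsq_anti : Antitone Fsq := fun s t hst =>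
      lintegral_mono' (Measure.restrict_mono (Set.Ioo_subset_Ioo_left hst) le_rfl) le_rfl
    have hFsq0 : Fsq 0 = ⊤ := by
      have he : Fsq 0 = ∫⁻ x in Set.Ioo (0:ℝ) 1, (‖f x‖₊ : ℝ≥0∞) ^ 2 :=
        (lintegral_congr_ae (ae_restrict_of_ae (hff'.mono fun x hx => by simp only [hx]))).symm
      rw [he, hfL2]
    set ν : Measure ℝ := volume.withDensity (fun x => (‖f' x‖₊ : ℝ≥0∞) ^ 2) with hν
    have hνapp : ∀ s : ℝ, ν (Set.Ioo s 1) = Fsq s := fun s =>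
      withDensity_apply _ measurableSet_Ioo
    have hmono : Monotone (fun n : ℕ => Set.Ioo (1/(n+1) : ℝ) 1) := by
      intro m n hmn
      refine Set.Ioo_subset_Ioo_left (one_div_le_one_div_of_le (by positivity) ?_)
      exact_mod_cast Nat.add_le_add_right hmn 1
    have hunion : (⋃ n : ℕ, Set.Ioo (1/(n+1) : ℝ) 1) = Set.Ioo 0 1 := by
      ext x
      simp only [Set.mem_iUnion, Set.mem_Ioo]
      constructor
      · rintro ⟨n, h1, h2⟩
        exact ⟨lt_trans (by positivity) h1, h2⟩
      · rintro ⟨h1, h2⟩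
        obtain ⟨n, hn⟩ := exists_nat_one_div_lt h1
        exact ⟨n, hn, h2⟩
    have htend : Tendsto (fun n : ℕ => ν (Set.Ioo (1/(n+1) : ℝ) 1)) atTop (𝓝 (⊤ : ℝ≥0∞)) := by
      have ht := tendsto_measure_iUnion_atTop (μ := ν) hmono
      rw [hunion] at ht
      rwa [hνapp 0, hFsq0] at ht
    rw [tendsto_atTop]
    intro M₀
    set M' : ℝ := max M₀ 0 with hM'
    have hlt : (ENNReal.ofReal (M' ^ 2)) < ⊤ := ENNReal.ofReal_lt_top
    obtain ⟨n, hn⟩ := (htend.eventually (eventually_gt_nhds hlt)).exists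
    have ht₀pos : (0:ℝ) < 1/(n+1) := by positivity
    filter_upwards [Ioo_mem_nhdsGT_of_mem (Set.mem_Ico.mpr ⟨le_refl (0:ℝ), ht₀pos⟩)]
      with t ht
    have h1 : Fsq (1/(n+1) : ℝ) ≤ Fsq t := hFsq_anti ht.2.le
    have h2 : ENNReal.ofReal (M' ^ 2) < Fsq t := lt_of_lt_of_le (by rwa [hνapp] at hn) h1
    have h3 : M' ^ 2 ≤ (Fsq t).toReal := by
      have h4 := ENNReal.toReal_mono (hFsq_fin t ht.1) h2.le
      rwa [ENNReal.toReal_ofReal (by positivity)] at h4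
    calc M₀ ≤ M' := le_max_left _ _
    _ = Real.sqrt (M' ^ 2) := (Real.sqrt_sq (le_max_right _ _)).symm
    _ ≤ Real.sqrt ((Fsq t).toReal) := Real.sqrt_le_sqrt h3
  -- smallness of the g-tail
  have hGδ : ∀ ε : ℝ, 0 < ε → ∃ δ : ℝ, δ ∈ Set.Ioo (0:ℝ) 1 ∧
      Real.sqrt ((G * ∫⁻ r in Set.Ioo (0:ℝ) δ, (‖g' r‖₊ : ℝ≥0∞)).toReal) < ε := by
    intro ε hε
    set νg : Measure ℝ := volume.withDensity (fun r => (‖g' r‖₊ : ℝ≥0∞)) with hνg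
    have hνgapp : ∀ δ : ℝ, νg (Set.Ioo 0 δ) = ∫⁻ r in Set.Ioo (0:ℝ) δ, (‖g' r‖₊ : ℝ≥0∞) :=
      fun δ => withDensity_apply _ measurableSet_Ioo
    have hanti : Antitone (fun n : ℕ => Set.Ioo (0:ℝ) (1/(n+2))) := by
      intro m n hmn
      refine Set.Ioo_subset_Ioo_right (one_div_le_one_div_of_le (by positivity) ?_)
      exact_mod_cast Nat.add_le_add_right hmn 2
    have hinter : (⋂ n : ℕ, Set.Ioo (0:ℝ) (1/(n+2))) = ∅ := by
      rw [Set.eq_empty_iff_forall_notMem]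
      intro x hx
      have h0 : 0 < x := (Set.mem_iInter.1 hx 0).1
      obtain ⟨n, hn⟩ := exists_nat_one_div_lt h0
      have h2 := (Set.mem_iInter.1 hx n).2
      have h3 : (1:ℝ)/(n+2) ≤ 1/(n+1) :=
        one_div_le_one_div_of_le (by positivity) (by push_cast; linarith)
      linarith
    have hfin : νg (Set.Ioo (0:ℝ) (1/(((0:ℕ):ℝ)+2))) ≠ ⊤ := by
      rw [hνgapp]
      exact ((setLIntegral_le_lintegral _ _).trans_lt hGfull.lt_top).ne
    have htend : Tendsto (fun n : ℕ => νg (Set.Ioo (0:ℝ) (1/(n+2)))) atTop (𝓝 0) := by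
      have ht := tendsto_measure_iInter_atTop
        (fun n => measurableSet_Ioo.nullMeasurableSet) hanti ⟨0, hfin⟩
      rwa [hinter, measure_empty] at ht
    have htend2 : Tendsto (fun n : ℕ =>
        Real.sqrt ((G * νg (Set.Ioo (0:ℝ) (1/(n+2)))).toReal)) atTop (𝓝 0) := by
      have h1 : Tendsto (fun n : ℕ => G * νg (Set.Ioo (0:ℝ) (1/(n+2)))) atTop
          (𝓝 (0 : ℝ≥0∞)) := by
        have := ENNReal.Tendsto.const_mul htend (Or.inr hG)
        simpa using this
      have h2 := (ENNReal.tendsto_toReal (by simp : (0:ℝ≥0∞) ≠ ⊤)).comp h1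
      have h3 := (Real.continuous_sqrt.tendsto ((0:ℝ≥0∞).toReal)).comp h2
      simpa only [Function.comp_def, ENNReal.toReal_zero, Real.sqrt_zero] using h3
    obtain ⟨n, hn⟩ := (htend2.eventually (eventually_lt_nhds hε)).exists
    refine ⟨1/(n+2), Set.mem_Ioo.mpr ⟨by positivity, ?_⟩, ?_⟩
    · rw [div_lt_one (by positivity)]
      have : (0:ℝ) ≤ (n:ℝ) := Nat.cast_nonneg n
      linarith
    · rw [← hνgapp]
      exact hn
  -- final assembly
  obtain ⟨B₀, hB₀⟩ := hbdd
  rw [eventually_map] at hB₀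
  set B1 : ℝ := max B₀ 0 + 1 with hB1
  have hB1pos : 0 < B1 := by positivity
  rw [NormedAddCommGroup.tendsto_nhds_zero]
  intro ε hε
  obtain ⟨δ, hδmem, hδsmall⟩ := hGδ (ε/(2*B1)) (by positivity)
  set c : ℝ := Real.sqrt ((G * ∫⁻ r in Set.Ioo (0:ℝ) δ, (‖g' r‖₊ : ℝ≥0∞)).toReal) with hcdef
  set K : ℝ := Real.sqrt ((G * G * (ENNReal.ofReal δ)⁻¹ * M).toReal) with hKdef
  have hKnonneg : 0 ≤ K := Real.sqrt_nonneg _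
  have hcnonneg : 0 ≤ c := Real.sqrt_nonneg _
  have hFlarge : ∀ᶠ t in 𝓝[>] (0:ℝ),
      max 1 (2*(K+1)/ε) ≤ Real.sqrt ((Fsq t).toReal) := hFdiv.eventually_ge_atTop _
  filter_upwards [hB₀, hFlarge,
    Ioo_mem_nhdsGT_of_mem (Set.mem_Ico.mpr ⟨le_refl (0:ℝ), zero_lt_one⟩)]
    with t hB₀t hFt htI
  set Ft : ℝ := Real.sqrt ((Fsq t).toReal) with hFtdef
  have hFt1 : (1:ℝ) ≤ Ft := le_trans (le_max_left _ _) hFt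
  have hFtpos : 0 < Ft := lt_of_lt_of_le one_pos hFt1
  have hFt2 : 2*(K+1)/ε ≤ Ft := le_trans (le_max_right _ _) hFt
  have hGδfin : (∫⁻ r in Set.Ioo (0:ℝ) δ, (‖g' r‖₊ : ℝ≥0∞)) ≠ ⊤ :=
    ((setLIntegral_le_lintegral _ _).trans_lt hGfull.lt_top).ne
  have hfin1 : (G * ∫⁻ r in Set.Ioo (0:ℝ) δ, (‖g' r‖₊ : ℝ≥0∞)) * Hsq t ≠ ⊤ :=
    ENNReal.mul_ne_top (ENNReal.mul_ne_top hG hGδfin) (hHsq_fin t htI.1)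
  have hfin2 : G * G * (ENNReal.ofReal δ)⁻¹ * M ≠ ⊤ :=
    ENNReal.mul_ne_top (ENNReal.mul_ne_top (ENNReal.mul_ne_top hG hG)
      (ENNReal.inv_ne_top.2 (by simp [hδmem.1]))) hM
  have hAb : (A t).toReal
      ≤ ((G * ∫⁻ r in Set.Ioo (0:ℝ) δ, (‖g' r‖₊ : ℝ≥0∞)) * Hsq t).toReal
        + (G * G * (ENNReal.ofReal δ)⁻¹ * M).toReal := by
    have hm := hmain δ hδmem t htI
    calc (A t).toReal
        ≤ ((G * ∫⁻ r in Set.Ioo (0:ℝ) δ, (‖g' r‖₊ : ℝ≥0∞)) * Hsq t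
            + G * G * (ENNReal.ofReal δ)⁻¹ * M).toReal :=
          ENNReal.toReal_mono (ENNReal.add_ne_top.2 ⟨hfin1, hfin2⟩) hm
    _ = _ := ENNReal.toReal_add hfin1 hfin2
  have hNum : Real.sqrt ((A t).toReal) ≤ c * Real.sqrt ((Hsq t).toReal) + K := by
    calc Real.sqrt ((A t).toReal)
        ≤ Real.sqrt (((G * ∫⁻ r in Set.Ioo (0:ℝ) δ, (‖g' r‖₊ : ℝ≥0∞)) * Hsq t).toReal
            + (G * G * (ENNReal.ofReal δ)⁻¹ * M).toReal) := Real.sqrt_le_sqrt hAb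
    _ ≤ Real.sqrt (((G * ∫⁻ r in Set.Ioo (0:ℝ) δ, (‖g' r‖₊ : ℝ≥0∞)) * Hsq t).toReal)
          + K := sqrtAddLe ENNReal.toReal_nonneg ENNReal.toReal_nonneg
    _ = c * Real.sqrt ((Hsq t).toReal) + K := by
        rw [ENNReal.toReal_mul, Real.sqrt_mul ENNReal.toReal_nonneg]
  have hHF : Real.sqrt ((Hsq t).toReal) / Ft ≤ B1 := by
    have hq := hB₀t
    rw [hHr t, hFr t] at hq
    calc Real.sqrt ((Hsq t).toReal) / Ft ≤ B₀ := hq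
    _ ≤ B1 := by
        have := le_max_left B₀ 0
        rw [hB1]; linarith
  have hnum_eq : (∫ x in Set.Ioo t 1, ‖∫ r in Set.Ioo (0:ℝ) 1, g r * h (x + r)‖ ^ 2)
      = (A t).toReal := by
    rw [← hNr t]
    refine integral_congr_ae (ae_of_all _ fun x => ?_)
    dsimp only
    rw [hkk x]
  rw [Real.norm_eq_abs, hnum_eq, hFr t,
    abs_of_nonneg (div_nonneg (Real.sqrt_nonneg _) (Real.sqrt_nonneg _))]
  have hKF : K / Ft < ε / 2 := by
    rw [div_lt_iff₀ hFtpos]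
    have h5 : 2*(K+1) ≤ Ft * ε := by
      have := (div_le_iff₀ hε).1 hFt2
      linarith
    nlinarith
  have hcB : c * B1 < ε / 2 := by
    have h6 : c * B1 < (ε/(2*B1)) * B1 := by
      exact mul_lt_mul_of_pos_right hδsmall hB1pos
    have h7 : (ε/(2*B1)) * B1 = ε / 2 := by
      field_simp
    linarith
  calc Real.sqrt ((A t).toReal) / Ft
      ≤ (c * Real.sqrt ((Hsq t).toReal) + K) / Ft := by gcongr
  _ = c * (Real.sqrt ((Hsq t).toReal) / Ft) + K / Ft := by
      rw [add_div, mul_div_assoc]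
  _ ≤ c * B1 + K / Ft := by
      have := mul_le_mul_of_nonneg_left hHF hcnonneg
      linarith
  _ < ε / 2 + ε / 2 := by linarith
  _ = ε := by ring
end

section
/- Let 0 < γ ≤ 1 and let L : (0,∞) → (0,∞) be a measurable function slowly varying at 0, i.e. for every c > 0, L(cx)/L(x) → 1 as x → 0⁺. Suppose f(x) = x^{γ−1} L(x) is continuous, strictly decreasing, with lim_{x→0⁺} f(x) = ∞, lim_{x→∞} f(x) = 0 and ∫₀¹ f < ∞. Let U = ⋃_{n≥0} (b_{2n}, b_{2n+1}) be the bounded open set constructed from f by setting a₀ = 0, a_{2n−1} = a_{2n} = f⁻¹(n), b_n = a₀ + ⋯ + a_n. Then |(U + x) △ U| ≍ x^γ L(x) as x → 0⁺; that is, there exist constants a, b, c > 0 such that b·x^γ L(x) ≤ |(U + x) △ U| ≤ c·x^γ L(x) for all x ∈ (0, a). -/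
open MeasureTheory Filter
open scoped ENNReal Topology

namespace Stmt6Aux


lemma symmDiff_iUnion_subset {s t : ℕ → Set ℝ} :
    symmDiff (⋃ n, s n) (⋃ n, t n) ⊆ ⋃ n, symmDiff (s n) (t n) := by
  intro z hz
  rcases Set.mem_symmDiff.1 hz with ⟨hs, ht⟩ | ⟨ht, hs⟩
  · rcases Set.mem_iUnion.1 hs with ⟨n, hn⟩
    exact Set.mem_iUnion.2 ⟨n, Set.mem_symmDiff.2 (Or.inl ⟨hn, fun h => ht (Set.mem_iUnion.2 ⟨n, h⟩)⟩)⟩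
  · rcases Set.mem_iUnion.1 ht with ⟨n, hn⟩
    exact Set.mem_iUnion.2 ⟨n, Set.mem_symmDiff.2 (Or.inr ⟨hn, fun h => hs (Set.mem_iUnion.2 ⟨n, h⟩)⟩)⟩

lemma symmDiff_shift_subset {p q x : ℝ} (hx : 0 ≤ x) :
    symmDiff (Set.Ioo (p + x) (q + x)) (Set.Ioo p q) ⊆ Set.Ioc p (p + x) ∪ Set.Ico q (q + x) := by
  intro t ht
  rcases Set.mem_symmDiff.1 ht with ⟨⟨h1, h2⟩, h3⟩ | ⟨⟨h1, h2⟩, h3⟩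
  · right
    refine ⟨?_, h2⟩
    by_contra hq
    exact h3 ⟨lt_of_le_of_lt (by linarith) h1, lt_of_not_ge hq⟩
  · left
    refine ⟨h1, ?_⟩
    by_contra hp
    exact h3 ⟨lt_of_not_ge hp, by linarith⟩

lemma vol_symmDiff_shift_le (p q x : ℝ) (hx : 0 ≤ x) :
    volume (symmDiff (Set.Ioo (p + x) (q + x)) (Set.Ioo p q)) ≤ ENNReal.ofReal (2 * x) := by
  calc volume (symmDiff (Set.Ioo (p + x) (q + x)) (Set.Ioo p q))
      ≤ volume (Set.Ioc p (p + x) ∪ Set.Ico q (q + x)) :=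
        measure_mono (symmDiff_shift_subset hx)
    _ ≤ volume (Set.Ioc p (p + x)) + volume (Set.Ico q (q + x)) := measure_union_le _ _
    _ ≤ ENNReal.ofReal (2 * x) := by
        rw [Real.volume_Ioc, Real.volume_Ico]
        rw [← ENNReal.ofReal_add (by linarith) (by linarith)]
        apply ENNReal.ofReal_le_ofReal; ring_nf; simp

lemma vol_symmDiff_shift_le' (p q x : ℝ) :
    volume (symmDiff (Set.Ioo (p + x) (q + x)) (Set.Ioo p q)) ≤ ENNReal.ofReal (2 * (q - p)) := by
  calc volume (symmDiff (Set.Ioo (p + x) (q + x)) (Set.Ioo p q))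
      ≤ volume (Set.Ioo (p + x) (q + x) ∪ Set.Ioo p q) :=
        measure_mono (symmDiff_le_sup)
    _ ≤ volume (Set.Ioo (p + x) (q + x)) + volume (Set.Ioo p q) := measure_union_le _ _
    _ ≤ ENNReal.ofReal (2 * (q - p)) := by
        rw [Real.volume_Ioo, Real.volume_Ioo]
        have h : q + x - (p + x) = q - p := by ring
        rw [h]
        rcases le_or_gt (q - p) 0 with h0 | h0
        · simp [ENNReal.ofReal_eq_zero.2 h0, ENNReal.ofReal_eq_zero.2 (by linarith : 2*(q-p) ≤ 0)]
        · rw [← ENNReal.ofReal_add (by linarith) (by linarith)]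
          apply ENNReal.ofReal_le_ofReal; linarith



lemma karamata (γ : ℝ) (hγ0 : 0 < γ) (L f : ℝ → ℝ)
    (hLpos : ∀ x : ℝ, 0 < x → 0 < L x)
    (hslow2 : Tendsto (fun x => L (2⁻¹ * x) / L x) (𝓝[>] (0:ℝ)) (𝓝 1))
    (hfdef : ∀ x : ℝ, 0 < x → f x = x ^ (γ - 1) * L x)
    (hfanti : StrictAntiOn f (Set.Ioi 0)) :
    ∃ δ > (0:ℝ), ∃ C > (0:ℝ), ∀ x : ℝ, 0 < x → x < δ →
      ∫⁻ t in Set.Ioo 0 x, ENNReal.ofReal (f t) ≤ ENNReal.ofReal (C * (x ^ γ * L x)) := by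
  have h2γ : (1:ℝ) < 2 ^ γ :=
    (Real.one_lt_rpow_iff_of_pos (by norm_num)).2 (Or.inl ⟨by norm_num, hγ0⟩)
  set ε : ℝ := (2 ^ γ - 1) / 2 with hε
  have hε0 : 0 < ε := div_pos (by linarith) (by norm_num)
  have hhalfγ : (0:ℝ) < (2:ℝ)⁻¹ ^ γ := Real.rpow_pos_of_pos (by norm_num) _
  set q : ℝ := (1 + ε) * (2⁻¹:ℝ) ^ γ with hq
  have hq0 : 0 < q := by positivity
  have hq1 : q < 1 := by
    have h1 : (2⁻¹:ℝ) ^ γ = ((2:ℝ) ^ γ)⁻¹ := Real.inv_rpow (by norm_num) γ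
    rw [hq, h1, mul_inv_lt_iff₀ (by linarith), one_mul, hε]
    linarith
  have hev : ∀ᶠ y in 𝓝[>] (0:ℝ), L (2⁻¹ * y) / L y < 1 + ε :=
    hslow2.eventually_lt_const (by linarith)
  rw [eventually_nhdsWithin_iff] at hev
  rcases Metric.eventually_nhds_iff.1 hev with ⟨δ, hδ0, hδ⟩
  have hhalf : ∀ y : ℝ, 0 < y → y < δ → L (2⁻¹ * y) ≤ (1 + ε) * L y := by
    intro y hy0 hyδ
    have h := hδ (by simpa [Real.dist_eq, abs_of_pos hy0] using hyδ) hy0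
    have hLy := hLpos y hy0
    rw [div_lt_iff₀ hLy] at h
    linarith
  refine ⟨δ, hδ0, q * (1 - q)⁻¹,
    mul_pos hq0 (inv_pos.2 (by linarith)), ?_⟩
  intro x hx0 hxδ
  have hLk : ∀ k : ℕ, L (x * (2⁻¹:ℝ) ^ k) ≤ (1 + ε) ^ k * L x := by
    intro k
    induction k with
    | zero => simp
    | succ k ih =>
      have hw0 : 0 < x * (2⁻¹:ℝ) ^ k := by positivity
      have hwδ : x * (2⁻¹:ℝ) ^ k < δ := by
        have : x * (2⁻¹:ℝ) ^ k ≤ x := by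
          nlinarith [pow_le_one₀ (by norm_num : (0:ℝ) ≤ 2⁻¹) (by norm_num : (2⁻¹:ℝ) ≤ 1) (n := k)]
        linarith
      have h1 : x * (2⁻¹:ℝ) ^ (k+1) = 2⁻¹ * (x * (2⁻¹:ℝ) ^ k) := by ring
      rw [h1]
      calc L (2⁻¹ * (x * (2⁻¹:ℝ) ^ k)) ≤ (1 + ε) * L (x * (2⁻¹:ℝ) ^ k) := hhalf _ hw0 hwδ
        _ ≤ (1 + ε) * ((1 + ε) ^ k * L x) := by nlinarith [ih]
        _ = (1 + ε) ^ (k+1) * L x := by ring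
  have hdecomp : Set.Ioo (0:ℝ) x = ⋃ k : ℕ, Set.Ico (x * (2⁻¹:ℝ) ^ (k+1)) (x * (2⁻¹:ℝ) ^ k) := by
    ext t
    simp only [Set.mem_Ioo, Set.mem_iUnion, Set.mem_Ico]
    constructor
    · rintro ⟨ht0, htx⟩
      have hex : ∃ k : ℕ, x * (2⁻¹:ℝ) ^ (k+1) ≤ t := by
        obtain ⟨k, hk⟩ := exists_pow_lt_of_lt_one (div_pos ht0 hx0) (by norm_num : (2⁻¹:ℝ) < 1)
        refine ⟨k, ?_⟩
        have h3 := (le_div_iff₀ hx0).1 hk.le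
        have : (2⁻¹:ℝ) ^ (k+1) ≤ (2⁻¹:ℝ) ^ k :=
          pow_le_pow_of_le_one (by norm_num) (by norm_num) (Nat.le_succ k)
        nlinarith
      classical
      refine ⟨Nat.find hex, Nat.find_spec hex, ?_⟩
      rcases Nat.eq_zero_or_pos (Nat.find hex) with h0 | hpos
      · rw [h0]; simpa using htx
      · have hmin := Nat.find_min hex (Nat.sub_lt hpos one_pos)
        have heq : Nat.find hex - 1 + 1 = Nat.find hex := Nat.succ_pred_eq_of_pos hpos
        rw [heq] at hmin
        linarith [lt_of_not_ge hmin]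
    · rintro ⟨k, hk1, hk2⟩
      constructor
      · have : 0 < x * (2⁻¹:ℝ) ^ (k+1) := by positivity
        linarith
      · have : x * (2⁻¹:ℝ) ^ k ≤ x := by
          nlinarith [pow_le_one₀ (by norm_num : (0:ℝ) ≤ 2⁻¹) (by norm_num : (2⁻¹:ℝ) ≤ 1) (n := k)]
        linarith
  have hdisj : Pairwise (Function.onFun Disjoint
      (fun k : ℕ => Set.Ico (x * (2⁻¹:ℝ) ^ (k+1)) (x * (2⁻¹:ℝ) ^ k))) := by
    have key : ∀ k l : ℕ, k < l → Disjoint (Set.Ico (x * (2⁻¹:ℝ) ^ (k+1)) (x * (2⁻¹:ℝ) ^ k))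
        (Set.Ico (x * (2⁻¹:ℝ) ^ (l+1)) (x * (2⁻¹:ℝ) ^ l)) := by
      intro k l hkl
      rw [Set.disjoint_left]
      rintro t ⟨h1, _⟩ ⟨_, h4⟩
      have : (2⁻¹:ℝ) ^ l ≤ (2⁻¹:ℝ) ^ (k+1) :=
        pow_le_pow_of_le_one (by norm_num) (by norm_num) hkl
      nlinarith
    intro k l hkl
    rcases lt_or_gt_of_ne hkl with h | h
    · exact key k l h
    · exact (key l k h).symm
  rw [hdecomp, lintegral_iUnion (fun k => measurableSet_Ico) hdisj]
  have hpiece : ∀ k : ℕ, (∫⁻ t in Set.Ico (x * (2⁻¹:ℝ) ^ (k+1)) (x * (2⁻¹:ℝ) ^ k),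
      ENNReal.ofReal (f t)) ≤ ENNReal.ofReal (q ^ (k+1) * (x ^ γ * L x)) := by
    intro k
    have key : ∀ u : ℝ, u = x * (2⁻¹:ℝ) ^ (k+1) →
        (∫⁻ t in Set.Ico u (2*u), ENNReal.ofReal (f t)) ≤
          ENNReal.ofReal (q ^ (k+1) * (x ^ γ * L x)) := by
      intro u hu
      have hu0 : 0 < u := by rw [hu]; positivity
      have hfu0 : 0 ≤ f u := by
        rw [hfdef u hu0]
        exact (mul_pos (Real.rpow_pos_of_pos hu0 _) (hLpos u hu0)).le
      have step1 : (∫⁻ t in Set.Ico u (2*u), ENNReal.ofReal (f t)) ≤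
          ENNReal.ofReal (f u) * ENNReal.ofReal u := by
        have hvol : volume (Set.Ico u (2*u)) = ENNReal.ofReal u := by
          rw [Real.volume_Ico]; congr 1; ring
        calc (∫⁻ t in Set.Ico u (2*u), ENNReal.ofReal (f t))
            ≤ ∫⁻ _ in Set.Ico u (2*u), ENNReal.ofReal (f u) := by
              apply setLIntegral_mono' measurableSet_Ico
              rintro t ⟨ht1, ht2⟩
              apply ENNReal.ofReal_le_ofReal
              rcases eq_or_lt_of_le ht1 with h | h
              · rw [← h]
              · exact (hfanti (Set.mem_Ioi.2 hu0) (Set.mem_Ioi.2 (hu0.trans h)) h).le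
          _ = ENNReal.ofReal (f u) * volume (Set.Ico u (2*u)) := setLIntegral_const _ _
          _ = ENNReal.ofReal (f u) * ENNReal.ofReal u := by rw [hvol]
      have hmain : f u * u ≤ q ^ (k+1) * (x ^ γ * L x) := by
        rw [hfdef u hu0]
        have h2 : u ^ (γ - 1) * u = u ^ γ := by
          nth_rewrite 2 [← Real.rpow_one u]
          rw [← Real.rpow_add hu0]
          ring_nf
        have h1 : u ^ (γ - 1) * L u * u = u ^ γ * L u := by
          calc u ^ (γ - 1) * L u * u = u ^ (γ - 1) * u * L u := by ring
            _ = u ^ γ * L u := by rw [h2]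
        rw [h1]
        have huγ : u ^ γ = x ^ γ * ((2⁻¹:ℝ) ^ γ) ^ (k+1) := by
          rw [hu, Real.mul_rpow hx0.le (by positivity)]
          congr 1
          rw [← Real.rpow_natCast (2⁻¹:ℝ) (k+1), ← Real.rpow_mul (by norm_num),
            mul_comm ((k+1:ℕ):ℝ) γ, Real.rpow_mul (by norm_num), Real.rpow_natCast]
        have hLu : L u ≤ (1 + ε) ^ (k+1) * L x := by
          rw [hu]; exact hLk (k+1)
        have hxγ : (0:ℝ) < x ^ γ := Real.rpow_pos_of_pos hx0 _
        have hLu0 : 0 < L u := hLpos u hu0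
        have huγ0 : (0:ℝ) < u ^ γ := Real.rpow_pos_of_pos hu0 _
        calc u ^ γ * L u ≤ u ^ γ * ((1 + ε) ^ (k+1) * L x) := by nlinarith
          _ = q ^ (k+1) * (x ^ γ * L x) := by rw [huγ, hq, mul_pow]; ring
      calc (∫⁻ t in Set.Ico u (2*u), ENNReal.ofReal (f t))
          ≤ ENNReal.ofReal (f u) * ENNReal.ofReal u := step1
        _ = ENNReal.ofReal (f u * u) := (ENNReal.ofReal_mul hfu0).symm
        _ ≤ ENNReal.ofReal (q ^ (k+1) * (x ^ γ * L x)) := ENNReal.ofReal_le_ofReal hmain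
    have hupper : x * (2⁻¹:ℝ) ^ k = 2 * (x * (2⁻¹:ℝ) ^ (k+1)) := by ring
    rw [hupper]
    exact key _ rfl
  calc (∑' k : ℕ, ∫⁻ t in Set.Ico (x * (2⁻¹:ℝ) ^ (k+1)) (x * (2⁻¹:ℝ) ^ k), ENNReal.ofReal (f t))
      ≤ ∑' k : ℕ, ENNReal.ofReal (q ^ (k+1) * (x ^ γ * L x)) := ENNReal.tsum_le_tsum hpiece
    _ = ENNReal.ofReal (∑' k : ℕ, q ^ (k+1) * (x ^ γ * L x)) := by
        rw [ENNReal.ofReal_tsum_of_nonneg]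
        · intro k
          have hLx := hLpos x hx0
          have hxγ : (0:ℝ) < x ^ γ := Real.rpow_pos_of_pos hx0 _
          positivity
        · apply Summable.mul_right
          exact ((summable_geometric_of_lt_one hq0.le hq1).mul_left q).congr (fun k => by ring)
    _ = ENNReal.ofReal (q * (1 - q)⁻¹ * (x ^ γ * L x)) := by
        congr 1
        rw [tsum_mul_right]
        congr 1
        have hc : ∀ k : ℕ, q ^ (k+1) = q * q ^ k := fun k => by ring
        rw [tsum_congr hc, tsum_mul_left, tsum_geometric_of_lt_one hq0.le hq1]



lemma lint_const_le (f : ℝ → ℝ) {a b c : ℝ} (hc : 0 ≤ c)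
    (h : ∀ t, t ∈ Set.Ioo a b → c ≤ f t) :
    ENNReal.ofReal (c * (b - a)) ≤ ∫⁻ t in Set.Ioo a b, ENNReal.ofReal (f t) := by
  calc ENNReal.ofReal (c * (b - a)) = ENNReal.ofReal c * ENNReal.ofReal (b - a) :=
        ENNReal.ofReal_mul hc
    _ = ENNReal.ofReal c * volume (Set.Ioo a b) := by rw [Real.volume_Ioo]
    _ = ∫⁻ _ in Set.Ioo a b, ENNReal.ofReal c := (setLIntegral_const _ _).symm
    _ ≤ ∫⁻ t in Set.Ioo a b, ENNReal.ofReal (f t) :=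
        setLIntegral_mono' measurableSet_Ioo (fun t ht => ENNReal.ofReal_le_ofReal (h t ht))

lemma lint_split (f : ℝ → ℝ) {a b c : ℝ} (hab : a ≤ b) (hbc : b ≤ c) :
    (∫⁻ t in Set.Ioo a b, ENNReal.ofReal (f t)) + (∫⁻ t in Set.Ioo b c, ENNReal.ofReal (f t)) ≤
      ∫⁻ t in Set.Ioo a c, ENNReal.ofReal (f t) := by
  rw [← lintegral_union measurableSet_Ioo
    (Set.Ioo_disjoint_Ioo.2 (by simp [min_le_iff, le_max_iff]))]
  exact lintegral_mono_set (by
    intro t ht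
    rcases ht with ⟨h1, h2⟩ | ⟨h1, h2⟩
    · exact ⟨h1, lt_of_lt_of_le h2 hbc⟩
    · exact ⟨lt_of_le_of_lt hab h1, h2⟩)

lemma tail_sum_le (f g : ℝ → ℝ)
    (hgpos : ∀ y : ℝ, 0 < y → 0 < g y) (hgf : ∀ y : ℝ, 0 < y → f (g y) = y)
    (hfanti : StrictAntiOn f (Set.Ioi 0)) (M : ℕ) (hM : 1 ≤ M) (K : ℕ) :
    ENNReal.ofReal (∑ j ∈ Finset.Icc (M+1) K, g j) ≤
      ∫⁻ t in Set.Ioo 0 (g M), ENNReal.ofReal (f t) := by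
  set G : ℕ → ℝ := fun n => g n with hG
  have hcast : ∀ n : ℕ, 1 ≤ n → (0:ℝ) < n := by
    intro n hn; exact_mod_cast Nat.pos_of_ne_zero (by omega)
  have hgnat : ∀ n : ℕ, 1 ≤ n → 0 < G n := fun n hn => hgpos _ (hcast n hn)
  have ganti : ∀ m n : ℕ, 1 ≤ m → m < n → G n < G m := by
    intro m n hm hmn
    have hgm := hgnat m hm
    have hgn := hgnat n (by omega)
    by_contra h
    push_neg at h
    rcases eq_or_lt_of_le h with he | hl
    · have : (m:ℝ) = n := by
        rw [← hgf m (hcast m hm), ← hgf n (hcast n (by omega))]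
        exact congrArg f he
      exact absurd (by exact_mod_cast this) (Nat.ne_of_lt hmn)
    · have := hfanti (Set.mem_Ioi.2 hgm) (Set.mem_Ioi.2 hgn) hl
      rw [hgf m (hcast m hm), hgf n (hcast n (by omega))] at this
      exact absurd (by exact_mod_cast this) (by omega)
  have hlow : ∀ n : ℕ, 1 ≤ n → ∀ t : ℝ, 0 < t → t < G n → (n:ℝ) ≤ f t := by
    intro n hn t ht0 htg
    have hgn := hgnat n hn
    have := hfanti (Set.mem_Ioi.2 ht0) (Set.mem_Ioi.2 hgn) htg
    rw [hgf n (hcast n hn)] at this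
    linarith
  -- main induction
  have main : ∀ K : ℕ, M ≤ K →
      ENNReal.ofReal ((∑ j ∈ Finset.Icc (M+1) K, G j) + M * G M) ≤
        ENNReal.ofReal ((K:ℝ) * G (K+1)) +
          ∫⁻ t in Set.Ioo (G (K+1)) (G M), ENNReal.ofReal (f t) := by
    intro K hK
    induction K, hK using Nat.le_induction with
    | base =>
      rw [Finset.Icc_eq_empty (by omega), Finset.sum_empty, zero_add]
      have h1 : ENNReal.ofReal ((M:ℝ) * (G M - G (M+1))) ≤
          ∫⁻ t in Set.Ioo (G (M+1)) (G M), ENNReal.ofReal (f t) := by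
        apply lint_const_le _ (Nat.cast_nonneg M)
        intro t ⟨ht1, ht2⟩
        exact hlow M hM t (lt_trans (hgnat (M+1) (by omega)) ht1) ht2
      calc ENNReal.ofReal ((M:ℝ) * G M)
          = ENNReal.ofReal ((M:ℝ) * G (M+1)) + ENNReal.ofReal ((M:ℝ) * (G M - G (M+1))) := by
            rw [← ENNReal.ofReal_add
              (mul_nonneg (Nat.cast_nonneg M) (hgnat (M+1) (by omega)).le)
              (mul_nonneg (Nat.cast_nonneg M) (by nlinarith [ganti M (M+1) hM (by omega)]))]
            ring_nf
        _ ≤ _ := add_le_add_right h1 _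
    | succ K hK ih =>
      have hK1 : 1 ≤ K := le_trans hM hK
      have hg1 := hgnat (K+1) (by omega)
      have hg2 := hgnat (K+2) (by omega)
      have hord : G (K+2) < G (K+1) := ganti (K+1) (K+2) (by omega) (by omega)
      have hordM : G (K+1) ≤ G M := (ganti M (K+1) hM (by omega)).le
      have hpiece : ENNReal.ofReal ((K+1:ℝ) * (G (K+1) - G (K+2))) ≤
          ∫⁻ t in Set.Ioo (G (K+2)) (G (K+1)), ENNReal.ofReal (f t) := by
        apply lint_const_le _ (by positivity)
        intro t ⟨ht1, ht2⟩
        have := hlow (K+1) (by omega) t (lt_trans hg2 ht1) ht2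
        push_cast at this ⊢
        linarith
      have hsum : (∑ j ∈ Finset.Icc (M+1) (K+1), G j) =
          (∑ j ∈ Finset.Icc (M+1) K, G j) + G (K+1) :=
        Finset.sum_Icc_succ_top (by omega) G
      have hsum_nonneg : 0 ≤ ∑ j ∈ Finset.Icc (M+1) K, G j :=
        Finset.sum_nonneg fun j hj => (hgnat j (by
          have := (Finset.mem_Icc.1 hj).1; omega)).le
      have hMgM : (0:ℝ) ≤ (M:ℝ) * G M := mul_nonneg (Nat.cast_nonneg M) (hgnat M hM).le
      calc ENNReal.ofReal ((∑ j ∈ Finset.Icc (M+1) (K+1), G j) + M * G M)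
          = ENNReal.ofReal ((G (K+1) + ((∑ j ∈ Finset.Icc (M+1) K, G j) + M * G M))) := by
            rw [hsum]; ring_nf
        _ ≤ ENNReal.ofReal (G (K+1)) +
              ENNReal.ofReal ((∑ j ∈ Finset.Icc (M+1) K, G j) + M * G M) :=
            ENNReal.ofReal_add_le
        _ ≤ ENNReal.ofReal (G (K+1)) + (ENNReal.ofReal ((K:ℝ) * G (K+1)) +
              ∫⁻ t in Set.Ioo (G (K+1)) (G M), ENNReal.ofReal (f t)) :=
            add_le_add_right ih _
        _ = ENNReal.ofReal ((K+1:ℝ) * G (K+1)) +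
              ∫⁻ t in Set.Ioo (G (K+1)) (G M), ENNReal.ofReal (f t) := by
            rw [← add_assoc, ← ENNReal.ofReal_add (hgnat (K+1) (by omega)).le
              (mul_nonneg (Nat.cast_nonneg K) hg1.le)]
            ring_nf
        _ = ENNReal.ofReal ((K+1:ℝ) * G (K+2)) +
              ENNReal.ofReal ((K+1:ℝ) * (G (K+1) - G (K+2))) +
              ∫⁻ t in Set.Ioo (G (K+1)) (G M), ENNReal.ofReal (f t) := by
            rw [← ENNReal.ofReal_add (by positivity)
              (mul_nonneg (by positivity) (by linarith))]
            ring_nf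
        _ ≤ ENNReal.ofReal ((K+1:ℝ) * G (K+2)) +
              (∫⁻ t in Set.Ioo (G (K+2)) (G (K+1)), ENNReal.ofReal (f t)) +
              ∫⁻ t in Set.Ioo (G (K+1)) (G M), ENNReal.ofReal (f t) := by
            exact add_le_add_left (add_le_add_right hpiece _) _
        _ ≤ ENNReal.ofReal ((K+1:ℝ) * G (K+2)) +
              ∫⁻ t in Set.Ioo (G (K+2)) (G M), ENNReal.ofReal (f t) := by
            rw [add_assoc]
            exact add_le_add_right (lint_split f hord.le hordM) _
        _ = ENNReal.ofReal (((((K+1):ℕ)):ℝ) * G ((K+1)+1)) +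
              ∫⁻ t in Set.Ioo (G ((K+1)+1)) (G M), ENNReal.ofReal (f t) := by push_cast; rfl
  -- conclude
  rcases le_or_gt (M+1) K with hK | hK
  · have h1 := main K (by omega)
    have hg1 := hgnat (K+1) (by omega)
    have hsum_nonneg : 0 ≤ ∑ j ∈ Finset.Icc (M+1) K, G j :=
      Finset.sum_nonneg fun j hj => (hgnat j (by
        have := (Finset.mem_Icc.1 hj).1; omega)).le
    have hMgM : (0:ℝ) ≤ (M:ℝ) * G M := mul_nonneg (Nat.cast_nonneg M) (hgnat M hM).le
    have h2 : ENNReal.ofReal ((K:ℝ) * G (K+1)) ≤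
        ∫⁻ t in Set.Ioo 0 (G (K+1)), ENNReal.ofReal (f t) := by
      have := lint_const_le f (c := (K:ℝ)) (a := 0) (b := G (K+1)) (Nat.cast_nonneg K) ?_
      · simpa using this
      · intro t ⟨ht1, ht2⟩
        have := hlow (K+1) (by omega) t ht1 ht2
        push_cast at this ⊢
        linarith
    have hordM : G (K+1) ≤ G M := (ganti M (K+1) hM (by omega)).le
    calc ENNReal.ofReal (∑ j ∈ Finset.Icc (M+1) K, G j)
        ≤ ENNReal.ofReal ((∑ j ∈ Finset.Icc (M+1) K, G j) + M * G M) :=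
          ENNReal.ofReal_le_ofReal (by linarith)
      _ ≤ ENNReal.ofReal ((K:ℝ) * G (K+1)) +
            ∫⁻ t in Set.Ioo (G (K+1)) (G M), ENNReal.ofReal (f t) := h1
      _ ≤ (∫⁻ t in Set.Ioo 0 (G (K+1)), ENNReal.ofReal (f t)) +
            ∫⁻ t in Set.Ioo (G (K+1)) (G M), ENNReal.ofReal (f t) := add_le_add_left h2 _
      _ ≤ ∫⁻ t in Set.Ioo 0 (G M), ENNReal.ofReal (f t) :=
          lint_split f (hgnat (K+1) (by omega)).le hordM
  · rw [Finset.Icc_eq_empty (by omega), Finset.sum_empty]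
    simp

end Stmt6Aux


open Stmt6Aux

/-- Corollary: if `f(x) = x^{γ-1} L(x)` with `0 < γ ≤ 1` and `L` slowly varying at `0`
satisfies the assumptions of the construction (continuous, strictly decreasing, `→ ∞` at `0`,
`→ 0` at `∞`, integrable near `0`), and `U` is the bounded open set built from `f`, then
`|(U+x) △ U| ≍ x^γ L(x)` as `x → 0⁺`. -/
theorem stmt_6 (γ : ℝ) (hγ0 : 0 < γ) (hγ1 : γ ≤ 1)
    (L : ℝ → ℝ) (hLpos : ∀ x : ℝ, 0 < x → 0 < L x) (hLmeas : Measurable L)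
    (hslow : ∀ c : ℝ, 0 < c →
      Tendsto (fun x => L (c * x) / L x) (𝓝[>] (0 : ℝ)) (𝓝 1))
    (f g : ℝ → ℝ)
    (hfdef : ∀ x : ℝ, 0 < x → f x = x ^ (γ - 1) * L x)
    (hfpos : ∀ x : ℝ, 0 < x → 0 < f x)
    (hfcont : ContinuousOn f (Set.Ioi 0))
    (hfanti : StrictAntiOn f (Set.Ioi 0))
    (hf0 : Tendsto f (𝓝[>] (0 : ℝ)) atTop)
    (hfinf : Tendsto f atTop (𝓝 0))
    (hfint : IntegrableOn f (Set.Ioo 0 1) volume)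
    (hginv : ∀ y : ℝ, 0 < y → 0 < g y ∧ f (g y) = y)
    (a : ℕ → ℝ) (ha0 : a 0 = 0)
    (ha : ∀ n : ℕ, 1 ≤ n → a (2 * n - 1) = g n ∧ a (2 * n) = g n)
    (b : ℕ → ℝ) (hb : ∀ n : ℕ, b n = ∑ k ∈ Finset.range (n + 1), a k)
    (U : Set ℝ) (hU : U = ⋃ n : ℕ, Set.Ioo (b (2 * n)) (b (2 * n + 1))) :
    ∃ a₀ > (0 : ℝ), ∃ b₀ > (0 : ℝ), ∃ c₀ > (0 : ℝ), ∀ x : ℝ, 0 < x → x < a₀ →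
      ENNReal.ofReal (b₀ * (x ^ γ * L x)) ≤ volume (symmDiff ((fun u => u + x) '' U) U) ∧
      volume (symmDiff ((fun u => u + x) '' U) U) ≤ ENNReal.ofReal (c₀ * (x ^ γ * L x)) := by
  have hgpos : ∀ y : ℝ, 0 < y → 0 < g y := fun y hy => (hginv y hy).1
  have hgf : ∀ y : ℝ, 0 < y → f (g y) = y := fun y hy => (hginv y hy).2
  have himp2 : ∀ z y : ℝ, 0 < z → 0 < y → z < g y → y < f z := by
    intro z y hz hy h
    have := hfanti (Set.mem_Ioi.2 hz) (Set.mem_Ioi.2 (hgpos y hy)) h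
    rw [hgf y hy] at this; exact this
  have himp5 : ∀ z y : ℝ, 0 < z → 0 < y → y ≤ f z → z ≤ g y := by
    intro z y hz hy h
    by_contra hc
    push_neg at hc
    have := hfanti (Set.mem_Ioi.2 (hgpos y hy)) (Set.mem_Ioi.2 hz) hc
    rw [hgf y hy] at this; linarith
  have himp1 : ∀ z y : ℝ, 0 < z → 0 < y → z ≤ g y → y ≤ f z := by
    intro z y hz hy h
    rcases eq_or_lt_of_le h with he | hl
    · rw [he, hgf y hy]
    · exact (himp2 z y hz hy hl).le
  have himp6 : ∀ z y : ℝ, 0 < z → 0 < y → f z < y → g y < z := by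
    intro z y hz hy h
    by_contra hc
    push_neg at hc
    exact absurd (himp1 z y hz hy hc) (by linarith)
  -- b facts
  have hbrec : ∀ n : ℕ, b (n+1) = b n + a (n+1) := by
    intro n; rw [hb (n+1), hb n, Finset.sum_range_succ]
  have ha_odd : ∀ n : ℕ, a (2*n+1) = g ((n:ℝ)+1) := by
    intro n
    have h := (ha (n+1) (by omega)).1
    rw [show 2*(n+1)-1 = 2*n+1 by omega] at h
    rw [h]; congr 1; push_cast; ring
  have ha_even : ∀ n : ℕ, a (2*n+2) = g ((n:ℝ)+1) := by
    intro n
    have h := (ha (n+1) (by omega)).2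
    rw [show 2*(n+1) = 2*n+2 by omega] at h
    rw [h]; congr 1; push_cast; ring
  have hb1 : ∀ n : ℕ, b (2*n+1) = b (2*n) + g ((n:ℝ)+1) := by
    intro n; rw [hbrec (2*n), ha_odd n]
  have hb2 : ∀ n : ℕ, b (2*n+2) = b (2*n+1) + g ((n:ℝ)+1) := by
    intro n
    have h := hbrec (2*n+1)
    rw [show 2*n+1+1 = 2*n+2 by omega] at h
    rw [h, ha_even n]
  have hapos : ∀ j : ℕ, 1 ≤ j → 0 < a j := by
    intro j hj
    rcases Nat.even_or_odd j with ⟨m, hm⟩ | ⟨m, hm⟩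
    · have hm1 : 1 ≤ m := by omega
      have h := (ha m hm1).2
      rw [show 2*m = j by omega] at h
      rw [h]
      exact hgpos _ (by exact_mod_cast Nat.pos_of_ne_zero (by omega))
    · have h : a j = g ((m:ℝ)+1) := by rw [show j = 2*m+1 by omega]; exact ha_odd m
      rw [h]
      exact hgpos _ (by positivity)
  have hbmono : Monotone b := monotone_nat_of_le_succ fun n => by
    have := hapos (n+1) (by omega)
    rw [hbrec n]; linarith
  -- constants
  obtain ⟨δ, hδ0, C, hC0, hkar⟩ :=
    karamata γ hγ0 L f hLpos (hslow 2⁻¹ (by norm_num)) hfdef hfanti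
  have hg2 : 0 < g 2 := hgpos 2 (by norm_num)
  refine ⟨min (g 2) δ, lt_min hg2 hδ0, 1/2, by norm_num, 3 + 2*C, by positivity, ?_⟩
  intro x hx0 hxa
  have hxg2 : x < g 2 := lt_of_lt_of_le hxa (min_le_left _ _)
  have hxδ : x < δ := lt_of_lt_of_le hxa (min_le_right _ _)
  have hfx2 : 2 < f x := himp2 x 2 hx0 (by norm_num) hxg2
  have hfx0 : 0 < f x := by linarith
  set N : ℕ := ⌊f x⌋₊ with hN
  have hN2 : 2 ≤ N := Nat.le_floor (by exact_mod_cast hfx2.le)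
  have hNle : (N:ℝ) ≤ f x := Nat.floor_le hfx0.le
  have hNgt : f x < N + 1 := Nat.lt_floor_add_one _
  have hxfx : x * f x = x ^ γ * L x := by
    rw [hfdef x hx0]
    have h2 : x * x ^ (γ-1) = x ^ γ := by
      nth_rewrite 1 [← Real.rpow_one x]
      rw [← Real.rpow_add hx0]; ring_nf
    calc x * (x^(γ-1) * L x) = (x * x^(γ-1)) * L x := by ring
      _ = x^γ * L x := by rw [h2]
  have hgN1 : g ((N:ℝ)+1) < x := himp6 x ((N:ℝ)+1) hx0 (by positivity) hNgt
  have hxleg : ∀ n : ℕ, n < N → x ≤ g ((n:ℝ)+1) := by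
    intro n hn
    apply himp5 x _ hx0 (by positivity)
    have h : ((n:ℝ)+1) ≤ (N:ℝ) := by exact_mod_cast hn
    linarith
  have hLx0 : 0 < L x := hLpos x hx0
  have hxγ0 : (0:ℝ) < x ^ γ := Real.rpow_pos_of_pos hx0 _
  constructor
  · -- LOWER BOUND
    have hJ : ∀ n : ℕ, n < N → Set.Ioo (b (2*n+1)) (b (2*n+1) + x) ⊆
        symmDiff ((fun u => u + x) '' U) U := by
      intro n hn t ht
      have hx_le := hxleg n hn
      apply Set.mem_symmDiff.2
      left
      constructor
      · refine ⟨t - x, ?_, by simp⟩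
        rw [hU]
        refine Set.mem_iUnion.2 ⟨n, ?_, ?_⟩
        · have h1 := hb1 n
          have := ht.1
          linarith
        · have := ht.2
          linarith [ht.1]
      · rw [hU]
        intro htU
        rcases Set.mem_iUnion.1 htU with ⟨m, hm1, hm2⟩
        rcases le_or_gt m n with hmn | hmn
        · have hmono : b (2*m+1) ≤ b (2*n+1) := hbmono (by omega)
          linarith [ht.1]
        · have hmono : b (2*n+2) ≤ b (2*m) := hbmono (by omega)
          have h2 := hb2 n
          linarith [ht.2]
    have hdisjJ : (↑(Finset.range N) : Set ℕ).Pairwise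
        (Function.onFun Disjoint fun n => Set.Ioo (b (2*n+1)) (b (2*n+1) + x)) := by
      have key : ∀ n m : ℕ, n < N → m < N → n < m →
          Disjoint (Set.Ioo (b (2*n+1)) (b (2*n+1) + x))
            (Set.Ioo (b (2*m+1)) (b (2*m+1) + x)) := by
        intro n m hn hm hnm
        apply Set.Ioo_disjoint_Ioo.2
        have h1 : b (2*n+1) + x ≤ b (2*n+2) := by
          have := hb2 n; have := hxleg n hn; linarith
        have h2 : b (2*n+2) ≤ b (2*m+1) := hbmono (by omega)
        calc min (b (2*n+1) + x) (b (2*m+1) + x) ≤ b (2*n+1) + x := min_le_left _ _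
          _ ≤ b (2*m+1) := le_trans h1 h2
          _ ≤ max (b (2*n+1)) (b (2*m+1)) := le_max_right _ _
      intro n hn m hm hnm
      simp only [Finset.coe_range, Set.mem_Iio] at hn hm
      rcases lt_or_gt_of_ne hnm with h | h
      · exact key n m hn hm h
      · exact (key m n hm hn h).symm
    have hvol_eq : volume (⋃ n ∈ Finset.range N, Set.Ioo (b (2*n+1)) (b (2*n+1) + x)) =
        ∑ n ∈ Finset.range N, volume (Set.Ioo (b (2*n+1)) (b (2*n+1) + x)) :=
      measure_biUnion_finset hdisjJ (fun n _ => measurableSet_Ioo)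
    have hvol_lower : ENNReal.ofReal ((N:ℝ) * x) ≤
        volume (symmDiff ((fun u => u + x) '' U) U) := by
      calc ENNReal.ofReal ((N:ℝ) * x) = ∑ _n ∈ Finset.range N, ENNReal.ofReal x := by
            rw [Finset.sum_const, Finset.card_range, nsmul_eq_mul,
              ← ENNReal.ofReal_natCast N, ← ENNReal.ofReal_mul (Nat.cast_nonneg N)]
        _ = ∑ n ∈ Finset.range N, volume (Set.Ioo (b (2*n+1)) (b (2*n+1) + x)) := by
            apply Finset.sum_congr rfl
            intro n _
            rw [Real.volume_Ioo]; congr 1; ring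
        _ = volume (⋃ n ∈ Finset.range N, Set.Ioo (b (2*n+1)) (b (2*n+1) + x)) := hvol_eq.symm
        _ ≤ volume (symmDiff ((fun u => u + x) '' U) U) := by
            apply measure_mono
            exact Set.iUnion₂_subset fun n hn => hJ n (Finset.mem_range.1 hn)
    refine le_trans (ENNReal.ofReal_le_ofReal ?_) hvol_lower
    have h1 : (f x - 1) * x ≤ (N:ℝ) * x := by nlinarith
    have h2 : 1/2 * (x * f x) ≤ (f x - 1) * x := by nlinarith
    rw [← hxfx]; linarith
  · -- UPPER BOUND
    have himg : (fun u => u + x) '' U = ⋃ n : ℕ, Set.Ioo (b (2*n) + x) (b (2*n+1) + x) := by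
      rw [hU, Set.image_iUnion]
      exact Set.iUnion_congr fun n => Set.image_add_const_Ioo x _ _
    have hsubset : symmDiff ((fun u => u + x) '' U) U ⊆
        ⋃ n : ℕ, symmDiff (Set.Ioo (b (2*n) + x) (b (2*n+1) + x))
          (Set.Ioo (b (2*n)) (b (2*n+1))) := by
      rw [himg, hU]
      exact symmDiff_iUnion_subset
    set v : ℕ → ℝ≥0∞ := fun n => volume (symmDiff (Set.Ioo (b (2*n) + x) (b (2*n+1) + x))
      (Set.Ioo (b (2*n)) (b (2*n+1)))) with hv
    have hv_le : volume (symmDiff ((fun u => u + x) '' U) U) ≤ ∑' n : ℕ, v n :=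
      (measure_mono hsubset).trans (measure_iUnion_le _)
    have hsplit : ∑' n : ℕ, v n = (∑ i ∈ Finset.range N, v i) + ∑' k : ℕ, v (k + N) :=
      (Summable.sum_add_tsum_nat_add' (f := v) (k := N) ENNReal.summable).symm
    have hhead : (∑ i ∈ Finset.range N, v i) ≤ ENNReal.ofReal (2 * ((N:ℝ) * x)) := by
      calc (∑ i ∈ Finset.range N, v i) ≤ ∑ _i ∈ Finset.range N, ENNReal.ofReal (2*x) :=
            Finset.sum_le_sum fun i _ => vol_symmDiff_shift_le _ _ _ hx0.le
        _ = ENNReal.ofReal ((N:ℝ) * (2*x)) := by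
            rw [Finset.sum_const, Finset.card_range, nsmul_eq_mul,
              ← ENNReal.ofReal_natCast N, ← ENNReal.ofReal_mul (Nat.cast_nonneg N)]
        _ = ENNReal.ofReal (2 * ((N:ℝ) * x)) := by ring_nf
    have hvtail_le : ∀ k : ℕ, v (k + N) ≤ ENNReal.ofReal (2 * g (((k+N:ℕ):ℝ)+1)) := by
      intro k
      refine le_trans (vol_symmDiff_shift_le' _ _ _) (ENNReal.ofReal_le_ofReal ?_)
      have := hb1 (k+N)
      linarith
    have htailsum : (∑' k : ℕ, ENNReal.ofReal (g (((k+1+N:ℕ):ℝ)+1))) ≤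
        ∫⁻ t in Set.Ioo 0 (g (((N+1:ℕ):ℝ))), ENNReal.ofReal (f t) := by
      apply Summable.tsum_le_of_sum_le ENNReal.summable
      intro s
      obtain ⟨K, hK⟩ := Finset.exists_nat_subset_range s
      calc ∑ k ∈ s, ENNReal.ofReal (g (((k+1+N:ℕ):ℝ)+1))
          ≤ ∑ k ∈ Finset.range K, ENNReal.ofReal (g (((k+1+N:ℕ):ℝ)+1)) :=
            Finset.sum_le_sum_of_subset hK
        _ = ENNReal.ofReal (∑ k ∈ Finset.range K, g (((k+1+N:ℕ):ℝ)+1)) :=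
            (ENNReal.ofReal_sum_of_nonneg (fun i _ => (hgpos _ (by positivity)).le)).symm
        _ ≤ ∫⁻ t in Set.Ioo 0 (g (((N+1:ℕ):ℝ))), ENNReal.ofReal (f t) := by
            have heq : (∑ j ∈ Finset.Icc ((N+1)+1) (N+1+K), g (j:ℝ)) =
                ∑ k ∈ Finset.range K, g (((k+1+N:ℕ):ℝ)+1) := by
              rw [← Finset.Ico_add_one_right_eq_Icc, Finset.sum_Ico_eq_sum_range]
              rw [show N+1+K+1 - (N+1+1) = K by omega]
              apply Finset.sum_congr rfl
              intro i _
              congr 1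
              push_cast
              ring
            rw [← heq]
            have h := tail_sum_le f g hgpos hgf hfanti (N+1) (by omega) (N+1+K)
            convert h using 3
    have htail : (∑' k : ℕ, v (k + N)) ≤
        ENNReal.ofReal (2*x) + ENNReal.ofReal 2 * ENNReal.ofReal (C * (x ^ γ * L x)) := by
      calc (∑' k : ℕ, v (k + N)) ≤ ∑' k : ℕ, ENNReal.ofReal (2 * g (((k+N:ℕ):ℝ)+1)) :=
            ENNReal.tsum_le_tsum hvtail_le
        _ = ENNReal.ofReal (2 * g (((N:ℕ):ℝ)+1)) +
              ∑' k : ℕ, ENNReal.ofReal (2 * g (((k+1+N:ℕ):ℝ)+1)) := by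
            rw [tsum_eq_zero_add' ENNReal.summable]
            norm_num
        _ ≤ ENNReal.ofReal (2*x) + ENNReal.ofReal 2 *
              ∑' k : ℕ, ENNReal.ofReal (g (((k+1+N:ℕ):ℝ)+1)) := by
            apply add_le_add
            · apply ENNReal.ofReal_le_ofReal; linarith [hgN1]
            · rw [← ENNReal.tsum_mul_left]
              apply ENNReal.tsum_le_tsum
              intro k
              rw [← ENNReal.ofReal_mul (by norm_num)]
        _ ≤ ENNReal.ofReal (2*x) + ENNReal.ofReal 2 *
              ∫⁻ t in Set.Ioo 0 (g (((N+1:ℕ):ℝ))), ENNReal.ofReal (f t) := by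
            exact add_le_add_right (mul_le_mul_right htailsum _) _
        _ ≤ ENNReal.ofReal (2*x) + ENNReal.ofReal 2 *
              ∫⁻ t in Set.Ioo 0 x, ENNReal.ofReal (f t) := by
            apply add_le_add_right
            apply mul_le_mul_right
            apply lintegral_mono_set
            apply Set.Ioo_subset_Ioo le_rfl
            push_cast
            linarith [hgN1]
        _ ≤ ENNReal.ofReal (2*x) + ENNReal.ofReal 2 * ENNReal.ofReal (C * (x ^ γ * L x)) :=
            add_le_add_right (mul_le_mul_right (hkar x hx0 hxδ) _) _
    calc volume (symmDiff ((fun u => u + x) '' U) U) ≤ ∑' n : ℕ, v n := hv_le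
      _ = (∑ i ∈ Finset.range N, v i) + ∑' k : ℕ, v (k + N) := hsplit
      _ ≤ ENNReal.ofReal (2 * ((N:ℝ) * x)) +
            (ENNReal.ofReal (2*x) + ENNReal.ofReal 2 * ENNReal.ofReal (C * (x ^ γ * L x))) :=
          add_le_add hhead htail
      _ = ENNReal.ofReal (2 * ((N:ℝ) * x) + 2*x + 2 * (C * (x ^ γ * L x))) := by
          rw [← ENNReal.ofReal_mul (by norm_num : (0:ℝ) ≤ 2)]
          rw [← ENNReal.ofReal_add (by positivity) (by positivity)]
          rw [← ENNReal.ofReal_add (by positivity) (by positivity)]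
          ring_nf
      _ ≤ ENNReal.ofReal ((3 + 2*C) * (x ^ γ * L x)) := by
          apply ENNReal.ofReal_le_ofReal
          have hNx : (N:ℝ) * x ≤ x ^ γ * L x := by
            rw [← hxfx]; nlinarith
          have h2x : 2 * x ≤ x ^ γ * L x := by
            rw [← hxfx]; nlinarith
          nlinarith [hxγ0, hLx0, mul_pos hxγ0 hLx0]
end

section
/- Let G be a second countable locally compact abelian group and let w be a continuous unitary representation of G on a complex Hilbert space K that does not contain the trivial representation (i.e. there is no nonzero vector fixed by all w(g)). Let c : G → K be a continuous 1-cocycle, i.e. c(r + s) = c(r) + w(r)c(s) for all r, s ∈ G. Then for all r, s ∈ G one has ⟨c(r), w(r)c(s)⟩ = ⟨c(s), w(s)c(r)⟩. -/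
local notation "⟪" x ", " y "⟫" => @inner ℂ _ _ x y

/-- Let `G` be a second countable locally compact abelian (additive) topological group, `w` a
strongly continuous unitary representation of `G` on a complex Hilbert space `K` containing no
nonzero invariant vector, and `c : G → K` a continuous 1-cocycle
(`c(r+s) = c(r) + w(r)c(s)`). Then `⟨c(r), w(r)c(s)⟩ = ⟨c(s), w(s)c(r)⟩` for all `r, s`. -/
theorem stmt_7 {G : Type*} [AddCommGroup G] [TopologicalSpace G]
    [IsTopologicalAddGroup G] [LocallyCompactSpace G] [SecondCountableTopology G]
    {K : Type*} [NormedAddCommGroup K] [InnerProductSpace ℂ K] [CompleteSpace K]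
    (w : G → (K ≃ₗᵢ[ℂ] K))
    (hw0 : ∀ ξ : K, w 0 ξ = ξ)
    (hwadd : ∀ r s : G, ∀ ξ : K, w (r + s) ξ = w r (w s ξ))
    (hwcont : ∀ ξ : K, Continuous fun x : G => w x ξ)
    (hnotriv : ∀ ξ : K, (∀ x : G, w x ξ = ξ) → ξ = 0)
    (c : G → K) (hc : Continuous c)
    (hcoc : ∀ r s : G, c (r + s) = c r + w r (c s)) :
    ∀ r s : G, (inner ℂ (c r) (w r (c s)) : ℂ) = (inner ℂ (c s) (w s (c r)) : ℂ) := by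
  -- basic facts
  have c0 : c 0 = 0 := by
    have h := hcoc 0 0
    rw [add_zero, hw0] at h
    exact (left_eq_add.mp h)
  have winv2 : ∀ (t : G) (x : K), w t (w (-t) x) = x := by
    intro t x; rw [← hwadd, add_neg_cancel, hw0]
  have winv1 : ∀ (t : G) (x : K), w (-t) (w t x) = x := by
    intro t x; rw [← hwadd, neg_add_cancel, hw0]
  have mov : ∀ (t : G) (x y : K), ⟪x, w t y⟫ = ⟪w (-t) x, y⟫ := by
    intro t x y
    calc ⟪x, w t y⟫ = ⟪w t (w (-t) x), w t y⟫ := by rw [winv2]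
    _ = ⟪w (-t) x, y⟫ := (w t).inner_map_map _ _
  have sym : ∀ a b : G, c a + w a (c b) = c b + w b (c a) := by
    intro a b; rw [← hcoc, ← hcoc, add_comm]
  have cneg : ∀ t : G, w (-t) (c t) = -c (-t) := by
    intro t
    have h := hcoc (-t) t
    rw [neg_add_cancel, c0] at h
    linear_combination (norm := module) -h
  have normcneg : ∀ t : G, ‖c (-t)‖ = ‖c t‖ := by
    intro t
    rw [← norm_neg, ← cneg t, (w (-t)).norm_map]
  intro r s
  -- reduce to `E r = 0`
  set E : G → ℂ := fun a => ⟪c (-s), c a⟫ - ⟪c (-a), c s⟫ with hE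
  have goal_red : ∀ a : G, ⟪c a, w a (c s)⟫ = -⟪c (-a), c s⟫ := by
    intro a
    rw [mov, cneg, inner_neg_left]
  suffices hEr : E r = 0 by
    have h1 := goal_red r
    have h2 : ⟪c s, w s (c r)⟫ = -⟪c (-s), c r⟫ := by rw [mov, cneg, inner_neg_left]
    have h3 : ⟪c (-s), c r⟫ = ⟪c (-r), c s⟫ := by
      have := hEr; rw [hE] at this; simpa [sub_eq_zero] using this
    rw [h1, h2, h3]
  -- E is additive
  have Eadd : ∀ a b : G, E (a + b) = E a + E b := by
    intro a b
    have h1 : c (a + b) = c a + w a (c b) := hcoc a b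
    have h2 : c (-(a + b)) = c (-a) + w (-a) (c (-b)) := by
      rw [neg_add, ← hcoc, add_comm]
    have h3 : ⟪w (-a) (c (-b)), c s⟫ = ⟪c (-b), w a (c s)⟫ := (mov a (c (-b)) (c s)).symm
    have key : ⟪c (-s), w a (c b)⟫ - ⟪c (-b), w a (c s)⟫ = ⟪c (-s), c b⟫ - ⟪c (-b), c s⟫ := by
      have hb : w a (c b) = c b + w b (c a) - c a := eq_sub_of_add_eq' (sym a b)
      have hs' : w a (c s) = c s + w s (c a) - c a := eq_sub_of_add_eq' (sym a s)
      have hmb : ⟪c (-s), w b (c a)⟫ = ⟪w (-b) (c (-s)), c a⟫ := mov b _ _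
      have hnb : w (-b) (c (-s)) = c (-s) + w (-s) (c (-b)) - c (-b) :=
        eq_sub_of_add_eq' (sym (-b) (-s))
      have hms : ⟪w (-s) (c (-b)), c a⟫ = ⟪c (-b), w s (c a)⟫ := (mov s (c (-b)) (c a)).symm
      rw [hb, hs']
      simp only [inner_add_right, inner_sub_right]
      rw [hmb, hnb]
      simp only [inner_add_left, inner_sub_left, hms]
      ring
    rw [hE]
    simp only [h1, h2, inner_add_right, inner_add_left, h3]
    rw [← key]; ring
  have Esmul : ∀ n : ℕ, E (n • r) = (n : ℂ) * E r := by
    intro n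
    induction n with
    | zero => simp [hE, zero_nsmul, c0, neg_zero]
    | succ n ih => rw [succ_nsmul, Eadd, ih]; push_cast; ring
  -- the fixed subspace of `w r`
  set M : Submodule ℂ K :=
    { carrier := {ξ : K | w r ξ = ξ}
      add_mem' := by intro x y hx hy; simp only [Set.mem_setOf_eq, map_add] at *; rw [hx, hy]
      zero_mem' := by simp only [Set.mem_setOf_eq, map_zero]
      smul_mem' := by intro a x hx; simp only [Set.mem_setOf_eq, map_smul] at *; rw [hx] } with hM
  have hMmem : ∀ ξ : K, ξ ∈ M ↔ w r ξ = ξ := fun ξ => Iff.rfl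
  have hMc : IsClosed (M : Set K) := isClosed_eq (w r).continuous continuous_id
  haveI : CompleteSpace M := hMc.completeSpace_coe
  have minv : ∀ (t : G) (x : K), x ∈ M → w t x ∈ M := by
    intro t x hx
    rw [hMmem] at *
    rw [← hwadd, add_comm, hwadd, hx]
  have commP : ∀ (t : G) (x : K),
      (Submodule.orthogonalProjectionOnto M (w t x) : K) = w t (Submodule.orthogonalProjectionOnto M x : K) := by
    intro t x
    apply Submodule.eq_starProjection_of_mem_orthogonal
    · exact minv t _ (SetLike.coe_mem _)
    · rw [← map_sub, Submodule.mem_orthogonal]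
      intro u hu
      rw [mov]
      exact (Submodule.mem_orthogonal _ _).mp
        (Submodule.sub_starProjection_mem_orthogonal (K := M) x) _ (minv (-t) u hu)
  have q0 : (Submodule.orthogonalProjectionOnto M (c r) : K) = 0 := by
    apply hnotriv
    intro t
    have h := congrArg (fun z => (Submodule.orthogonalProjectionOnto M z : K)) (sym r t)
    simp only [map_add, Submodule.coe_add] at h
    rw [commP r (c t), commP t (c r)] at h
    have hfix : w r (Submodule.orthogonalProjectionOnto M (c t) : K) = (Submodule.orthogonalProjectionOnto M (c t) : K) :=
      (hMmem _).mp (SetLike.coe_mem _)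
    rw [hfix] at h
    have := h.symm
    rw [add_comm ((Submodule.orthogonalProjectionOnto M (c t) : K))] at this
    exact add_right_cancel this
  have crMperp : c r ∈ Mᗮ := by
    have h := Submodule.sub_starProjection_mem_orthogonal (K := M) (c r)
    rwa [Submodule.starProjection_apply, q0, sub_zero] at h
  -- `Mᗮ` is the closure of the range of `1 - w r`
  set T : K →ₗ[ℂ] K := LinearMap.id - ((w r).toLinearEquiv : K →ₗ[ℂ] K) with hT
  have hTapp : ∀ x : K, T x = x - w r x := fun x => rfl
  set R : Submodule ℂ K := LinearMap.range T with hR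
  have hRperp : Rᗮ = M := by
    ext ξ
    rw [Submodule.mem_orthogonal, hMmem]
    constructor
    · intro h
      have h2 : ∀ x : K, ⟪x, ξ⟫ = ⟪x, w (-r) ξ⟫ := by
        intro x
        have h3 := h (T x) (LinearMap.mem_range_self T x)
        rw [hTapp, inner_sub_left, sub_eq_zero] at h3
        have h4 : ⟪x, w (-r) ξ⟫ = ⟪w r x, ξ⟫ := by
          rw [mov (-r), neg_neg]
        rw [h4, ← h3]
      have h5 : ξ = w (-r) ξ := ext_inner_left ℂ h2
      calc w r ξ = w r (w (-r) ξ) := by rw [← h5]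
      _ = ξ := winv2 r ξ
    · intro hξ u hu
      obtain ⟨x, rfl⟩ := hu
      rw [hTapp, inner_sub_left, sub_eq_zero]
      calc ⟪x, ξ⟫ = ⟪w r x, w r ξ⟫ := ((w r).inner_map_map x ξ).symm
      _ = ⟪w r x, ξ⟫ := by rw [hξ]
  have crcl : c r ∈ closure (R : Set K) := by
    have h : Mᗮ = R.topologicalClosure := by
      rw [← hRperp, Submodule.orthogonal_orthogonal_eq_closure]
    rw [h] at crMperp
    exact crMperp
  -- sums along the cyclic direction
  have csum : ∀ n : ℕ, c (n • r) = ∑ k ∈ Finset.range n, w (k • r) (c r) := by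
    intro n
    induction n with
    | zero => simp [zero_nsmul, c0]
    | succ n ih =>
      rw [succ_nsmul, hcoc, ih, Finset.sum_range_succ]
  have telesc : ∀ (n : ℕ) (x : K),
      ∑ k ∈ Finset.range n, w (k • r) (x - w r x) = x - w (n • r) x := by
    intro n x
    induction n with
    | zero => simp [zero_nsmul, hw0]
    | succ n ih =>
      rw [Finset.sum_range_succ, ih, map_sub, succ_nsmul, hwadd]
      abel
  have bound : ∀ (n : ℕ) (x : K), ‖c (n • r)‖ ≤ 2 * ‖x‖ + n * ‖c r - (x - w r x)‖ := by
    intro n x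
    have hsplit : c (n • r) = (x - w (n • r) x) +
        ∑ k ∈ Finset.range n, w (k • r) (c r - (x - w r x)) := by
      rw [csum n, ← telesc n x, ← Finset.sum_add_distrib]
      congr 1
      ext k
      rw [← map_add]
      congr 1
      abel
    rw [hsplit]
    calc ‖(x - w (n • r) x) + ∑ k ∈ Finset.range n, w (k • r) (c r - (x - w r x))‖
        ≤ ‖x - w (n • r) x‖ + ‖∑ k ∈ Finset.range n, w (k • r) (c r - (x - w r x))‖ :=
          norm_add_le _ _
      _ ≤ (‖x‖ + ‖w (n • r) x‖) + ∑ k ∈ Finset.range n, ‖w (k • r) (c r - (x - w r x))‖ := by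
          gcongr
          · exact norm_sub_le _ _
          · exact norm_sum_le _ _
      _ = 2 * ‖x‖ + n * ‖c r - (x - w r x)‖ := by
          simp only [(w _).norm_map, Finset.sum_const, Finset.card_range, nsmul_eq_mul]
          ring
  -- the final estimate
  have Ebound : ∀ n : ℕ, ‖E (n • r)‖ ≤ (‖c (-s)‖ + ‖c s‖) * ‖c (n • r)‖ := by
    intro n
    rw [hE]
    calc ‖⟪c (-s), c (n • r)⟫ - ⟪c (-(n • r)), c s⟫‖
        ≤ ‖⟪c (-s), c (n • r)⟫‖ + ‖⟪c (-(n • r)), c s⟫‖ := norm_sub_le _ _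
      _ ≤ ‖c (-s)‖ * ‖c (n • r)‖ + ‖c (-(n • r))‖ * ‖c s‖ := by
          gcongr <;> exact norm_inner_le_norm _ _
      _ = (‖c (-s)‖ + ‖c s‖) * ‖c (n • r)‖ := by rw [normcneg (n • r)]; ring
  have hfinal : ∀ ε : ℝ, 0 < ε → ‖E r‖ ≤ ε := by
    intro ε hε
    set C : ℝ := ‖c (-s)‖ + ‖c s‖ with hCdef
    have hC0 : 0 ≤ C := by rw [hCdef]; positivity
    clear_value C
    have hδ : 0 < ε / (2 * C + 2) := by positivity
    obtain ⟨y, hyR, hy⟩ := Metric.mem_closure_iff.mp crcl _ hδ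
    obtain ⟨x, rfl⟩ := hyR
    rw [dist_eq_norm, hTapp] at hy
    obtain ⟨n, hn⟩ := exists_nat_gt (max 1 (2 * C * ‖x‖ / (ε / 2)))
    have hn1 : (1 : ℝ) < n := lt_of_le_of_lt (le_max_left _ _) hn
    have hnpos : (0 : ℝ) < n := by linarith
    have hn2 : 2 * C * ‖x‖ / (ε / 2) < n := lt_of_le_of_lt (le_max_right _ _) hn
    have hn3 : 2 * C * ‖x‖ < n * (ε / 2) := by
      rw [div_lt_iff₀ (by positivity)] at hn2
      linarith
    have key : (n : ℝ) * ‖E r‖ ≤ C * (2 * ‖x‖ + n * ‖c r - (x - w r x)‖) := by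
      have h1 : (n : ℝ) * ‖E r‖ = ‖E (n • r)‖ := by
        rw [Esmul n, norm_mul, Complex.norm_natCast]
      rw [h1]
      calc ‖E (n • r)‖ ≤ C * ‖c (n • r)‖ := Ebound n
        _ ≤ C * (2 * ‖x‖ + n * ‖c r - (x - w r x)‖) := by
            apply mul_le_mul_of_nonneg_left (bound n x) hC0
    have hCd : C * ‖c r - (x - w r x)‖ ≤ ε / 2 := by
      have h2 : C * ‖c r - (x - w r x)‖ ≤ C * (ε / (2 * C + 2)) := by
        apply mul_le_mul_of_nonneg_left (le_of_lt hy) hC0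
      have h3 : C * (ε / (2 * C + 2)) ≤ ε / 2 := by
        rw [← mul_div_assoc, div_le_div_iff₀ (by positivity) (by norm_num : (0:ℝ) < 2)]
        nlinarith
      linarith
    have h4 : (n : ℝ) * ‖E r‖ ≤ n * ε := by
      have : C * (2 * ‖x‖ + n * ‖c r - (x - w r x)‖)
          = 2 * C * ‖x‖ + n * (C * ‖c r - (x - w r x)‖) := by ring
      rw [this] at key
      have h5 : (n : ℝ) * (C * ‖c r - (x - w r x)‖) ≤ n * (ε / 2) := by
        apply mul_le_mul_of_nonneg_left hCd (le_of_lt hnpos)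
      have h6 : (n : ℝ) * (ε / 2) + (n : ℝ) * (ε / 2) = (n : ℝ) * ε := by ring
      linarith
    exact le_of_mul_le_mul_left h4 hnpos
  have : ‖E r‖ ≤ 0 := by
    by_contra h
    push_neg at h
    have := hfinal (‖E r‖ / 2) (by linarith)
    linarith
  have h0 : ‖E r‖ = 0 := le_antisymm this (norm_nonneg _)
  exact norm_eq_zero.mp h0
end

section
/- Let H be a complex Hilbert space and let S, T be bounded linear operators on H satisfying T*S = 1. Then |S| |T|² |S| ≥ 1 in the sense of positive operators, where |A| = (A*A)^{1/2} denotes the absolute value of an operator A. -/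
open ContinuousLinearMap

/-- Let `S, T` be bounded operators on a complex Hilbert space with `T* S = 1`, and let
`|S|` and `|T|` be the (positive) absolute values, i.e. the positive operators with
`|S|² = S*S` and `|T|² = T*T`. Then `|S| |T|² |S| ≥ 1` as positive operators. -/
theorem stmt_10 {H : Type*} [NormedAddCommGroup H] [InnerProductSpace ℂ H] [CompleteSpace H]
    (S T AS AT : H →L[ℂ] H) (hTS : adjoint T ∘L S = 1)
    (hASpos : AS.IsPositive) (hATpos : AT.IsPositive)
    (hAS : AS ∘L AS = adjoint S ∘L S) (hAT : AT ∘L AT = adjoint T ∘L T) :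
    (AS ∘L AT ∘L AT ∘L AS - 1).IsPositive := by
  have hASsa := hASpos.isSelfAdjoint
  have hATsa := hATpos.isSelfAdjoint
  have hASsym := hASsa.isSymmetric
  have hATsym := hATsa.isSymmetric
  -- norm identities
  have hnS : ∀ y : H, ‖AS y‖ = ‖S y‖ := by
    intro y
    have h1 : (inner ℂ (AS y) (AS y) : ℂ) = inner ℂ (S y) (S y) := by
      calc (inner ℂ (AS y) (AS y) : ℂ) = inner ℂ (AS (AS y)) y := (hASsym (AS y) y).symm
        _ = inner ℂ ((AS ∘L AS) y) y := rfl
        _ = inner ℂ ((adjoint S ∘L S) y) y := by rw [hAS]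
        _ = inner ℂ (adjoint S (S y)) y := rfl
        _ = inner ℂ (S y) (S y) := by rw [adjoint_inner_left]
    have h2 : ‖AS y‖ ^ 2 = ‖S y‖ ^ 2 := by
      have := congrArg (RCLike.re : ℂ → ℝ) h1
      rwa [inner_self_eq_norm_sq, inner_self_eq_norm_sq] at this
    rw [← Real.sqrt_sq (norm_nonneg (AS y)), h2, Real.sqrt_sq (norm_nonneg (S y))]
  have hnT : ∀ y : H, ‖AT y‖ = ‖T y‖ := by
    intro y
    have h1 : (inner ℂ (AT y) (AT y) : ℂ) = inner ℂ (T y) (T y) := by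
      calc (inner ℂ (AT y) (AT y) : ℂ) = inner ℂ (AT (AT y)) y := (hATsym (AT y) y).symm
        _ = inner ℂ ((AT ∘L AT) y) y := rfl
        _ = inner ℂ ((adjoint T ∘L T) y) y := by rw [hAT]
        _ = inner ℂ (adjoint T (T y)) y := rfl
        _ = inner ℂ (T y) (T y) := by rw [adjoint_inner_left]
    have h2 : ‖AT y‖ ^ 2 = ‖T y‖ ^ 2 := by
      have := congrArg (RCLike.re : ℂ → ℝ) h1
      rwa [inner_self_eq_norm_sq, inner_self_eq_norm_sq] at this
    rw [← Real.sqrt_sq (norm_nonneg (AT y)), h2, Real.sqrt_sq (norm_nonneg (T y))]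
  -- the key inequality on the range of AS
  have hrange : ∀ z : H, ‖AS z‖ ≤ ‖AT (AS (AS z))‖ := by
    intro z
    set x := AS z with hx
    have h1 : (inner ℂ (S z) (T (AS x)) : ℂ) = inner ℂ x x := by
      calc (inner ℂ (S z) (T (AS x)) : ℂ) = inner ℂ (adjoint T (S z)) (AS x) := by
            rw [adjoint_inner_left]
        _ = inner ℂ ((adjoint T ∘L S) z) (AS x) := rfl
        _ = inner ℂ z (AS x) := by rw [hTS]; rfl
        _ = inner ℂ (AS z) x := (hASsym z x).symm
        _ = inner ℂ x x := rfl
    have h2 : ‖x‖ ^ 2 ≤ ‖S z‖ * ‖T (AS x)‖ := by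
      have hre : RCLike.re (inner ℂ (S z) (T (AS x)) : ℂ) = ‖x‖ ^ 2 := by
        rw [h1, inner_self_eq_norm_sq]
      calc ‖x‖ ^ 2 = RCLike.re (inner ℂ (S z) (T (AS x)) : ℂ) := hre.symm
        _ ≤ ‖S z‖ * ‖T (AS x)‖ := re_inner_le_norm _ _
    rw [← hnS, ← hnT] at h2
    rcases eq_or_lt_of_le (norm_nonneg x) with h0 | h0
    · rw [← h0]; exact norm_nonneg _
    · have : ‖x‖ * ‖x‖ ≤ ‖x‖ * ‖AT (AS x)‖ := by
        calc ‖x‖ * ‖x‖ = ‖x‖ ^ 2 := (sq ‖x‖).symm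
          _ ≤ ‖AS z‖ * ‖AT (AS x)‖ := h2
          _ = ‖x‖ * ‖AT (AS x)‖ := by rw [← hx]
      exact le_of_mul_le_mul_left this h0
  -- AS has dense range
  have hdense : Dense (Set.range (AS : H → H)) := by
    have hinj : ∀ y : H, AS y = 0 → y = 0 := by
      intro y hy
      have hSy : S y = 0 := by
        have : ‖S y‖ = 0 := by rw [← hnS, hy, norm_zero]
        exact norm_eq_zero.mp this
      have : (adjoint T ∘L S) y = y := by rw [hTS]; rfl
      rw [comp_apply, hSy, map_zero] at this
      exact this.symm
    have horth : (LinearMap.range (AS : H →ₗ[ℂ] H))ᗮ = ⊥ := by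
      rw [Submodule.eq_bot_iff]
      intro y hy
      have h1 : (inner ℂ (AS (AS y)) y : ℂ) = 0 :=
        hy (AS (AS y)) (LinearMap.mem_range_self _ _)
      have h2 : (inner ℂ (AS y) (AS y) : ℂ) = 0 := (hASsym (AS y) y).symm.trans h1
      exact hinj y (inner_self_eq_zero.mp h2)
    have hclos : (LinearMap.range (AS : H →ₗ[ℂ] H)).topologicalClosure = ⊤ := by
      rw [← Submodule.orthogonal_orthogonal_eq_closure, horth, Submodule.bot_orthogonal_eq_top]
    have : closure (LinearMap.range (AS : H →ₗ[ℂ] H) : Set H) = Set.univ := by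
      have := congrArg (fun K : Submodule ℂ H => (K : Set H)) hclos
      simpa [Submodule.topologicalClosure_coe] using this
    rw [dense_iff_closure_eq]
    simpa [LinearMap.coe_range] using this
  -- the key inequality everywhere
  have hkey : ∀ x : H, ‖x‖ ≤ ‖AT (AS x)‖ := by
    have hC : IsClosed {x : H | ‖x‖ ≤ ‖AT (AS x)‖} := by
      apply isClosed_le
      · exact continuous_norm
      · exact (AT.continuous.comp AS.continuous).norm
    intro x
    have hsub : Set.range (AS : H → H) ⊆ {x : H | ‖x‖ ≤ ‖AT (AS x)‖} := by
      rintro _ ⟨z, rfl⟩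
      exact hrange z
    have : closure (Set.range (AS : H → H)) ⊆ {x : H | ‖x‖ ≤ ‖AT (AS x)‖} :=
      closure_minimal hsub hC
    exact this (by rw [hdense.closure_eq]; trivial)
  rw [isPositive_def']
  constructor
  · -- self-adjointness
    rw [IsSelfAdjoint, star_sub, star_one]
    congr 1
    simp only [star_eq_adjoint, adjoint_comp, hASsa.adjoint_eq, hATsa.adjoint_eq, comp_assoc]
  · intro x
    have h1 : ((AS ∘L AT ∘L AT ∘L AS - 1) : H →L[ℂ] H).reApplyInnerSelf x
        = ‖AT (AS x)‖ ^ 2 - ‖x‖ ^ 2 := by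
      have hinner : (inner ℂ ((AS ∘L AT ∘L AT ∘L AS) x) x : ℂ)
          = inner ℂ (AT (AS x)) (AT (AS x)) := by
        calc (inner ℂ ((AS ∘L AT ∘L AT ∘L AS) x) x : ℂ)
            = inner ℂ (AS (AT (AT (AS x)))) x := rfl
          _ = inner ℂ (AT (AT (AS x))) (AS x) := hASsym _ _
          _ = inner ℂ (AT (AS x)) (AT (AS x)) := hATsym _ _
      rw [reApplyInnerSelf]
      rw [sub_apply, one_apply_eq_self, inner_sub_left, map_sub, hinner]
      rw [inner_self_eq_norm_sq, inner_self_eq_norm_sq]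
    rw [h1]
    have := hkey x
    nlinarith [norm_nonneg x, norm_nonneg (AT (AS x))]
end

section
/- Let {S_t}_{t≥0} be the right shift semigroup on L²(0,∞), defined by (S_t f)(x) = 0 for x < t and (S_t f)(x) = f(x − t) for x ≥ t. Suppose c : (0,∞) → L²(0,∞) is a measurable map satisfying the additive cocycle relation c(s + t) = c(s) + S_s c(t) for all s, t > 0. Then t ↦ c(t) is continuous in the norm of L²(0,∞). -/
open MeasureTheory Filter Topology Set
open scoped ENNReal

noncomputable section Stmt11Aux

instance : Fact ((2:ℝ≥0∞) ≠ ∞) := ⟨ENNReal.ofNat_ne_top⟩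

abbrev H2 : Type := Lp ℂ 2 (volume : Measure ℝ)
abbrev Hr : Type := Lp ℂ 2 (volume.restrict (Set.Ioi (0:ℝ)))

example : SecondCountableTopology H2 := inferInstance

lemma stmt11_memℒp_ext (v : Hr) :
    MemLp ((Set.Ioi (0:ℝ)).indicator ⇑v) 2 (volume : Measure ℝ) :=
  (memLp_indicator_iff_restrict measurableSet_Ioi).2 (Lp.memLp v)

def extLp (v : Hr) : H2 := (stmt11_memℒp_ext v).toLp _

lemma extLp_coe (v : Hr) : ⇑(extLp v) =ᵐ[volume] (Set.Ioi (0:ℝ)).indicator ⇑v :=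
  (stmt11_memℒp_ext v).coeFn_toLp

lemma stmt11_indicator_ae {f g : ℝ → ℂ} (h : f =ᵐ[volume.restrict (Set.Ioi (0:ℝ))] g) :
    (Set.Ioi (0:ℝ)).indicator f =ᵐ[volume] (Set.Ioi (0:ℝ)).indicator g := by
  rw [Filter.EventuallyEq, ae_restrict_iff' measurableSet_Ioi] at h
  filter_upwards [h] with x hx
  by_cases hx0 : x ∈ Set.Ioi (0:ℝ) <;> simp [Set.indicator_apply, hx0, hx]

lemma norm_extLp (v : Hr) : ‖extLp v‖ = ‖v‖ := by
  rw [extLp, Lp.norm_toLp, eLpNorm_indicator_eq_eLpNorm_restrict measurableSet_Ioi,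
    Lp.norm_def]

lemma extLp_sub (v w : Hr) : extLp (v - w) = extLp v - extLp w := by
  refine Lp.ext ?_
  have h1 : ⇑(extLp (v - w)) =ᵐ[volume] (Set.Ioi (0:ℝ)).indicator (⇑v - ⇑w) :=
    (extLp_coe _).trans (stmt11_indicator_ae (Lp.coeFn_sub v w))
  have h2 : ⇑(extLp v - extLp w) =ᵐ[volume]
      (Set.Ioi (0:ℝ)).indicator ⇑v - (Set.Ioi (0:ℝ)).indicator ⇑w :=
    (Lp.coeFn_sub _ _).trans ((extLp_coe v).sub (extLp_coe w))
  refine h1.trans (Filter.EventuallyEq.trans ?_ h2.symm)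
  refine Filter.EventuallyEq.of_eq ?_
  funext x
  by_cases hx0 : x ∈ Set.Ioi (0:ℝ) <;>
    simp [Set.indicator_apply, hx0]
def trCM (t : ℝ) : C(ℝ, ℝ) := ⟨fun x => x - t, by continuity⟩

lemma trMP (t : ℝ) : MeasurePreserving (⇑(trCM t)) (volume : Measure ℝ) volume :=
  measurePreserving_sub_right volume t

def Tr (t : ℝ) : H2 →+ H2 := Lp.compMeasurePreserving _ (trMP t)

lemma Tr_norm (t : ℝ) (u : H2) : ‖Tr t u‖ = ‖u‖ :=
  Lp.norm_compMeasurePreserving u (trMP t)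

lemma Tr_coe (t : ℝ) (u : H2) : ⇑(Tr t u) =ᵐ[volume] fun x => u (x - t) :=
  Lp.coeFn_compMeasurePreserving u (trMP t)

lemma Tr_zero (u : H2) : Tr 0 u = u := by
  refine Lp.ext ((Tr_coe 0 u).trans ?_)
  refine Filter.EventuallyEq.of_eq (funext fun x => ?_)
  rw [sub_zero]

lemma trCM_continuous : Continuous trCM := by
  refine ContinuousMap.continuous_of_continuous_uncurry _ ?_
  exact continuous_snd.sub continuous_fst

lemma Tr_cont (u : H2) : Tendsto (fun t => Tr t u) (𝓝 (0:ℝ)) (𝓝 u) := by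
  have h := Filter.Tendsto.compMeasurePreservingLp
    (tendsto_const_nhds (x := u)) ((trCM_continuous.tendsto 0))
    trMP (trMP 0) (by norm_num : (2:ℝ≥0∞) ≠ ∞)
  rw [show Lp.compMeasurePreserving (⇑(trCM 0)) (trMP 0) u = Tr 0 u from rfl, Tr_zero] at h
  exact h

local notation "⟪" x ", " y "⟫" => @inner ℂ _ _ x y

lemma stmt11_norm_eq_sqrt_iSup (d : ℕ → H2) (hd : DenseRange d) (x : H2) :
    ‖x‖ = Real.sqrt (⨆ k, (2 * RCLike.re ⟪x, d k⟫ - ‖d k‖^2)) := by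
  have hterm : ∀ k, 2 * RCLike.re ⟪x, d k⟫ - ‖d k‖^2 ≤ ‖x‖^2 := by
    intro k
    have h := norm_sub_sq (𝕜 := ℂ) x (d k)
    nlinarith [sq_nonneg ‖x - d k‖]
  have hbdd : BddAbove (Set.range fun k => 2 * RCLike.re ⟪x, d k⟫ - ‖d k‖^2) := by
    refine ⟨‖x‖^2, ?_⟩
    rintro _ ⟨k, rfl⟩
    exact hterm k
  have h1 : (⨆ k, (2 * RCLike.re ⟪x, d k⟫ - ‖d k‖^2)) = ‖x‖^2 := by
    refine le_antisymm (ciSup_le hterm) ?_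
    refine le_of_forall_pos_le_add fun ε hε => ?_
    obtain ⟨k, hk⟩ := hd.exists_dist_lt x (Real.sqrt_pos.2 hε)
    have hk2 : ‖x - d k‖^2 < ε := by
      have h0 : (0:ℝ) ≤ ‖x - d k‖ := norm_nonneg _
      have : ‖x - d k‖ < Real.sqrt ε := by rwa [dist_eq_norm] at hk
      calc ‖x - d k‖^2 < Real.sqrt ε ^ 2 := by nlinarith [Real.sqrt_nonneg ε]
      _ = ε := Real.sq_sqrt hε.le
    have h := norm_sub_sq (𝕜 := ℂ) x (d k)
    have hle : ‖x‖^2 - ε ≤ 2 * RCLike.re ⟪x, d k⟫ - ‖d k‖^2 := by nlinarith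
    have := le_ciSup hbdd k
    linarith
  rw [h1, Real.sqrt_sq (norm_nonneg x)]

lemma stmt11_stronglyMeasurable {U : ℝ → H2}
    (hU : ∀ g : H2, Measurable fun t => (⟪U t, g⟫ : ℂ)) : StronglyMeasurable U := by
  borelize H2
  refine Measurable.stronglyMeasurable ?_
  have : Nonempty H2 := ⟨0⟩
  set d : ℕ → H2 := TopologicalSpace.denseSeq H2 with hdd
  have hd : DenseRange d := TopologicalSpace.denseRange_denseSeq H2
  -- dist measurability
  have hdist : ∀ v : H2, Measurable fun t => ‖U t - v‖ := by
    intro v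
    have hform : (fun t => ‖U t - v‖) =
        fun t => Real.sqrt (⨆ k, (2 * RCLike.re ⟪U t - v, d k⟫ - ‖d k‖^2)) :=
      funext fun t => stmt11_norm_eq_sqrt_iSup d hd _
    rw [hform]
    refine Real.continuous_sqrt.measurable.comp ?_
    refine Measurable.iSup fun k => ?_
    simp_rw [inner_sub_left]
    exact ((RCLike.measurable_re.comp ((hU (d k)).sub measurable_const)).const_mul 2).sub
      measurable_const
  -- measurable via open sets
  have hball : ∀ (k : ℕ) (r : ℝ), MeasurableSet (U ⁻¹' Metric.ball (d k) r) := by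
    intro k r
    have : U ⁻¹' Metric.ball (d k) r = (fun t => ‖U t - d k‖) ⁻¹' Set.Iio r := by
      ext t; simp [Metric.mem_ball, dist_eq_norm]
    rw [this]
    exact hdist (d k) measurableSet_Iio
  have hopen : ∀ s : Set H2, IsOpen s → MeasurableSet (U ⁻¹' s) := by
    intro s hs
    have hcover : U ⁻¹' s = ⋃ p : {q : ℕ × ℕ // Metric.ball (d q.1) (1/(q.2+1)) ⊆ s},
        U ⁻¹' Metric.ball (d p.1.1) (1/((p.1.2 : ℝ)+1)) := by
      apply Set.Subset.antisymm
      · intro t ht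
        obtain ⟨ε, hε, hball'⟩ := Metric.isOpen_iff.1 hs (U t) ht
        obtain ⟨n, hn⟩ := exists_nat_one_div_lt (half_pos hε)
        obtain ⟨k, hk⟩ := hd.exists_dist_lt (U t) (by positivity : (0:ℝ) < 1/((n:ℝ)+1))
        have hsub : Metric.ball (d k) (1/((n:ℝ)+1)) ⊆ s := by
          refine Set.Subset.trans ?_ hball'
          intro z hz
          have h1 : dist z (U t) ≤ dist z (d k) + dist (d k) (U t) := dist_triangle _ _ _
          have h2 : dist (d k) (U t) < 1/((n:ℝ)+1) := by rwa [dist_comm] at hk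
          have : dist z (U t) < 2/((n:ℝ)+1) := by
            rw [Metric.mem_ball] at hz
            have : (2:ℝ)/((n:ℝ)+1) = 1/((n:ℝ)+1) + 1/((n:ℝ)+1) := by ring
            rw [this]; linarith
          have h3 : (2:ℝ)/((n:ℝ)+1) < ε := by
            have h4 : (1:ℝ)/((n:ℝ)+1) < ε/2 := hn
            have h5 : (2:ℝ)/((n:ℝ)+1) = 2*(1/((n:ℝ)+1)) := by ring
            linarith
          exact Metric.mem_ball.2 (this.trans h3)
        refine Set.mem_iUnion.2 ⟨⟨(k, n), hsub⟩, ?_⟩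
        simpa [Metric.mem_ball, dist_comm] using hk
      · rintro t ht
        obtain ⟨p, hp⟩ := Set.mem_iUnion.1 ht
        exact p.2 hp
    rw [hcover]
    exact MeasurableSet.iUnion fun p => hball p.1.1 _
  exact measurable_generateFrom hopen

lemma stmt11_bounded (ψ : ℝ → ℝ) (hm : Measurable ψ)
    (hsub : ∀ s t : ℝ, 0 < s → 0 < t → ψ (s + t) ≤ ψ s + ψ t) :
    ∃ M : ℝ, ∀ t ∈ Set.Icc (1:ℝ) 3, ψ t ≤ M := by
  set E : ℕ → Set ℝ := fun n => Set.Ioc (0:ℝ) 2 ∩ ψ ⁻¹' Set.Iic (n:ℝ) with hE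
  have hEmeas : ∀ n, MeasurableSet (E n) := fun n =>
    measurableSet_Ioc.inter (hm measurableSet_Iic)
  have hmono : Monotone E := by
    intro n m hnm x hx
    refine ⟨hx.1, Set.mem_preimage.2 ?_⟩
    have h1 : ψ x ≤ (n:ℝ) := hx.2
    have h2 : (n:ℝ) ≤ m := by exact_mod_cast hnm
    exact Set.mem_Iic.2 (h1.trans h2)
  have hunion : (⋃ n, E n) = Set.Ioc (0:ℝ) 2 := by
    apply Set.Subset.antisymm
    · exact Set.iUnion_subset fun n => Set.inter_subset_left
    · intro x hx
      obtain ⟨n, hn⟩ := exists_nat_ge (ψ x)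
      exact Set.mem_iUnion.2 ⟨n, hx, hn⟩
  have htend : Tendsto (fun n => volume (E n)) atTop (𝓝 (ENNReal.ofReal 2)) := by
    have := tendsto_measure_iUnion_atTop (μ := volume) hmono
    rwa [hunion, Real.volume_Ioc, sub_zero] at this
  have hlt : ENNReal.ofReal (15/8) < ENNReal.ofReal 2 := by
    rw [ENNReal.ofReal_lt_ofReal_iff (by norm_num)]; norm_num
  obtain ⟨N, hN⟩ := (htend.eventually (lt_mem_nhds hlt)).exists
  refine ⟨(N:ℝ) + N, fun t ht => ?_⟩
  set B : Set ℝ := (fun x => t - x) ⁻¹' E N with hB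
  have hBmeas : MeasurableSet B := (hEmeas N).preimage (measurable_const.sub measurable_id)
  have hmp : MeasurePreserving (fun x : ℝ => t - x) volume volume := by
    have h := (measurePreserving_add_right (volume : Measure ℝ) t).comp
      (Measure.measurePreserving_neg volume)
    simpa [Function.comp_def, sub_eq_neg_add] using h
  have hBvol : volume B = volume (E N) :=
    hmp.measure_preimage (hEmeas N).nullMeasurableSet
  have hsubU : E N ∪ B ⊆ Set.Icc (min 0 (t-2)) (max 2 t) := by
    rintro x (hx | hx)
    · exact ⟨le_trans (min_le_left _ _) hx.1.1.le, le_trans hx.1.2 (le_max_left _ _)⟩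
    · have h1 : 0 < t - x := hx.1.1
      have h2 : t - x ≤ 2 := hx.1.2
      exact ⟨le_trans (min_le_right _ _) (by linarith), le_trans (by linarith) (le_max_right _ _)⟩
  have hvol3 : volume (Set.Icc (min 0 (t-2)) (max 2 t)) ≤ ENNReal.ofReal 3 := by
    rw [Real.volume_Icc]
    apply ENNReal.ofReal_le_ofReal
    rcases le_total t 2 with h | h
    · rw [max_eq_left h, min_eq_right (by linarith [ht.1])]
      linarith [ht.1]
    · rw [max_eq_right h, min_eq_left (by linarith)]
      linarith [ht.2]
  have hne : (E N ∩ B).Nonempty := by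
    apply nonempty_of_measure_ne_zero (μ := volume)
    intro h0
    have hsum := measure_union_add_inter (μ := volume) (E N) hBmeas
    rw [h0, add_zero, hBvol] at hsum
    have h1 : volume (E N ∪ B) ≤ ENNReal.ofReal 3 :=
      le_trans (measure_mono hsubU) hvol3
    have h2 : ENNReal.ofReal (15/8) + ENNReal.ofReal (15/8) < volume (E N) + volume (E N) :=
      ENNReal.add_lt_add hN hN
    rw [← hsum] at h2
    have h3 := h2.trans_le h1
    rw [← ENNReal.ofReal_add (by norm_num) (by norm_num)] at h3
    rw [ENNReal.ofReal_lt_ofReal_iff (by norm_num)] at h3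
    norm_num at h3
  obtain ⟨s, hs1, hs2⟩ := hne
  have hs2' : t - s ∈ E N := hs2
  have h1 : ψ t ≤ ψ s + ψ (t - s) := by
    have := hsub s (t - s) hs1.1.1 hs2'.1.1
    rwa [add_sub_cancel] at this
  have h2 : ψ s ≤ N := hs1.2
  have h3 : ψ (t - s) ≤ N := hs2'.2
  linarith

/-- Let `{S_t}` be the right shift semigroup on `L²(0,∞)`. If `c : (0,∞) → L²(0,∞)` is weakly
measurable and satisfies the additive cocycle relation `c(s+t) = c(s) + S_s c(t)` for all
`s, t > 0`, then `t ↦ c(t)` is norm continuous on `(0,∞)`. -/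
theorem stmt_11
    (c : ℝ → Lp ℂ 2 (volume.restrict (Set.Ioi (0 : ℝ))))
    (hmeas : ∀ g : Lp ℂ 2 (volume.restrict (Set.Ioi (0 : ℝ))),
      Measurable fun t : ℝ => (inner ℂ (c t) g : ℂ))
    (hcoc : ∀ s t : ℝ, 0 < s → 0 < t →
      (c (s + t) : ℝ → ℂ) =ᵐ[volume.restrict (Set.Ioi (0 : ℝ))]
        fun x => (c s : ℝ → ℂ) x + (if s ≤ x then (c t : ℝ → ℂ) (x - s) else 0)) :
    ContinuousOn c (Set.Ioi 0) := by
  classical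
  set U : ℝ → H2 := fun t => extLp (c t) with hUdef
  -- transfer of weak measurability
  have hinner : ∀ g : H2, Measurable fun τ : ℝ => (inner ℂ (U τ) g : ℂ) := by
    intro g
    have hgr : MemLp (⇑g) 2 (volume.restrict (Set.Ioi (0:ℝ))) := (Lp.memLp g).restrict _
    have hkey : (fun τ : ℝ => (inner ℂ (U τ) g : ℂ))
        = fun τ => (inner ℂ (c τ) (hgr.toLp ⇑g) : ℂ) := by
      funext τ
      rw [MeasureTheory.L2.inner_def, MeasureTheory.L2.inner_def]
      have h1 : (fun x => (inner ℂ ((U τ : ℝ → ℂ) x) ((g : ℝ → ℂ) x) : ℂ)) =ᵐ[volume]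
          (Set.Ioi (0:ℝ)).indicator
            (fun x => (inner ℂ ((c τ : ℝ → ℂ) x) ((g : ℝ → ℂ) x) : ℂ)) := by
        filter_upwards [extLp_coe (c τ)] with x hx
        rw [hx]
        by_cases h : x ∈ Set.Ioi (0:ℝ) <;> simp [Set.indicator_apply, h]
      rw [integral_congr_ae h1, integral_indicator measurableSet_Ioi]
      refine integral_congr_ae ?_
      filter_upwards [hgr.coeFn_toLp] with x hx
      rw [hx]
    rw [hkey]
    exact hmeas _
  have hSM : StronglyMeasurable U := stmt11_stronglyMeasurable hinner
  -- cocycle identity in L²(ℝ)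
  have hUcoc : ∀ s t : ℝ, 0 < s → 0 < t → U (s + t) = U s + Tr s (U t) := by
    intro s t hs ht
    refine Lp.ext ?_
    have h2 : ⇑(U (s+t)) =ᵐ[volume] (Set.Ioi (0:ℝ)).indicator
        (fun x => (c s : ℝ → ℂ) x + (if s ≤ x then (c t : ℝ → ℂ) (x - s) else 0)) :=
      (extLp_coe _).trans (stmt11_indicator_ae (hcoc s t hs ht))
    have hqmp := (measurePreserving_sub_right (volume : Measure ℝ) s).quasiMeasurePreserving
    have hd : ∀ᵐ x ∂(volume : Measure ℝ),
        (U t : ℝ → ℂ) (x - s) = (Set.Ioi (0:ℝ)).indicator (⇑(c t)) (x - s) := by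
      have := hqmp.ae_eq_comp (extLp_coe (c t))
      simp only [Function.comp_def] at this
      exact this
    have h3 : ⇑(U s + Tr s (U t)) =ᵐ[volume] fun x =>
        (Set.Ioi (0:ℝ)).indicator (⇑(c s)) x + (Set.Ioi (0:ℝ)).indicator (⇑(c t)) (x - s) := by
      filter_upwards [Lp.coeFn_add (U s) (Tr s (U t)), extLp_coe (c s), Tr_coe s (U t), hd]
        with x ha hb hc hdx
      rw [ha, Pi.add_apply, hb, hc, hdx]
    have hns : ∀ᵐ x ∂(volume : Measure ℝ), x ≠ s := by
      rw [ae_iff]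
      have : {x : ℝ | ¬ x ≠ s} = {s} := by ext x; simp [not_not]
      rw [this]
      exact measure_singleton s
    have h4 : (Set.Ioi (0:ℝ)).indicator
        (fun x => (c s : ℝ → ℂ) x + (if s ≤ x then (c t : ℝ → ℂ) (x - s) else 0))
        =ᵐ[volume] fun x =>
        (Set.Ioi (0:ℝ)).indicator (⇑(c s)) x + (Set.Ioi (0:ℝ)).indicator (⇑(c t)) (x - s) := by
      filter_upwards [hns] with x hx
      rcases le_or_gt x 0 with h0 | h0
      · have e1 : x ∉ Set.Ioi (0:ℝ) := by simpa using not_lt.2 h0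
        have e2 : x - s ∉ Set.Ioi (0:ℝ) := by
          simp only [Set.mem_Ioi, not_lt]; linarith
        rw [Set.indicator_of_notMem e1, Set.indicator_of_notMem e1,
          Set.indicator_of_notMem e2, add_zero]
      · have e1 : x ∈ Set.Ioi (0:ℝ) := h0
        rw [Set.indicator_of_mem e1, Set.indicator_of_mem e1]
        congr 1
        by_cases hsx : s ≤ x
        · have hxs : x - s ∈ Set.Ioi (0:ℝ) := by
            have : s < x := lt_of_le_of_ne hsx (Ne.symm hx)
            simp only [Set.mem_Ioi]; linarith
          rw [if_pos hsx, Set.indicator_of_mem hxs]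
        · have hxs : x - s ∉ Set.Ioi (0:ℝ) := by
            simp only [Set.mem_Ioi, not_lt]
            linarith [le_of_not_ge hsx]
          rw [if_neg hsx, Set.indicator_of_notMem hxs]
    exact h2.trans (h4.trans h3.symm)
  -- boundedness of t ↦ ‖U t‖ on [1,3]
  have hψm : Measurable fun t => ‖U t‖ := hSM.norm.measurable
  have hψsub : ∀ s t : ℝ, 0 < s → 0 < t → ‖U (s+t)‖ ≤ ‖U s‖ + ‖U t‖ := by
    intro s t hs ht
    rw [hUcoc s t hs ht]
    refine le_trans (norm_add_le _ _) ?_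
    rw [Tr_norm]
  obtain ⟨M, hM⟩ := stmt11_bounded _ hψm hψsub
  have hMnonneg : 0 ≤ M := le_trans (norm_nonneg (U 1)) (hM 1 (by norm_num))
  have hIntIcc : IntegrableOn U (Set.Icc (1:ℝ) 3) volume := by
    refine Integrable.mono' (g := fun _ => M)
      (integrableOn_const (by rw [Real.volume_Icc]; exact ENNReal.ofReal_ne_top))
      hSM.aestronglyMeasurable ?_
    exact (ae_restrict_iff' measurableSet_Icc).2 (ae_of_all _ fun a ha => hM a ha)
  have hInt12 : IntegrableOn U (Set.Ioc (1:ℝ) 2) volume :=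
    hIntIcc.mono_set (fun x hx => ⟨hx.1.le, hx.2.trans (by norm_num)⟩)
  have hTrSM : ∀ t : ℝ, StronglyMeasurable fun a => Tr t (U a) := fun t =>
    (Lp.isometry_compMeasurePreserving (trMP t)).continuous.comp_stronglyMeasurable hSM
  -- key estimate
  have hkey : ∀ t ∈ Set.Ioo (0:ℝ) 1,
      ‖U t‖ ≤ 2*M*t + ∫ a in Set.Ioc (1:ℝ) 2, ‖U a - Tr t (U a)‖ := by
    intro t ht
    obtain ⟨ht0, ht1⟩ := ht
    have hb1 : ∀ a ∈ Set.Ioc (1:ℝ) 2, ‖U (t + a)‖ ≤ M := fun a ha =>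
      hM (t + a) ⟨by linarith [ha.1], by linarith [ha.2]⟩
    have hvol : volume (Set.Ioc (1:ℝ) 2) < ⊤ := by
      rw [Real.volume_Ioc]; exact ENNReal.ofReal_lt_top
    have hi1 : IntegrableOn (fun a => U (t + a)) (Set.Ioc (1:ℝ) 2) volume := by
      refine Integrable.mono' (g := fun _ => M) (integrableOn_const hvol.ne)
        ((hSM.comp_measurable (measurable_const_add t)).aestronglyMeasurable) ?_
      exact (ae_restrict_iff' measurableSet_Ioc).2 (ae_of_all _ hb1)
    have hi2 : IntegrableOn (fun a => Tr t (U a)) (Set.Ioc (1:ℝ) 2) volume := by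
      refine Integrable.mono' (g := fun _ => M) (integrableOn_const hvol.ne)
        ((hTrSM t).aestronglyMeasurable) ?_
      refine (ae_restrict_iff' measurableSet_Ioc).2 (ae_of_all _ fun a ha => ?_)
      rw [Tr_norm]
      exact hM a ⟨ha.1.le, by linarith [ha.2]⟩
    have e1 : (∫ a in Set.Ioc (1:ℝ) 2, (U (t + a) - Tr t (U a))) = U t := by
      have heq : Set.EqOn (fun a => U (t + a) - Tr t (U a)) (fun _ => U t)
          (Set.Ioc (1:ℝ) 2) := by
        intro a ha
        simp only
        rw [hUcoc t a ht0 (by linarith [ha.1])]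
        abel
      rw [setIntegral_congr_fun measurableSet_Ioc heq, setIntegral_const, measureReal_def, Real.volume_Ioc]
      norm_num
    have e2 : (∫ a in Set.Ioc (1:ℝ) 2, (U (t + a) - Tr t (U a)))
        = (∫ a in Set.Ioc (1:ℝ) 2, U (t + a)) - ∫ a in Set.Ioc (1:ℝ) 2, Tr t (U a) :=
      integral_sub hi1 hi2
    have e3 : (∫ a in Set.Ioc (1:ℝ) 2, U (t + a)) = ∫ a in Set.Ioc (1+t) (2+t), U a := by
      rw [← integral_indicator measurableSet_Ioc, ← integral_indicator measurableSet_Ioc]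
      have hind : (Set.Ioc (1:ℝ) 2).indicator (fun a => U (t + a))
          = fun a => (Set.Ioc (1+t) (2+t)).indicator U (a + t) := by
        funext a
        by_cases h : a ∈ Set.Ioc (1:ℝ) 2
        · have h' : a + t ∈ Set.Ioc (1+t) (2+t) :=
            ⟨by linarith [h.1], by linarith [h.2]⟩
          rw [Set.indicator_of_mem h, Set.indicator_of_mem h', add_comm]
        · have h' : a + t ∉ Set.Ioc (1+t) (2+t) := by
            intro hmem
            exact h ⟨by linarith [hmem.1], by linarith [hmem.2]⟩
          rw [Set.indicator_of_notMem h, Set.indicator_of_notMem h']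
      rw [hind, integral_add_right_eq_self]
    have hIntBig : IntegrableOn U (Set.Ioc (1:ℝ) (2+t)) volume :=
      hIntIcc.mono_set (fun x hx => ⟨hx.1.le, hx.2.trans (by linarith)⟩)
    have hsplitA : (∫ a in Set.Ioc (1:ℝ) (1+t), U a) + (∫ a in Set.Ioc (1+t) (2+t), U a)
        = ∫ a in Set.Ioc (1:ℝ) (2+t), U a := by
      rw [← setIntegral_union (Set.Ioc_disjoint_Ioc_of_le le_rfl) measurableSet_Ioc
        (hIntBig.mono_set (Set.Ioc_subset_Ioc_right (by linarith)))
        (hIntBig.mono_set (Set.Ioc_subset_Ioc_left (by linarith))),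
        Set.Ioc_union_Ioc_eq_Ioc (by linarith) (by linarith)]
    have hsplitB : (∫ a in Set.Ioc (1:ℝ) 2, U a) + (∫ a in Set.Ioc (2:ℝ) (2+t), U a)
        = ∫ a in Set.Ioc (1:ℝ) (2+t), U a := by
      rw [← setIntegral_union (Set.Ioc_disjoint_Ioc_of_le le_rfl) measurableSet_Ioc
        (hIntBig.mono_set (Set.Ioc_subset_Ioc_right (by linarith)))
        (hIntBig.mono_set (Set.Ioc_subset_Ioc_left (by linarith))),
        Set.Ioc_union_Ioc_eq_Ioc (by linarith) (by linarith)]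
    have e5 : U t = ((∫ a in Set.Ioc (2:ℝ) (2+t), U a) - (∫ a in Set.Ioc (1:ℝ) (1+t), U a))
        + ∫ a in Set.Ioc (1:ℝ) 2, (U a - Tr t (U a)) := by
      have e6 : (∫ a in Set.Ioc (1:ℝ) 2, (U a - Tr t (U a)))
          = (∫ a in Set.Ioc (1:ℝ) 2, U a) - ∫ a in Set.Ioc (1:ℝ) 2, Tr t (U a) :=
        integral_sub hInt12 hi2
      have e7 : (∫ a in Set.Ioc (1+t) (2+t), U a)
          = (∫ a in Set.Ioc (2:ℝ) (2+t), U a) - (∫ a in Set.Ioc (1:ℝ) (1+t), U a)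
            + ∫ a in Set.Ioc (1:ℝ) 2, U a := by
        have h := hsplitA.trans hsplitB.symm
        rw [eq_sub_of_add_eq' h]; abel
      rw [e6, ← e1, e2, e3, e7]; abel
    have hb2 : ‖∫ a in Set.Ioc (2:ℝ) (2+t), U a‖ ≤ M * t := by
      have hs : volume (Set.Ioc (2:ℝ) (2+t)) < ⊤ := by
        rw [Real.volume_Ioc]; exact ENNReal.ofReal_lt_top
      have := norm_setIntegral_le_of_norm_le_const (μ := volume) hs
        (fun x hx => hM x ⟨by linarith [hx.1], by linarith [hx.2]⟩)
      rwa [measureReal_def, Real.volume_Ioc, show (2:ℝ)+t-2 = t by ring,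
        ENNReal.toReal_ofReal ht0.le] at this
    have hb3 : ‖∫ a in Set.Ioc (1:ℝ) (1+t), U a‖ ≤ M * t := by
      have hs : volume (Set.Ioc (1:ℝ) (1+t)) < ⊤ := by
        rw [Real.volume_Ioc]; exact ENNReal.ofReal_lt_top
      have := norm_setIntegral_le_of_norm_le_const (μ := volume) hs
        (fun x hx => hM x ⟨by linarith [hx.1], by linarith [hx.2]⟩)
      rwa [measureReal_def, Real.volume_Ioc, show (1:ℝ)+t-1 = t by ring,
        ENNReal.toReal_ofReal ht0.le] at this
    calc ‖U t‖ ≤ ‖(∫ a in Set.Ioc (2:ℝ) (2+t), U a) - (∫ a in Set.Ioc (1:ℝ) (1+t), U a)‖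
          + ‖∫ a in Set.Ioc (1:ℝ) 2, (U a - Tr t (U a))‖ := by rw [e5]; exact norm_add_le _ _
      _ ≤ (‖∫ a in Set.Ioc (2:ℝ) (2+t), U a‖ + ‖∫ a in Set.Ioc (1:ℝ) (1+t), U a‖)
          + ∫ a in Set.Ioc (1:ℝ) 2, ‖U a - Tr t (U a)‖ :=
        add_le_add (norm_sub_le _ _) (norm_integral_le_integral_norm _)
      _ ≤ (M*t + M*t) + ∫ a in Set.Ioc (1:ℝ) 2, ‖U a - Tr t (U a)‖ :=
        add_le_add (add_le_add hb2 hb3) le_rfl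
      _ = 2*M*t + ∫ a in Set.Ioc (1:ℝ) 2, ‖U a - Tr t (U a)‖ := by ring
  -- the error integral tends to 0
  have hG : Tendsto (fun t => ∫ a in Set.Ioc (1:ℝ) 2, ‖U a - Tr t (U a)‖)
      (𝓝[>] (0:ℝ)) (𝓝 0) := by
    have h0 : Tendsto (fun t => ∫ a in Set.Ioc (1:ℝ) 2, ‖U a - Tr t (U a)‖)
        (𝓝[>] (0:ℝ)) (𝓝 (∫ _ in Set.Ioc (1:ℝ) 2, (0:ℝ))) := by
      refine tendsto_integral_filter_of_dominated_convergence (fun a => 2 * ‖U a‖)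
        ?_ ?_ ?_ ?_
      · exact Filter.Eventually.of_forall fun t =>
          ((hSM.sub (hTrSM t)).norm).aestronglyMeasurable
      · refine Filter.Eventually.of_forall fun t => ae_of_all _ fun a => ?_
        rw [norm_norm]
        refine le_trans (norm_sub_le _ _) ?_
        rw [Tr_norm]
        ring_nf
        exact le_rfl
      · exact (hInt12.norm.const_mul 2)
      · refine ae_of_all _ fun a => ?_
        have h1 : Tendsto (fun t => Tr t (U a)) (𝓝[>] (0:ℝ)) (𝓝 (U a)) :=
          (Tr_cont (U a)).mono_left nhdsWithin_le_nhds
        have h2 : Tendsto (fun t => U a - Tr t (U a)) (𝓝[>] (0:ℝ)) (𝓝 (U a - U a)) :=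
          tendsto_const_nhds.sub h1
        rw [sub_self] at h2
        simpa using h2.norm
    simpa using h0
  -- conclude : ‖U t‖ → 0 as t → 0⁺
  have hnorm0 : Tendsto (fun t => ‖U t‖) (𝓝[>] (0:ℝ)) (𝓝 0) := by
    have h1 : Tendsto (fun t : ℝ => 2*M*t) (𝓝[>] (0:ℝ)) (𝓝 0) := by
      have h : Continuous fun t : ℝ => 2*M*t := continuous_const.mul continuous_id
      have h2 := (h.tendsto 0).mono_left (nhdsWithin_le_nhds (s := Set.Ioi (0:ℝ)))
      simpa using h2
    have hlin : Tendsto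
        (fun t : ℝ => 2*M*t + ∫ a in Set.Ioc (1:ℝ) 2, ‖U a - Tr t (U a)‖)
        (𝓝[>] (0:ℝ)) (𝓝 0) := by
      simpa using h1.add hG
    refine squeeze_zero' ?_ ?_ hlin
    · exact Filter.Eventually.of_forall fun t => norm_nonneg _
    · have hmem : Set.Ioo (0:ℝ) 1 ∈ 𝓝[>] (0:ℝ) := by
        refine mem_nhdsWithin.2 ⟨Set.Iio 1, isOpen_Iio, by norm_num, ?_⟩
        rintro x ⟨hx1, hx2⟩
        exact ⟨hx2, hx1⟩
      filter_upwards [hmem] with t ht using hkey t ht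
  -- distance identity
  have hdistc : ∀ s u : ℝ, 0 < s → 0 < u → dist (c (s + u)) (c s) = ‖U u‖ := by
    intro s u hs hu
    have hTrU : U (s+u) - U s = Tr s (U u) := by
      rw [hUcoc s u hs hu]; abel
    calc dist (c (s+u)) (c s) = ‖c (s+u) - c s‖ := dist_eq_norm _ _
      _ = ‖extLp (c (s+u) - c s)‖ := (norm_extLp _).symm
      _ = ‖U (s+u) - U s‖ := by rw [extLp_sub]
      _ = ‖Tr s (U u)‖ := by rw [hTrU]
      _ = ‖U u‖ := Tr_norm _ _
  -- final continuity argument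
  intro t ht
  rw [ContinuousWithinAt, Metric.tendsto_nhdsWithin_nhds]
  intro ε hε
  obtain ⟨δ, hδ, hsmall⟩ := Metric.tendsto_nhdsWithin_nhds.1 hnorm0 ε hε
  refine ⟨δ, hδ, fun {t'} ht' hd => ?_⟩
  have habs : ∀ u : ℝ, 0 < u → dist u 0 < δ → ‖U u‖ < ε := by
    intro u hu hud
    have := hsmall (Set.mem_Ioi.2 hu) hud
    rwa [Real.dist_0_eq_abs, abs_of_nonneg (norm_nonneg _)] at this
  rcases lt_trichotomy t' t with h | h | h
  · have h1 : dist (c (t' + (t - t'))) (c t') = ‖U (t - t')‖ :=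
      hdistc t' (t - t') ht' (by linarith)
    rw [show t' + (t - t') = t by ring] at h1
    rw [dist_comm, h1]
    refine habs (t - t') (by linarith) ?_
    rw [Real.dist_0_eq_abs, abs_of_pos (by linarith : (0:ℝ) < t - t')]
    rw [Real.dist_eq] at hd
    rw [abs_sub_comm] at hd
    calc t - t' ≤ |t - t'| := le_abs_self _
      _ < δ := hd
  · rw [h]
    simpa using hε
  · have h1 : dist (c (t + (t' - t))) (c t) = ‖U (t' - t)‖ :=
      hdistc t (t' - t) ht (by linarith)
    rw [show t + (t' - t) = t' by ring] at h1
    rw [h1]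
    refine habs (t' - t) (by linarith) ?_
    rw [Real.dist_0_eq_abs, abs_of_pos (by linarith : (0:ℝ) < t' - t)]
    rw [Real.dist_eq] at hd
    calc t' - t ≤ |t' - t| := le_abs_self _
      _ < δ := hd
end Stmt11Aux
end

section
/- Let φ : (0,∞) → [0,∞) be a measurable function supported in (0,1) with ∫₀¹ φ(x) dx < ∞ and ∫₀¹ x φ(x)² dx < ∞. Then ∫₀¹ x (∫₀¹ φ(x + t) φ(t) dt)² dx ≤ (∫₀¹ φ(t) dt)² · ∫₀¹ x φ(x)² dx. In particular the left-hand side is finite. -/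
open MeasureTheory
open scoped ENNReal

lemma sqrt_sq_ennreal (a : ℝ≥0∞) : (a ^ (1/2:ℝ)) ^ 2 = a := by
  rw [← ENNReal.rpow_natCast (a ^ (1/2:ℝ)), ← ENNReal.rpow_mul]
  norm_num

lemma half_mul_half (a : ℝ≥0∞) : a ^ (1/2:ℝ) * a ^ (1/2:ℝ) = a := by
  rw [← ENNReal.rpow_add_of_nonneg _ _ (by norm_num) (by norm_num)]
  norm_num

lemma cs_aux {α : Type*} [MeasurableSpace α] (μ : Measure α) (f g : α → ℝ≥0∞)
    (hf : AEMeasurable f μ) (hg : AEMeasurable g μ) :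
    (∫⁻ t, f t * g t ∂μ) ^ 2 ≤ (∫⁻ t, f t ^ 2 ∂μ) * ∫⁻ t, g t ^ 2 ∂μ := by
  have h2 : Real.HolderConjugate 2 2 := Real.HolderConjugate.two_two
  have key := ENNReal.lintegral_mul_le_Lp_mul_Lq μ h2 hf hg
  have hsq : ∀ h : α → ℝ≥0∞, (∫⁻ t, h t ^ (2:ℝ) ∂μ) = ∫⁻ t, h t ^ 2 ∂μ := by
    intro h; apply lintegral_congr; intro t; rw [← ENNReal.rpow_natCast]; norm_num
  calc (∫⁻ t, f t * g t ∂μ) ^ 2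
      ≤ ((∫⁻ t, f t ^ (2:ℝ) ∂μ) ^ (1/2:ℝ) * (∫⁻ t, g t ^ (2:ℝ) ∂μ) ^ (1/2:ℝ)) ^ 2 :=
        pow_le_pow_left' (by simpa [Pi.mul_apply] using key) 2
    _ = (∫⁻ t, f t ^ 2 ∂μ) * ∫⁻ t, g t ^ 2 ∂μ := by
        rw [mul_pow, sqrt_sq_ennreal, sqrt_sq_ennreal, hsq, hsq]

/-- For a nonnegative measurable `φ` supported in `(0,1)` with `∫₀¹ φ < ∞` and
`∫₀¹ x φ(x)² dx < ∞`, one has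
`∫₀¹ x (∫₀¹ φ(x+t) φ(t) dt)² dx ≤ (∫₀¹ φ)² ∫₀¹ x φ(x)² dx`; in particular the left-hand
side is finite. -/
theorem stmt_13 (φ : ℝ → ℝ) (hmeas : Measurable φ) (hpos : ∀ x : ℝ, 0 ≤ φ x)
    (hsupp : ∀ x : ℝ, x ∉ Set.Ioo (0 : ℝ) 1 → φ x = 0)
    (hL1 : (∫⁻ x in Set.Ioo (0 : ℝ) 1, ENNReal.ofReal (φ x)) < ⊤)
    (hL2w : (∫⁻ x in Set.Ioo (0 : ℝ) 1, ENNReal.ofReal (x * φ x ^ 2)) < ⊤) :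
    (∫⁻ x in Set.Ioo (0 : ℝ) 1,
        ENNReal.ofReal (x * (∫ t in Set.Ioo (0 : ℝ) 1, φ (x + t) * φ t) ^ 2))
      ≤ (∫⁻ t in Set.Ioo (0 : ℝ) 1, ENNReal.ofReal (φ t)) ^ 2 *
        ∫⁻ x in Set.Ioo (0 : ℝ) 1, ENNReal.ofReal (x * φ x ^ 2) := by
  set I := Set.Ioo (0 : ℝ) 1 with hI
  set Φ : ℝ → ℝ≥0∞ := fun y => ENNReal.ofReal (φ y) with hΦ
  have hΦm : Measurable Φ := hmeas.ennreal_ofReal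
  set C : ℝ≥0∞ := ∫⁻ t in I, Φ t with hC
  set g : ℝ → ℝ≥0∞ := fun y => ENNReal.ofReal y * Φ y ^ 2 with hg
  have hgm : Measurable g := (measurable_id.ennreal_ofReal).mul (hΦm.pow_const 2)
  have hg_eq : ∀ y : ℝ, ENNReal.ofReal (y * φ y ^ 2) = g y := by
    intro y
    rcases le_or_gt 0 y with hy | hy
    · rw [ENNReal.ofReal_mul hy, ENNReal.ofReal_pow (hpos y)]
    · have h1 : ENNReal.ofReal y = 0 := ENNReal.ofReal_of_nonpos hy.le
      have h2 : y * φ y ^ 2 ≤ 0 := mul_nonpos_of_nonpos_of_nonneg hy.le (sq_nonneg _)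
      simp [hg, h1, ENNReal.ofReal_of_nonpos h2]
  set D : ℝ≥0∞ := ∫⁻ x in I, ENNReal.ofReal (x * φ x ^ 2) with hD
  have hD_eq : D = ∫⁻ x in I, g x := lintegral_congr fun x => hg_eq x
  -- the inner kernel
  set k : ℝ → ℝ → ℝ≥0∞ := fun x t => ENNReal.ofReal x * (Φ (x + t) ^ 2 * Φ t) with hk
  have hkm : Measurable (Function.uncurry k) := by
    refine Measurable.mul (f := fun p : ℝ × ℝ => ENNReal.ofReal p.1)
      (g := fun p : ℝ × ℝ => Φ (p.1 + p.2) ^ 2 * Φ p.2) ?_ ?_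
    · exact (measurable_fst.ennreal_ofReal)
    · exact ((hΦm.comp (measurable_fst.add measurable_snd)).pow_const 2).mul
        (hΦm.comp measurable_snd)
  have hA : Measurable fun x => ∫⁻ t in I, Φ (x + t) ^ 2 * Φ t := by
    apply Measurable.lintegral_prod_right'
      (f := fun p : ℝ × ℝ => Φ (p.1 + p.2) ^ 2 * Φ p.2)
    exact ((hΦm.comp (measurable_fst.add measurable_snd)).pow_const 2).mul
      (hΦm.comp measurable_snd)
  -- pointwise bound via Cauchy-Schwarz
  have hpt : ∀ x ∈ I, ENNReal.ofReal (x * (∫ t in I, φ (x + t) * φ t) ^ 2)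
      ≤ ENNReal.ofReal x * ((∫⁻ t in I, Φ (x + t) ^ 2 * Φ t) * C) := by
    intro x hx
    set F : ℝ := ∫ t in I, φ (x + t) * φ t with hF
    have hF0 : 0 ≤ F := integral_nonneg fun t => mul_nonneg (hpos _) (hpos _)
    have step1 : ENNReal.ofReal F ≤ ∫⁻ t in I, Φ (x + t) * Φ t := by
      have hm1 : Measurable fun t : ℝ => φ (x + t) * φ t :=
        (hmeas.comp (measurable_id.const_add x)).mul hmeas
      have heq : F = (∫⁻ t in I, ENNReal.ofReal (φ (x + t) * φ t)).toReal := by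
        rw [hF, integral_eq_lintegral_of_nonneg_ae
          (Filter.Eventually.of_forall fun t => mul_nonneg (hpos _) (hpos _))
          hm1.aestronglyMeasurable]
      have heq2 : (∫⁻ t in I, ENNReal.ofReal (φ (x + t) * φ t))
          = ∫⁻ t in I, Φ (x + t) * Φ t :=
        lintegral_congr fun t => ENNReal.ofReal_mul (hpos _)
      rw [heq, heq2]
      exact ENNReal.ofReal_toReal_le
    have cs : (∫⁻ t in I, Φ (x + t) * Φ t) ^ 2
        ≤ (∫⁻ t in I, Φ (x + t) ^ 2 * Φ t) * C := by
      have h1 : (∫⁻ t in I, Φ (x + t) * Φ t)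
          = ∫⁻ t in I, (Φ (x + t) * Φ t ^ (1/2:ℝ)) * Φ t ^ (1/2:ℝ) := by
        apply lintegral_congr; intro t
        rw [mul_assoc, half_mul_half]
      have hm2 : Measurable fun t : ℝ => Φ (x + t) * Φ t ^ (1/2:ℝ) :=
        (hΦm.comp (measurable_id.const_add x)).mul (hΦm.pow_const _)
      have h2 := cs_aux (volume.restrict I)
        (fun t => Φ (x + t) * Φ t ^ (1/2:ℝ)) (fun t => Φ t ^ (1/2:ℝ))
        hm2.aemeasurable ((hΦm.pow_const _).aemeasurable)
      rw [h1]
      refine h2.trans (le_of_eq ?_)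
      congr 1
      · apply lintegral_congr; intro t
        rw [mul_pow, sqrt_sq_ennreal]
      · exact lintegral_congr fun t => sqrt_sq_ennreal _
    calc ENNReal.ofReal (x * F ^ 2)
        = ENNReal.ofReal x * ENNReal.ofReal F ^ 2 := by
          rw [ENNReal.ofReal_mul hx.1.le, ENNReal.ofReal_pow hF0]
      _ ≤ ENNReal.ofReal x * ((∫⁻ t in I, Φ (x + t) ^ 2 * Φ t) * C) := by
          exact mul_le_mul_right ((pow_le_pow_left' step1 2).trans cs) _
  -- integrate the pointwise bound
  calc (∫⁻ x in I, ENNReal.ofReal (x * (∫ t in I, φ (x + t) * φ t) ^ 2))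
      ≤ ∫⁻ x in I, ENNReal.ofReal x * ((∫⁻ t in I, Φ (x + t) ^ 2 * Φ t) * C) :=
        setLIntegral_mono ((measurable_id.ennreal_ofReal.mul (hA.mul_const C))) hpt
    _ = (∫⁻ x in I, ∫⁻ t in I, k x t) * C := by
        have hxA : Measurable fun x : ℝ =>
            ENNReal.ofReal x * ∫⁻ t in I, Φ (x + t) ^ 2 * Φ t :=
          measurable_id.ennreal_ofReal.mul hA
        have e1 : ∫⁻ x in I, ENNReal.ofReal x * ((∫⁻ t in I, Φ (x + t) ^ 2 * Φ t) * C)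
            = ∫⁻ x in I, (ENNReal.ofReal x * ∫⁻ t in I, Φ (x + t) ^ 2 * Φ t) * C :=
          lintegral_congr fun x => by ring
        rw [e1, lintegral_mul_const C hxA]
        congr 1
        apply lintegral_congr; intro x
        have hm3 : Measurable fun t : ℝ => Φ (x + t) ^ 2 * Φ t :=
          ((hΦm.comp (measurable_id.const_add x)).pow_const 2).mul hΦm
        exact (lintegral_const_mul _ hm3).symm
    _ = (∫⁻ t in I, ∫⁻ x in I, k x t) * C := by
        congr 1
        exact lintegral_lintegral_swap hkm.aemeasurable
    _ ≤ (∫⁻ t in I, Φ t * D) * C := by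
        apply mul_le_mul_left
        apply setLIntegral_mono (hΦm.mul_const D)
        intro t ht
        have hm4 : Measurable fun x : ℝ => ENNReal.ofReal x * Φ (x + t) ^ 2 :=
          (measurable_id.ennreal_ofReal).mul
            ((hΦm.comp (measurable_add_const t)).pow_const 2)
        have step : (∫⁻ x in I, k x t) = Φ t * ∫⁻ x in I, ENNReal.ofReal x * Φ (x + t) ^ 2 := by
          rw [← lintegral_const_mul _ hm4]
          apply lintegral_congr; intro x
          simp only [hk]; ring
        rw [step]
        apply mul_le_mul_right
        calc (∫⁻ x in I, ENNReal.ofReal x * Φ (x + t) ^ 2)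
            ≤ ∫⁻ x in I, g (x + t) := by
              apply setLIntegral_mono
                (show Measurable fun x : ℝ => g (x + t) from hgm.comp (measurable_add_const t))
              intro x hx
              have hxt : x ≤ x + t := by linarith [ht.1]
              exact mul_le_mul_left (ENNReal.ofReal_le_ofReal hxt) _
          _ ≤ ∫⁻ x, g (x + t) := setLIntegral_le_lintegral _ _
          _ = ∫⁻ y, g y := lintegral_add_right_eq_self g t
          _ = ∫⁻ y in I, g y := by
              rw [← lintegral_indicator measurableSet_Ioo g]
              apply lintegral_congr; intro y
              by_cases hy : y ∈ I
              · rw [Set.indicator_of_mem hy]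
              · rw [Set.indicator_of_notMem hy]
                have : φ y = 0 := hsupp y hy
                simp [hg, hΦ, this]
          _ = D := hD_eq.symm
    _ = C ^ 2 * D := by
        rw [lintegral_mul_const D hΦm, ← hC]; ring
end

section
/- Let k : (0,∞)² → ℂ be a measurable function and a > 0 a constant with C := ∫₀^∞ ∫₀^∞ |e^{−as} k(s, u)|² ds du < ∞. Let w ∈ ℂ with Re w > a. Then the function h(x) = ∫₀ˣ e^{−sw} k(s, x − s) ds is well defined for almost every x > 0, belongs to L²(0,∞), and satisfies ‖h‖²_{L²(0,∞)} ≤ C / (2(Re w − a)). -/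
open MeasureTheory Set
open scoped ENNReal NNReal

private lemma aux_shift (s : ℝ) (g : ℝ → ℝ≥0∞) :
    ∫⁻ x in Ioi s, g (x - s) = ∫⁻ u in Ioi (0:ℝ), g u := by
  have h := (measurePreserving_add_right (volume : Measure ℝ) s).setLIntegral_comp_emb
    (measurableEmbedding_addRight s) (fun x => g (x - s)) (Ioi 0)
  rw [Set.image_add_const_Ioi, zero_add] at h
  rw [← h]
  exact (setLIntegral_congr_fun measurableSet_Ioi
    (fun u _ => by simp)).symm

/-- Let `k` be measurable on `(0,∞)²` with `C = ∫∫ |e^{-as} k(s,u)|² ds du < ∞` and let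
`w ∈ ℂ` with `Re w > a`. Then `h(x) = ∫₀ˣ e^{-sw} k(s, x-s) ds` is well defined for a.e.
`x > 0`, belongs to `L²(0,∞)`, and `‖h‖² ≤ C / (2 (Re w - a))`. -/
theorem stmt_16 (k : ℝ → ℝ → ℂ) (hk : Measurable fun p : ℝ × ℝ => k p.1 p.2)
    (a : ℝ) (ha : 0 < a) (C : ℝ) (hC0 : 0 ≤ C)
    (hC : (∫⁻ s in Set.Ioi (0 : ℝ), ∫⁻ u in Set.Ioi (0 : ℝ),
        (‖(Real.exp (-(a * s)) : ℂ) * k s u‖₊ : ℝ≥0∞) ^ 2) = ENNReal.ofReal C)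
    (w : ℂ) (hw : a < w.re) :
    (∀ᵐ x ∂volume.restrict (Set.Ioi (0 : ℝ)),
        IntegrableOn (fun s : ℝ => Complex.exp (-((s : ℂ) * w)) * k s (x - s))
          (Set.Ioo 0 x) volume) ∧
    MemLp (fun x : ℝ => ∫ s in Set.Ioo (0 : ℝ) x, Complex.exp (-((s : ℂ) * w)) * k s (x - s))
      2 (volume.restrict (Set.Ioi (0 : ℝ))) ∧
    (∫ x in Set.Ioi (0 : ℝ),
        ‖∫ s in Set.Ioo (0 : ℝ) x, Complex.exp (-((s : ℂ) * w)) * k s (x - s)‖ ^ 2)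
      ≤ C / (2 * (w.re - a)) := by
  set b : ℝ := w.re - a with hbdef
  have hb : 0 < b := sub_pos.mpr hw
  set h : ℝ → ℂ := fun x => ∫ s in Set.Ioo (0 : ℝ) x, Complex.exp (-((s : ℂ) * w)) * k s (x - s)
    with hh
  -- measurability of the kernel with exponential weight
  have hker : Measurable fun p : ℝ × ℝ => Complex.exp (-((p.1 : ℂ) * w)) * k p.1 p.2 :=
    (Complex.continuous_exp.measurable.comp
      (((Complex.measurable_ofReal.comp measurable_fst).mul measurable_const).neg)).mul hk
  -- the squared weighted kernel, as an ℝ≥0∞-valued function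
  set f : ℝ → ℝ → ℝ≥0∞ := fun s u => (‖(Real.exp (-(a * s)) : ℂ) * k s u‖₊ : ℝ≥0∞) ^ 2 with hf
  have hf_meas : Measurable fun p : ℝ × ℝ => f p.1 p.2 :=
    (((Complex.measurable_ofReal.comp
      ((Real.continuous_exp.measurable).comp
        ((measurable_const.mul measurable_fst).neg))).mul hk).nnnorm.coe_nnreal_ennreal).pow_const 2
  set S : Set (ℝ × ℝ) := {q : ℝ × ℝ | 0 < q.2 ∧ q.2 < q.1} with hS
  have hS_meas : MeasurableSet S :=
    (measurableSet_lt measurable_const measurable_snd).inter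
      (measurableSet_lt measurable_snd measurable_fst)
  set F : ℝ × ℝ → ℝ≥0∞ := S.indicator (fun q => f q.2 (q.1 - q.2)) with hF
  have hF_meas : Measurable F :=
    (hf_meas.comp (measurable_snd.prodMk (measurable_fst.sub measurable_snd))).indicator hS_meas
  set G : ℝ → ℝ≥0∞ := fun x => ∫⁻ s, F (x, s) with hG
  have hG_meas : Measurable G := hF_meas.lintegral_prod_right'
  have hGx : ∀ x : ℝ, G x = ∫⁻ s in Set.Ioo 0 x, f s (x - s) := by
    intro x
    rw [hG, ← lintegral_indicator measurableSet_Ioo]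
    refine lintegral_congr fun s => ?_
    simp only [hF, hS, Set.indicator_apply, Set.mem_Ioo, Set.mem_setOf_eq]
  -- Tonelli : total mass of G is C
  have hT : ∫⁻ x in Set.Ioi (0:ℝ), G x = ENNReal.ofReal C := by
    have h1 : ∫⁻ x in Set.Ioi (0:ℝ), G x = ∫⁻ x, G x := by
      rw [← lintegral_indicator measurableSet_Ioi]
      congr 1
      ext x
      by_cases hx : x ∈ Set.Ioi (0:ℝ)
      · rw [Set.indicator_of_mem hx]
      · rw [Set.indicator_of_notMem hx]
        have hx' : x ≤ 0 := le_of_not_gt hx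
        have : ∀ s : ℝ, F (x, s) = 0 := by
          intro s
          apply Set.indicator_of_notMem
          rintro ⟨h1', h2'⟩
          exact absurd (h1'.trans h2') (not_lt.mpr hx')
        simp [hG, this]
    have h2 : ∫⁻ x, ∫⁻ s, F (x, s) = ∫⁻ s, ∫⁻ x, F (x, s) :=
      lintegral_lintegral_swap hF_meas.aemeasurable
    have h3 : ∀ s : ℝ, ∫⁻ x, F (x, s)
        = Set.indicator (Set.Ioi 0) (fun s => ∫⁻ u in Set.Ioi (0:ℝ), f s u) s := by
      intro s
      by_cases hs : 0 < s
      · rw [Set.indicator_of_mem (show s ∈ Set.Ioi (0:ℝ) from hs)]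
        have heq : (fun x => F (x, s)) = (Set.Ioi s).indicator (fun x => f s (x - s)) := by
          ext x
          simp only [hF, hS, Set.indicator_apply, Set.mem_Ioi, Set.mem_setOf_eq, hs, true_and]
        rw [heq, lintegral_indicator measurableSet_Ioi, aux_shift]
      · rw [Set.indicator_of_notMem (show s ∉ Set.Ioi (0:ℝ) from hs)]
        have hz : ∀ x : ℝ, F (x, s) = 0 := fun x =>
          Set.indicator_of_notMem (fun hc => hs hc.1) _
        simp [hz]
    rw [h1, hG, h2]
    simp_rw [h3]
    rw [lintegral_indicator measurableSet_Ioi]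
    exact hC
  -- pointwise norm factorization
  have hnorm : ∀ s u : ℝ, (‖Complex.exp (-((s:ℂ) * w)) * k s u‖₊ : ℝ≥0∞)
      = ENNReal.ofReal (Real.exp (-(b * s)))
        * (‖(Real.exp (-(a * s)) : ℂ) * k s u‖₊ : ℝ≥0∞) := by
    intro s u
    rw [← enorm_eq_nnnorm, ← enorm_eq_nnnorm, ← ofReal_norm, ← ofReal_norm,
      ← ENNReal.ofReal_mul (Real.exp_pos _).le]
    congr 1
    rw [norm_mul, norm_mul, Complex.norm_exp]
    have h1 : (-((s:ℂ) * w)).re = -(s * w.re) := by simp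
    rw [h1]
    have h2 : ‖((Real.exp (-(a * s)) : ℝ) : ℂ)‖ = Real.exp (-(a * s)) := by
      rw [Complex.norm_real, Real.norm_eq_abs, abs_of_pos (Real.exp_pos _)]
    rw [h2, ← mul_assoc, ← Real.exp_add]
    congr 2
    rw [hbdef]; ring
  -- the exponential integral bound
  have hE : ∀ x : ℝ, ∫⁻ s in Set.Ioo (0:ℝ) x, (ENNReal.ofReal (Real.exp (-(b * s)))) ^ (2:ℝ)
      ≤ ENNReal.ofReal (1 / (2 * b)) := by
    intro x
    have hpt : ∀ s : ℝ, (ENNReal.ofReal (Real.exp (-(b * s)))) ^ (2:ℝ)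
        = ENNReal.ofReal (Real.exp (-(2 * b) * s)) := by
      intro s
      rw [ENNReal.ofReal_rpow_of_pos (Real.exp_pos _)]
      congr 1
      rw [← Real.exp_mul]
      congr 1
      ring
    calc ∫⁻ s in Set.Ioo (0:ℝ) x, (ENNReal.ofReal (Real.exp (-(b * s)))) ^ (2:ℝ)
        = ∫⁻ s in Set.Ioo (0:ℝ) x, ENNReal.ofReal (Real.exp (-(2 * b) * s)) := by
          exact lintegral_congr fun s => hpt s
      _ ≤ ∫⁻ s in Set.Ioi (0:ℝ), ENNReal.ofReal (Real.exp (-(2 * b) * s)) :=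
          lintegral_mono_set Set.Ioo_subset_Ioi_self
      _ = ENNReal.ofReal (∫ s in Set.Ioi (0:ℝ), Real.exp (-(2 * b) * s)) := by
          rw [ofReal_integral_eq_lintegral_ofReal
            (exp_neg_integrableOn_Ioi 0 (by positivity : (0:ℝ) < 2 * b))
            (Filter.Eventually.of_forall fun s => (Real.exp_pos _).le)]
      _ = ENNReal.ofReal (1 / (2 * b)) := by
          congr 1
          have hval := Real.integral_rpow_mul_exp_neg_mul_Ioi (one_pos)
            (by positivity : (0:ℝ) < 2 * b)
          simp only [sub_self, Real.rpow_zero, one_mul, Real.rpow_one, Real.Gamma_one,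
            mul_one] at hval
          rw [← hval]
          refine setIntegral_congr_fun measurableSet_Ioi fun s _ => ?_
          ring_nf
  -- Cauchy-Schwarz: pointwise bound for the L¹ norm of the integrand
  have hconj : Real.HolderConjugate 2 2 := Real.holderConjugate_iff.mpr ⟨one_lt_two, by norm_num⟩
  have hrpow2 : ∀ z : ℝ≥0∞, z ^ (2:ℝ) = z ^ (2:ℕ) := fun z => by
    rw [← ENNReal.rpow_natCast z 2]; norm_num
  set N : ℝ → ℝ≥0∞ :=
    fun x => ∫⁻ s in Set.Ioo (0:ℝ) x, (‖Complex.exp (-((s:ℂ) * w)) * k s (x - s)‖₊ : ℝ≥0∞)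
    with hN
  have hNx : ∀ x : ℝ, N x ≤ ENNReal.ofReal (1 / (2 * b)) ^ (1/2 : ℝ) * (G x) ^ (1/2 : ℝ) := by
    intro x
    have hmg : Measurable fun s : ℝ => (‖(Real.exp (-(a * s)) : ℂ) * k s (x - s)‖₊ : ℝ≥0∞) :=
      ((Complex.measurable_ofReal.comp (Real.continuous_exp.measurable.comp
          ((measurable_const.mul measurable_id).neg))).mul
        (hk.comp (measurable_id.prodMk (measurable_const.sub measurable_id)))).nnnorm.coe_nnreal_ennreal
    have hme : Measurable fun s : ℝ => ENNReal.ofReal (Real.exp (-(b * s))) :=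
      ENNReal.measurable_ofReal.comp (Real.continuous_exp.measurable.comp
        ((measurable_const.mul measurable_id).neg))
    have hH := ENNReal.lintegral_mul_le_Lp_mul_Lq (volume.restrict (Set.Ioo (0:ℝ) x)) hconj
      hme.aemeasurable hmg.aemeasurable
    simp only [Pi.mul_apply] at hH
    have hNeq : N x = ∫⁻ s in Set.Ioo (0:ℝ) x,
        ENNReal.ofReal (Real.exp (-(b * s))) * (‖(Real.exp (-(a * s)) : ℂ) * k s (x - s)‖₊ : ℝ≥0∞) := by
      rw [hN]
      exact lintegral_congr fun s => hnorm s (x - s)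
    rw [hNeq]
    refine hH.trans (mul_le_mul' (ENNReal.rpow_le_rpow (hE x) (by norm_num)) (le_of_eq ?_))
    congr 1
    calc ∫⁻ s in Set.Ioo (0:ℝ) x, (‖(Real.exp (-(a * s)) : ℂ) * k s (x - s)‖₊ : ℝ≥0∞) ^ (2:ℝ)
        = ∫⁻ s in Set.Ioo (0:ℝ) x, f s (x - s) := by
          exact lintegral_congr fun s => by rw [hrpow2]
      _ = G x := (hGx x).symm
  -- pointwise squared bound
  have hsq : ∀ x : ℝ, (‖h x‖₊ : ℝ≥0∞) ^ 2 ≤ ENNReal.ofReal (1 / (2 * b)) * G x := by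
    intro x
    have h1 : (‖h x‖₊ : ℝ≥0∞) ≤ N x := enorm_integral_le_lintegral_enorm _
    have hsq2 : ∀ y : ℝ≥0∞, (y ^ (1/2 : ℝ)) ^ 2 = y := fun y => by
      rw [← ENNReal.rpow_natCast (y ^ (1/2:ℝ)) 2, ← ENNReal.rpow_mul]
      norm_num
    calc (‖h x‖₊ : ℝ≥0∞) ^ 2 ≤ (N x) ^ 2 := pow_le_pow_left' h1 2
      _ ≤ (ENNReal.ofReal (1 / (2 * b)) ^ (1/2 : ℝ) * (G x) ^ (1/2 : ℝ)) ^ 2 :=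
          pow_le_pow_left' (hNx x) 2
      _ = ENNReal.ofReal (1 / (2 * b)) * G x := by rw [mul_pow, hsq2, hsq2]
  -- the main lintegral bound
  have hI : ∫⁻ x in Set.Ioi (0:ℝ), (‖h x‖₊ : ℝ≥0∞) ^ 2
      ≤ ENNReal.ofReal (1 / (2 * b)) * ENNReal.ofReal C := by
    calc ∫⁻ x in Set.Ioi (0:ℝ), (‖h x‖₊ : ℝ≥0∞) ^ 2
        ≤ ∫⁻ x in Set.Ioi (0:ℝ), ENNReal.ofReal (1 / (2 * b)) * G x :=
          lintegral_mono fun x => hsq x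
      _ = ENNReal.ofReal (1 / (2 * b)) * ∫⁻ x in Set.Ioi (0:ℝ), G x :=
          lintegral_const_mul' _ _ ENNReal.ofReal_ne_top
      _ = ENNReal.ofReal (1 / (2 * b)) * ENNReal.ofReal C := by rw [hT]
  -- a.e. finiteness of G
  have haeG : ∀ᵐ x ∂volume.restrict (Set.Ioi (0:ℝ)), G x < ⊤ :=
    ae_lt_top hG_meas (by rw [hT]; exact ENNReal.ofReal_ne_top)
  -- strong measurability of h
  set Fc : ℝ × ℝ → ℂ :=
    S.indicator (fun q => Complex.exp (-((q.2:ℂ) * w)) * k q.2 (q.1 - q.2)) with hFc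
  have hFc_meas : Measurable Fc :=
    (hker.comp (measurable_snd.prodMk (measurable_fst.sub measurable_snd))).indicator hS_meas
  have hrepr : h = fun x => ∫ s, Fc (x, s) := by
    funext x
    show (∫ s in Set.Ioo (0:ℝ) x, Complex.exp (-((s:ℂ) * w)) * k s (x - s)) = _
    rw [← integral_indicator measurableSet_Ioo]
    refine integral_congr_ae (Filter.Eventually.of_forall fun s => ?_)
    simp only [hFc, hS, Set.indicator_apply, Set.mem_Ioo, Set.mem_setOf_eq]
  have hmeas_h : AEStronglyMeasurable h (volume.restrict (Set.Ioi (0:ℝ))) := by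
    rw [hrepr]
    exact (hFc_meas.stronglyMeasurable.integral_prod_right').aestronglyMeasurable
  refine ⟨?_, ?_, ?_⟩
  · -- part 1 : a.e. integrability
    refine haeG.mono fun x hx => ?_
    constructor
    · exact (hker.comp (measurable_id.prodMk
        (measurable_const.sub measurable_id))).aestronglyMeasurable
    · show (∫⁻ s, (‖Complex.exp (-((s:ℂ) * w)) * k s (x - s)‖₊ : ℝ≥0∞)
          ∂(volume.restrict (Set.Ioo (0:ℝ) x))) < ⊤
      refine lt_of_le_of_lt (hNx x) (ENNReal.mul_lt_top ?_ ?_)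
      · exact ENNReal.rpow_lt_top_of_nonneg (by norm_num) ENNReal.ofReal_ne_top
      · exact ENNReal.rpow_lt_top_of_nonneg (by norm_num) hx.ne
  · -- part 2 : Memℒp
    refine ⟨hmeas_h, ?_⟩
    rw [eLpNorm_eq_lintegral_rpow_enorm_toReal (two_ne_zero) ENNReal.ofNat_ne_top]
    refine ENNReal.rpow_lt_top_of_nonneg (by positivity) ?_
    have : ∫⁻ x in Set.Ioi (0:ℝ), (‖h x‖₊ : ℝ≥0∞) ^ ((2:ℝ≥0∞).toReal)
        = ∫⁻ x in Set.Ioi (0:ℝ), (‖h x‖₊ : ℝ≥0∞) ^ 2 := by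
      refine lintegral_congr fun x => ?_
      rw [ENNReal.toReal_ofNat, hrpow2]
    simp only [enorm_eq_nnnorm]; rw [this]
    exact (hI.trans_lt (ENNReal.mul_lt_top ENNReal.ofReal_lt_top ENNReal.ofReal_lt_top)).ne
  · -- part 3 : the norm bound
    have hnonneg : 0 ≤ᵐ[volume.restrict (Set.Ioi (0:ℝ))] fun x => ‖h x‖ ^ 2 :=
      Filter.Eventually.of_forall fun x => by positivity
    have hmeas_sq : AEStronglyMeasurable (fun x => ‖h x‖ ^ 2) (volume.restrict (Set.Ioi (0:ℝ))) :=
      (hmeas_h.norm.pow 2)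
    rw [integral_eq_lintegral_of_nonneg_ae hnonneg hmeas_sq]
    have heq2 : ∫⁻ x in Set.Ioi (0:ℝ), ENNReal.ofReal (‖h x‖ ^ 2)
        = ∫⁻ x in Set.Ioi (0:ℝ), (‖h x‖₊ : ℝ≥0∞) ^ 2 := by
      refine lintegral_congr fun x => ?_
      rw [ENNReal.ofReal_pow (norm_nonneg _), ofReal_norm, enorm_eq_nnnorm]
    rw [heq2]
    have hCb : ENNReal.ofReal (1 / (2 * b)) * ENNReal.ofReal C = ENNReal.ofReal (C / (2 * b)) := by
      rw [← ENNReal.ofReal_mul (by positivity)]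
      congr 1
      field_simp
    calc (∫⁻ x in Set.Ioi (0:ℝ), (‖h x‖₊ : ℝ≥0∞) ^ 2).toReal
        ≤ (ENNReal.ofReal (C / (2 * b))).toReal := by
          refine ENNReal.toReal_mono ENNReal.ofReal_ne_top ?_
          rw [← hCb]; exact hI
      _ = C / (2 * b) := ENNReal.toReal_ofReal (by positivity)
end

section
/- Let f : (0,∞) → (0,∞) be a continuous, strictly decreasing function with lim_{x→0⁺} f(x) = ∞, lim_{x→∞} f(x) = 0, and ∫₀¹ f(x) dx < ∞. Then for every integer n ≥ 0, Σ_{k=n+1}^∞ f⁻¹(k) ≤ ∫₀^{f⁻¹(n+1)} f(s) ds − n · f⁻¹(n+1); in particular the series Σ_{k=1}^∞ f⁻¹(k) converges. -/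
open MeasureTheory Filter
open scoped Topology

/-- Let `f : (0,∞) → (0,∞)` be continuous, strictly decreasing, with `f → ∞` at `0⁺`,
`f → 0` at `∞`, and `∫₀¹ f < ∞`, and let `g = f⁻¹` be its inverse. Then for every `n ≥ 0`,
`Σ_{k=n+1}^∞ f⁻¹(k) ≤ ∫₀^{f⁻¹(n+1)} f(s) ds - n f⁻¹(n+1)` (the series being summable);
in particular `Σ_{k=1}^∞ f⁻¹(k)` converges. -/
theorem stmt_19 (f g : ℝ → ℝ)
    (hfpos : ∀ x : ℝ, 0 < x → 0 < f x)
    (hfcont : ContinuousOn f (Set.Ioi 0))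
    (hfanti : StrictAntiOn f (Set.Ioi 0))
    (hf0 : Tendsto f (𝓝[>] (0 : ℝ)) atTop)
    (hfinf : Tendsto f atTop (𝓝 0))
    (hfint : IntegrableOn f (Set.Ioo 0 1) volume)
    (hginv : ∀ y : ℝ, 0 < y → 0 < g y ∧ f (g y) = y) :
    (∀ n : ℕ,
      (Summable fun k : ℕ => g ((k : ℝ) + (n : ℝ) + 1)) ∧
      (∑' k : ℕ, g ((k : ℝ) + (n : ℝ) + 1))
        ≤ (∫ s in Set.Ioo (0 : ℝ) (g ((n : ℝ) + 1)), f s) - (n : ℝ) * g ((n : ℝ) + 1)) ∧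
    Summable fun k : ℕ => g ((k : ℝ) + 1) := by
  -- g is antitone on positives
  have hganti : ∀ y z : ℝ, 0 < y → y ≤ z → g z ≤ g y := by
    intro y z hy hyz
    by_contra h
    push_neg at h
    have h1 := hfanti (Set.mem_Ioi.2 (hginv y hy).1)
      (Set.mem_Ioi.2 (hginv z (lt_of_lt_of_le hy hyz)).1) h
    rw [(hginv y hy).2, (hginv z (lt_of_lt_of_le hy hyz)).2] at h1
    linarith
  -- f x ≥ y for x ≤ g y
  have hfge : ∀ y x : ℝ, 0 < y → 0 < x → x ≤ g y → y ≤ f x := by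
    intro y x hy hx hxg
    rcases eq_or_lt_of_le hxg with h | h
    · rw [h, (hginv y hy).2]
    · have h2 := hfanti (Set.mem_Ioi.2 hx) (Set.mem_Ioi.2 (hginv y hy).1) h
      rw [(hginv y hy).2] at h2; linarith
  -- integrability on Ioc 0 a
  have hint : ∀ a : ℝ, 0 < a → IntegrableOn f (Set.Ioc 0 a) volume := by
    intro a ha
    have hsub : Set.Ioc 0 a ⊆ Set.Ioo 0 1 ∪ Set.Icc (min a 1) a := by
      intro x hx
      rcases lt_or_ge x (min a 1) with h | h
      · exact Or.inl ⟨hx.1, lt_of_lt_of_le h (min_le_right _ _)⟩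
      · exact Or.inr ⟨h, hx.2⟩
    refine (IntegrableOn.union hfint ?_).mono_set hsub
    refine ContinuousOn.integrableOn_Icc (hfcont.mono ?_)
    intro x hx; exact lt_of_lt_of_le (lt_min ha one_pos) hx.1
  set G : ℕ → ℝ := fun m => g ((m : ℝ) + 1) with hG
  have hGpos : ∀ m : ℕ, 0 < G m := fun m => (hginv _ (by positivity)).1
  have hGanti : ∀ m : ℕ, G (m + 1) ≤ G m := by
    intro m
    have : ((m : ℝ) + 1) ≤ ((m + 1 : ℕ) : ℝ) + 1 := by push_cast; linarith
    exact hganti _ _ (by positivity) this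
  -- interval integrability
  have hii : ∀ a b : ℝ, 0 ≤ a → a ≤ b → IntervalIntegrable f volume a b := by
    intro a b ha hab
    rcases eq_or_lt_of_le (ha.trans hab) with h | h
    · have hb : b = 0 := h.symm
      have ha' : a = 0 := le_antisymm (hab.trans hb.le) ha
      rw [ha', hb]
    · rw [intervalIntegrable_iff_integrableOn_Ioc_of_le hab]
      exact (hint b h).mono_set (Set.Ioc_subset_Ioc_left ha)
  set J : ℕ → ℝ := fun m => ∫ x in (0:ℝ)..(G m), f x with hJ
  -- lower bound on a set integral by a constant
  have hconst : ∀ (a b c : ℝ), 0 ≤ a → a ≤ b → 0 < a ∨ 0 < b → (∀ x ∈ Set.Ioc a b, c ≤ f x) →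
      c * (b - a) ≤ ∫ x in a..b, f x := by
    intro a b c ha hab hpos hc
    rw [intervalIntegral.integral_of_le hab]
    have hmeas : (volume (Set.Ioc a b)).toReal = b - a := by
      rw [Real.volume_Ioc, ENNReal.toReal_ofReal (by linarith)]
    calc c * (b - a) = ∫ _ in Set.Ioc a b, c := by rw [setIntegral_const, measureReal_def, hmeas, smul_eq_mul]; ring
      _ ≤ ∫ x in Set.Ioc a b, f x := by
          refine setIntegral_mono_on (integrableOn_const ?_) ?_ measurableSet_Ioc hc
          · rw [Real.volume_Ioc]; exact ENNReal.ofReal_ne_top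
          · rcases hpos with h | h
            · exact ((hint b (h.trans_le hab)).mono_set (Set.Ioc_subset_Ioc_left ha))
            · exact ((hint b h).mono_set (Set.Ioc_subset_Ioc_left ha))
  -- strip inequality
  have hstrip : ∀ m : ℕ, ((m : ℝ) + 1) * (G m - G (m + 1)) ≤ ∫ x in (G (m+1))..(G m), f x := by
    intro m
    refine hconst _ _ _ (hGpos (m+1)).le (hGanti m) (Or.inl (hGpos (m+1))) ?_
    intro x hx
    exact hfge _ x (by positivity) ((hGpos (m+1)).trans hx.1) hx.2
  -- lower bound for J
  have hJlb : ∀ m : ℕ, ((m : ℝ) + 1) * G m ≤ J m := by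
    intro m
    have := hconst 0 (G m) ((m:ℝ)+1) le_rfl (hGpos m).le (Or.inr (hGpos m))
      (fun x hx => hfge _ x (by positivity) hx.1 hx.2)
    simpa using this
  -- splitting
  have hsplit : ∀ m : ℕ, J (m+1) + (∫ x in (G (m+1))..(G m), f x) = J m := by
    intro m
    exact intervalIntegral.integral_add_adjacent_intervals
      (hii 0 (G (m+1)) le_rfl (hGpos (m+1)).le) (hii _ _ (hGpos (m+1)).le (hGanti m))
  -- main induction
  have hC : ∀ (n N : ℕ),
      (∑ k ∈ Finset.range N, G (k + n)) + (n : ℝ) * G n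
        + (J (n + N) - ((n + N : ℕ) : ℝ) * G (n + N)) ≤ J n := by
    intro n N
    induction N with
    | zero => simp
    | succ N ih =>
      have hje : n + (N + 1) = (n + N) + 1 := by omega
      have hcm : G (N + n) = G (n + N) := by rw [Nat.add_comm]
      rw [Finset.sum_range_succ, hje, hcm]
      have hm := hstrip (n + N)
      have hs := hsplit (n + N)
      have hb : ((n + N + 1 : ℕ) : ℝ) = ((n + N : ℕ) : ℝ) + 1 := by push_cast; ring
      rw [hb]
      ring_nf
      ring_nf at ih hm hs
      nlinarith [ih, hm, hs]
  have hbd : ∀ (n N : ℕ), (∑ k ∈ Finset.range N, G (k + n)) ≤ J n - (n : ℝ) * G n := by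
    intro n N
    have h1 := hC n N
    have h2 := hJlb (n + N)
    nlinarith [hGpos (n + N)]
  have hfun : ∀ n : ℕ, (fun k : ℕ => g ((k : ℝ) + (n : ℝ) + 1)) = fun k : ℕ => G (k + n) := by
    intro n; funext k; simp only [hG]; norm_num [add_comm, add_assoc, add_left_comm]
  have hIoo : ∀ n : ℕ, (∫ s in Set.Ioo (0 : ℝ) (g ((n : ℝ) + 1)), f s) = J n := by
    intro n
    show _ = ∫ x in (0:ℝ)..(G n), f x
    rw [intervalIntegral.integral_of_le (hGpos n).le, integral_Ioc_eq_integral_Ioo]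
  have hmain : ∀ n : ℕ,
      (Summable fun k : ℕ => g ((k : ℝ) + (n : ℝ) + 1)) ∧
      (∑' k : ℕ, g ((k : ℝ) + (n : ℝ) + 1))
        ≤ (∫ s in Set.Ioo (0 : ℝ) (g ((n : ℝ) + 1)), f s) - (n : ℝ) * g ((n : ℝ) + 1) := by
    intro n
    rw [hfun n, hIoo n]
    have hnn : ∀ k : ℕ, 0 ≤ G (k + n) := fun k => (hGpos _).le
    have hsum := summable_of_sum_range_le hnn (hbd n)
    exact ⟨hsum, Summable.tsum_le_of_sum_range_le hsum (hbd n)⟩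
  refine ⟨hmain, ?_⟩
  have := (hmain 0).1
  simpa using this
end
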